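/- arXiv:1908.05690 — 5 statements merged into one kernel-verified Lean document; each statement's English description precedes it below -/
import Mathlib

section
/- Let M[G;I,Λ;A] be a matrix semigroup that is normalised with respect to the idempotent e = (i₀,1,λ₀), and let Γ be the subgroup of G generated by the entries a_{λi} of the sandwich matrix A. Then the subsemigroup of M[G;I,Λ;A] generated by its idempotents is exactly I × Γ × Λ, i.e. it equals the matrix semigroup M[Γ;I,Λ;A]. -/
/-- Multiplication of the Rees matrix semigroup `M[G; I, Λ; A]` on the set `I × G × Λ`:
`(i,g,λ)(j,h,μ) = (i, g a_{λj} h, μ)`. -/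
def reesMul {G I Λ : Type*} [Group G] (A : Λ → I → G) (p q : I × G × Λ) : I × G × Λ :=
  (p.1, p.2.1 * A p.2.2 q.1 * q.2.1, q.2.2)

/-- Membership in the subsemigroup generated by a set `s`, for a binary operation `mul`. -/
inductive SemigroupClosure {α : Type*} (mul : α → α → α) (s : Set α) : α → Prop
  | base {a : α} : a ∈ s → SemigroupClosure mul s a
  | mul {a b : α} : SemigroupClosure mul s a → SemigroupClosure mul s b →
      SemigroupClosure mul s (mul a b)

/-- If the Rees matrix semigroup `M[G;I,Λ;A]` is normalised with respect to the idempotent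
`e = (i₀,1,l₀)` and `Γ` is the subgroup of `G` generated by the entries of the sandwich
matrix `A`, then the subsemigroup generated by the idempotents of `M[G;I,Λ;A]` is exactly
`I × Γ × Λ = M[Γ;I,Λ;A]`. -/
theorem stmt_0 {G I Λ : Type*} [Group G] (A : Λ → I → G) (i₀ : I) (l₀ : Λ)
    (hrow : ∀ i : I, A l₀ i = 1) (hcol : ∀ l : Λ, A l i₀ = 1) :
    ∀ p : I × G × Λ,
      SemigroupClosure (reesMul A) {q : I × G × Λ | reesMul A q q = q} p ↔
        p.2.1 ∈ Subgroup.closure (Set.range fun li : Λ × I => A li.1 li.2) := by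
  set S : Set G := Set.range fun li : Λ × I => A li.1 li.2 with hS
  set E : Set (I × G × Λ) := {q : I × G × Λ | reesMul A q q = q} with hE
  have hmemS : ∀ (l : Λ) (i : I), A l i ∈ S := fun l i => ⟨(l, i), rfl⟩
  -- helper closure facts
  have hone : ∀ (i : I) (l : Λ), SemigroupClosure (reesMul A) E (i, (1 : G), l) := by
    intro i l
    have h1 : ((i, (1 : G), l₀) : I × G × Λ) ∈ E := by
      simp [hE, reesMul, hrow]
    have h2 : ((i₀, (1 : G), l) : I × G × Λ) ∈ E := by
      simp [hE, reesMul, hcol]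
    have := SemigroupClosure.mul (mul := reesMul A) (SemigroupClosure.base h1)
      (SemigroupClosure.base h2)
    simpa [reesMul, hrow] using this
  have hent : ∀ (μ : Λ) (j : I) (i : I) (l : Λ),
      SemigroupClosure (reesMul A) E (i, A μ j, l) := by
    intro μ j i l
    have := SemigroupClosure.mul (hone i μ) (hone j l)
    simpa [reesMul] using this
  have hinvent : ∀ (μ : Λ) (j : I) (i : I) (l : Λ),
      SemigroupClosure (reesMul A) E (i, (A μ j)⁻¹, l) := by
    intro μ j i l
    have hmid : ((j, (A μ j)⁻¹, μ) : I × G × Λ) ∈ E := by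
      simp [hE, reesMul]
    have h1 := SemigroupClosure.mul (hone i l₀) (SemigroupClosure.base hmid)
    have h2 := SemigroupClosure.mul h1 (hone i₀ l)
    simpa [reesMul, hrow, hcol] using h2
  have hmul : ∀ (i : I) (l : Λ) (g h : G),
      SemigroupClosure (reesMul A) E (i, g, l₀) →
      SemigroupClosure (reesMul A) E (i₀, h, l) →
      SemigroupClosure (reesMul A) E (i, g * h, l) := by
    intro i l g h hg hh
    have := SemigroupClosure.mul hg hh
    simpa [reesMul, hcol] using this
  intro p
  constructor
  · intro h
    induction h with
    | base h =>
        rename_i a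
        have h2 : a.2.1 * A a.2.2 a.1 * a.2.1 = a.2.1 := congrArg (fun x => x.2.1) h
        have h3 : A a.2.2 a.1 * a.2.1 = 1 := by
          have := congrArg (fun x => a.2.1⁻¹ * x) h2
          simpa [mul_assoc] using this
        have h4 : a.2.1 = (A a.2.2 a.1)⁻¹ := eq_inv_of_mul_eq_one_right h3
        rw [h4]
        exact inv_mem (Subgroup.subset_closure (hmemS _ _))
    | mul ha hb iha ihb =>
        exact mul_mem (mul_mem iha (Subgroup.subset_closure (hmemS _ _))) ihb
  · intro h
    obtain ⟨i, g, l⟩ := p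
    simp only at h
    -- transfer to submonoid closure of S ∪ S⁻¹
    have h' : g ∈ Submonoid.closure (S ∪ S⁻¹) := by
      have h'' : g ∈ (Subgroup.closure S).toSubmonoid := h
      rwa [Subgroup.closure_toSubmonoid] at h''
    have key : ∀ g ∈ Submonoid.closure (S ∪ S⁻¹),
        ∀ (i : I) (l : Λ), SemigroupClosure (reesMul A) E (i, g, l) := by
      intro g hg
      induction hg using Submonoid.closure_induction with
      | mem x hx =>
          intro i l
          rcases hx with hx | hx
          · obtain ⟨⟨μ, j⟩, rfl⟩ := hx
            exact hent μ j i l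
          · obtain ⟨⟨μ, j⟩, heq⟩ := Set.mem_inv.mp hx
            simp only [] at heq
            have hx' : x = (A μ j)⁻¹ := by rw [heq, inv_inv]
            rw [hx']
            exact hinvent μ j i l
      | one => exact hone
      | mul x y hx hy ihx ihy =>
          intro i l
          exact hmul i l x y (ihx i l₀) (ihy i₀ l)
    exact key g h' i l
end

section
/- Let (X,T,σ) be a minimal system with an equicontinuous factor π : (X,σ) → (Y,δ) such that E^fib(X) = Cov. Let e be a minimal idempotent of E(X) and s : Y → eE(X)e a lift of π̃ satisfying s(δᵗ(y)) = σᵗ s(y) and s(-y) = s(y)^{-1}. Define, for y ∈ Y, the map ŝ(y) : eX → eX by ŝ(y)(x) = s(π(x)+y) s(π(x))^{-1}(x). Then ŝ : Y → eE(X)e is a right inverse to π̃ which satisfies ŝ(δᵗ(y)) = σᵗ ŝ(y) and is a group homomorphism. -/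
variable {T X Y : Type*}

/-- The Ellis semigroup of the action `σ` of `T` on `X`: the closure of `{σᵗ : t ∈ T}` in
`X → X` with the topology of pointwise convergence. -/
def EllisA [TopologicalSpace X] (σ : T → X → X) : Set (X → X) :=
  closure (Set.range σ)

/-- The fibre-preserving part `E^fib(X)`: the kernel of `π̃ : E(X) → Y`, i.e. the elements
of the Ellis semigroup preserving each fibre of `π`. -/
def EfibA [TopologicalSpace X] (σ : T → X → X) (π : X → Y) : Set (X → X) :=
  { f | f ∈ EllisA σ ∧ ∀ x, π (f x) = π x }

/-- Two points are proximal if `inf_{t ∈ T} d(σᵗ x, σᵗ x') = 0`. -/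
def ProxA [MetricSpace X] (σ : T → X → X) (x x' : X) : Prop :=
  ∀ ε : ℝ, 0 < ε → ∃ t : T, dist (σ t x) (σ t x') < ε

/-- `y` is regular for `π` if the proximal relation restricted to `π⁻¹(y)` is trivial. -/
def RegA [MetricSpace X] (σ : T → X → X) (π : X → Y) (y : Y) : Prop :=
  ∀ x x' : X, π x = y → π x' = y → ProxA σ x x' → x = x'

/-- The subsemigroup `T` of `E^fib(X)` of elements acting as the identity on every regular
fibre. -/
def TrivA [MetricSpace X] (σ : T → X → X) (π : X → Y) : Set (X → X) :=
  { f | f ∈ EfibA σ π ∧ ∀ x, RegA σ π (π x) → f x = x }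

/-- The semigroup `Cov` of covariant families `f̃(y) ∈ E^fib_y(X)`, realised as the set of
self-maps `g` of `X` commuting with the action and agreeing on each fibre with some element
of `E^fib(X)`;  the element of `Cov` corresponding to `g` is `y ↦ g|_{π⁻¹(y)}`. -/
def CovA [MetricSpace X] (σ : T → X → X) (π : X → Y) : Set (X → X) :=
  { g | (∀ (t : T) (x : X), g (σ t x) = σ t (g x)) ∧
        ∀ y : Y, ∃ h ∈ EfibA σ π, ∀ x, π x = y → g x = h x }

section AuxLemmas

variable [AddCommGroup T] [MetricSpace X]

/-- Elements of the Ellis semigroup commute with the action (for abelian `T`). -/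
lemma ellisA_comm (σ : T → X → X) (hσc : ∀ t, Continuous (σ t))
    (hσadd : ∀ s t : T, σ (s + t) = σ s ∘ σ t)
    {f : X → X} (hf : f ∈ EllisA σ) (t : T) (x : X) :
    f (σ t x) = σ t (f x) := by
  have hcl : IsClosed {g : X → X | ∀ (t : T) (x : X), g (σ t x) = σ t (g x)} := by
    have : {g : X → X | ∀ (t : T) (x : X), g (σ t x) = σ t (g x)} =
        ⋂ (t : T) (x : X), {g : X → X | g (σ t x) = σ t (g x)} := by
      ext g; simp [Set.mem_iInter]
    rw [this]
    exact isClosed_iInter fun t => isClosed_iInter fun x =>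
      isClosed_eq (continuous_apply (σ t x)) ((hσc t).comp (continuous_apply x))
  have hsub : Set.range σ ⊆ {g : X → X | ∀ (t : T) (x : X), g (σ t x) = σ t (g x)} := by
    rintro _ ⟨u, rfl⟩ t x
    have h1 : σ u (σ t x) = σ (u + t) x := by rw [hσadd]; rfl
    have h2 : σ t (σ u x) = σ (t + u) x := by rw [hσadd]; rfl
    rw [h1, h2, add_comm]
  exact closure_minimal hsub hcl hf t x

/-- The Ellis semigroup is closed under composition. -/
lemma ellisA_comp (σ : T → X → X) (hσc : ∀ t, Continuous (σ t))
    (hσadd : ∀ s t : T, σ (s + t) = σ s ∘ σ t)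
    {f g : X → X} (hf : f ∈ EllisA σ) (hg : g ∈ EllisA σ) :
    f ∘ g ∈ EllisA σ := by
  have step1 : ∀ t : T, σ t ∘ g ∈ EllisA σ := by
    intro t
    have hc : Continuous (fun h : X → X => σ t ∘ h) :=
      continuous_pi fun x => (hσc t).comp (continuous_apply x)
    exact map_mem_closure hc (show g ∈ closure (Set.range σ) from hg)
      (by rintro _ ⟨u, rfl⟩; exact ⟨t + u, hσadd t u⟩)
  have hc2 : Continuous (fun h : X → X => h ∘ g) :=
    continuous_pi fun x => continuous_apply (g x)
  have hmem := map_mem_closure (f := fun h : X → X => h ∘ g) (x := f) (s := Set.range σ) (t := EllisA σ)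
    hc2 hf
    (by rintro _ ⟨t, rfl⟩; exact step1 t)
  rw [show closure (EllisA σ) = EllisA σ from closure_closure] at hmem
  exact hmem

end AuxLemmas

/-- Let `(X,T,σ)` be a minimal system with an equicontinuous factor `π : X → Y` such that
`E^fib(X) = Cov`.  Let `e` be a minimal idempotent of `E(X)` and `s : Y → eE(X)e` a lift of
`π̃` with `s(δᵗ y) = σᵗ s(y)` and `s(-y) = s(y)⁻¹`.  Define `ŝ(y)(x) = s(π(x)+y) s(π(x))⁻¹ (x)`
on `eX`.  Then `ŝ : Y → eE(X)e` is a right inverse of `π̃`, satisfies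
`ŝ(δᵗ y) = σᵗ ŝ(y)`, and is a group homomorphism. -/
theorem stmt_7 [AddCommGroup T] [MetricSpace X] [CompactSpace X]
    [AddCommGroup Y] [TopologicalSpace Y] [IsTopologicalAddGroup Y] [CompactSpace Y]
    (σ : T → X → X) (π : X → Y) (ι : T → Y)
    (hσc : ∀ t, Continuous (σ t)) (hσ0 : σ 0 = id)
    (hσadd : ∀ s t : T, σ (s + t) = σ s ∘ σ t)
    (hmin : ∀ x : X, Dense (Set.range fun t => σ t x))
    (hπc : Continuous π) (hπs : Function.Surjective π)
    (hπeq : ∀ (t : T) (x : X), π (σ t x) = ι t + π x)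
    (hιadd : ∀ s t : T, ι (s + t) = ι s + ι t) (hιd : DenseRange ι)
    (hCov : EfibA σ π = CovA σ π)
    (e : X → X) (he : e ∈ EllisA σ) (heid : e ∘ e = e)
    (hemin : ∀ p ∈ EllisA σ, p ∘ p = p → p ∘ e = p → e ∘ p = p → p = e)
    (s : Y → X → X)
    (hscorner : ∀ y : Y, ∃ f ∈ EllisA σ, s y = e ∘ f ∘ e)
    (hssec : ∀ (y : Y) (x : X), π (s y x) = y + π x)
    (hscov : ∀ (t : T) (y : Y), s (ι t + y) = σ t ∘ s y)
    (hsinv : ∀ y : Y, s (-y) ∘ s y = e ∧ s y ∘ s (-y) = e) :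
    ∀ sHat : Y → X → X,
      (∀ (y : Y) (x : X), sHat y x = s (π x + y) (s (-(π x)) x)) →
      -- ŝ(y) belongs to the group eE(X)e (as a map on eX)
      (∀ y : Y, ∃ f ∈ EllisA σ, ∀ x : X, sHat y (e x) = e (f (e (e x)))) ∧
      -- ŝ is a right inverse to π̃
      (∀ (y : Y) (x : X), π (sHat y (e x)) = y + π (e x)) ∧
      -- ŝ is equivariant: ŝ(δᵗ y) = σᵗ ŝ(y)
      (∀ (t : T) (y : Y) (x : X), sHat (ι t + y) (e x) = σ t (sHat y (e x))) ∧
      -- ŝ is a group homomorphism (multiplication in eE(X)e being composition)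
      (∀ (y₁ y₂ : Y) (x : X), sHat (y₁ + y₂) (e x) = sHat y₁ (sHat y₂ (e x))) := by
  intro sHat hdef
  -- basic facts
  have hee : ∀ x : X, e (e x) = e x := fun x => congrFun heid x
  have hsE : ∀ y : Y, s y ∈ EllisA σ := by
    intro y
    obtain ⟨f, hf, hsy⟩ := hscorner y
    rw [hsy]
    exact ellisA_comp σ hσc hσadd he (ellisA_comp σ hσc hσadd hf he)
  have hse : ∀ (y : Y) (x : X), e (s y x) = s y x := by
    intro y x
    obtain ⟨f, hf, hsy⟩ := hscorner y
    rw [hsy]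
    show e ((e ∘ f ∘ e) x) = (e ∘ f ∘ e) x
    show e (e (f (e x))) = e (f (e x))
    exact hee (f (e x))
  have hscomm : ∀ (y : Y) (t : T) (z : X), s y (σ t z) = σ t (s y z) :=
    fun y => ellisA_comm σ hσc hσadd (hsE y)
  have hι0 : ι 0 = (0 : Y) := by
    have h := hιadd 0 0
    rw [add_zero] at h
    exact (left_eq_add.mp h)
  have hιneg : ∀ t : T, ι (-t) = -ι t := by
    intro t
    have h : ι (-t) + ι t = 0 := by rw [← hιadd, neg_add_cancel, hι0]
    exact eq_neg_of_add_eq_zero_left h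
  -- π (sHat y z) = π z + y
  have hπsHat : ∀ (y : Y) (z : X), π (sHat y z) = π z + y := by
    intro y z
    rw [hdef, hssec, hssec]
    abel
  -- e fixes the values of sHat
  have hesHat : ∀ (y : Y) (z : X), e (sHat y z) = sHat y z := by
    intro y z
    rw [hdef]
    exact hse _ _
  -- sHat y commutes with the action
  have hgenσ : ∀ (y : Y) (t : T) (z : X), sHat y (σ t z) = σ t (sHat y z) := by
    intro y t z
    rw [hdef, hdef, hπeq]
    have h1 : -(ι t + π z) = ι (-t) + -(π z) := by rw [hιneg]; abel
    rw [h1, hscov]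
    have h2 : (σ (-t) ∘ s (-(π z))) (σ t z) = s (-(π z)) z := by
      show σ (-t) (s (-(π z)) (σ t z)) = s (-(π z)) z
      rw [hscomm (-(π z)) t z]
      have h3 : σ (-t) (σ t (s (-(π z)) z)) = σ (-t + t) (s (-(π z)) z) := by
        rw [hσadd]; rfl
      rw [h3, neg_add_cancel, hσ0]; rfl
    rw [h2]
    have h4 : ι t + π z + y = ι t + (π z + y) := by abel
    rw [h4, hscov]
    rfl
  -- equivariance, in general
  have hgen3 : ∀ (t : T) (y : Y) (z : X), sHat (ι t + y) z = σ t (sHat y z) := by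
    intro t y z
    rw [hdef, hdef]
    have h1 : π z + (ι t + y) = ι t + (π z + y) := by abel
    rw [h1, hscov]
    rfl
  -- homomorphism property, in general
  have hgen4 : ∀ (y₁ y₂ : Y) (z : X), sHat (y₁ + y₂) z = sHat y₁ (sHat y₂ z) := by
    intro y₁ y₂ z
    have hw : π (sHat y₂ z) = π z + y₂ := hπsHat y₂ z
    rw [hdef y₁ (sHat y₂ z), hw, hdef y₂ z, hdef (y₁ + y₂) z]
    have hinner : s (-(π z + y₂)) (s (π z + y₂) (s (-(π z)) z)) = s (-(π z)) z := by
      have h1 : (s (-(π z + y₂)) ∘ s (π z + y₂)) (s (-(π z)) z) = e (s (-(π z)) z) := by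
        rw [(hsinv (π z + y₂)).1]
      have h2 : (s (-(π z + y₂)) ∘ s (π z + y₂)) (s (-(π z)) z)
          = s (-(π z + y₂)) (s (π z + y₂) (s (-(π z)) z)) := rfl
      rw [h2, hse] at h1
      exact h1
    rw [hinner]
    congr 1
    abel
  refine ⟨?_, ?_, ?_, ?_⟩
  · -- membership in e E(X) e
    intro y
    obtain ⟨f', hf', hsy⟩ := hscorner y
    set g : X → X := fun x => s (-y) (sHat y x) with hg
    -- g belongs to Cov, hence to Efib, hence to the Ellis semigroup
    have hgCov : g ∈ CovA σ π := by
      constructor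
      · intro t x
        show s (-y) (sHat y (σ t x)) = σ t (s (-y) (sHat y x))
        rw [hgenσ, hscomm]
      · intro y'
        refine ⟨fun x => s (-y) (s (y' + y) (s (-y') x)), ⟨?_, ?_⟩, ?_⟩
        · exact ellisA_comp σ hσc hσadd (hsE (-y))
            (ellisA_comp σ hσc hσadd (hsE (y' + y)) (hsE (-y')))
        · intro x
          rw [hssec, hssec, hssec]
          abel
        · intro x hx
          show s (-y) (sHat y x) = s (-y) (s (y' + y) (s (-y') x))
          rw [hdef, hx]
    have hgE : g ∈ EllisA σ := by
      rw [← hCov] at hgCov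
      exact hgCov.1
    refine ⟨f' ∘ e ∘ g, ellisA_comp σ hσc hσadd hf'
      (ellisA_comp σ hσc hσadd he hgE), ?_⟩
    intro x
    have key : sHat y (e x) = s y (g (e x)) := by
      have h1 : s y (s (-y) (sHat y (e x))) = e (sHat y (e x)) := by
        have := congrFun (hsinv y).2 (sHat y (e x))
        exact this
      rw [hesHat] at h1
      exact h1.symm
    rw [key, hsy]
    show e (f' (e (g (e x)))) = e ((f' ∘ e ∘ g) (e (e x)))
    rw [hee]
    rfl
  · -- right inverse
    intro y x
    rw [hπsHat, add_comm]
  · -- equivariance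
    intro t y x
    exact hgen3 t y (e x)
  · -- homomorphism
    intro y₁ y₂ x
    exact hgen4 y₁ y₂ (e x)
end

section
/- Let θ be a primitive aperiodic bijective simplified substitution of length ℓ and π : X_θ → ℤ_ℓ the odometer factor map. Then the fibre π^{-1}(0) consists exactly of the fixed points of θ, and these are in one-to-one correspondence with the allowed two-letter words of θ. -/
variable {A : Type*}

/-- The bijections `(θⁿ)_i` in the expansion of the `n`-th power of the bijective
substitution `θ` of length `ℓ`:  `θⁿ(a) = (θⁿ)₀(a) ⋯ (θⁿ)_{ℓⁿ−1}(a)`. -/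
def expandPerm (θ : ℕ → Equiv.Perm A) (ℓ : ℕ) : ℕ → ℕ → Equiv.Perm A
  | 0, _ => 1
  | n + 1, k => θ (k % ℓ) * expandPerm θ ℓ n (k / ℓ)

/-- The substitution shift `X_θ`: the set of bi-infinite sequences all of whose finite
subwords occur in some `θᵏ(a)`. -/
def XSet (θ : ℕ → Equiv.Perm A) (ℓ : ℕ) : Set (ℤ → A) :=
  { x | ∀ (i : ℤ) (m : ℕ), ∃ (k : ℕ) (a : A) (j : ℕ), j + m ≤ ℓ ^ k ∧
      ∀ t : ℕ, t < m → x (i + (t : ℤ)) = expandPerm θ ℓ k (j + t) a }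

/-- `θ` is primitive: some power `θᵏ(a)` contains every letter, for every `a`. -/
def IsPrimitive (θ : ℕ → Equiv.Perm A) (ℓ : ℕ) : Prop :=
  ∃ k : ℕ, 0 < k ∧ ∀ a b : A, ∃ i : ℕ, i < ℓ ^ k ∧ expandPerm θ ℓ k i a = b

/-- `θ` is simplified: `θ₀ = θ_{ℓ-1} = id` and each word `θ(a)` contains all letters. -/
def IsSimplified (θ : ℕ → Equiv.Perm A) (ℓ : ℕ) : Prop :=
  θ 0 = 1 ∧ θ (ℓ - 1) = 1 ∧ ∀ a b : A, ∃ i : ℕ, i < ℓ ∧ θ i a = b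

/-- The left shift `σⁿ` on bi-infinite sequences. -/
def shiftSeq (n : ℤ) (x : ℤ → A) : ℤ → A := fun j => x (j + n)

/-- The substitution `θ` applied to a bi-infinite sequence (with the block of `x₀`
starting at index `0`). -/
def substSeq (θ : ℕ → Equiv.Perm A) (ℓ : ℕ) (x : ℤ → A) : ℤ → A :=
  fun m => θ ((m.emod (ℓ : ℤ)).toNat) (x (m.ediv (ℓ : ℤ)))

theorem shiftSeq_mem {θ : ℕ → Equiv.Perm A} {ℓ : ℕ} {x : ℤ → A} (n : ℤ)
    (hx : x ∈ XSet θ ℓ) : shiftSeq n x ∈ XSet θ ℓ := by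
  intro i m
  obtain ⟨k, a, j, h1, h2⟩ := hx (i + n) m
  refine ⟨k, a, j, h1, fun t ht => ?_⟩
  have h3 := h2 t ht
  show x (i + (t : ℤ) + n) = _
  rw [show i + (t : ℤ) + n = i + n + (t : ℤ) by ring]
  exact h3

/-- The shift, as a self-map of the substitution shift `X_θ`. -/
def shiftX (θ : ℕ → Equiv.Perm A) (ℓ : ℕ) (n : ℤ) (x : ↥(XSet θ ℓ)) : ↥(XSet θ ℓ) :=
  ⟨shiftSeq n x.1, shiftSeq_mem n x.2⟩

/-- The Ellis semigroup `E(X_θ)`: the closure of `{σⁿ : n ∈ ℤ}` in the space of self-maps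
of `X_θ` with the topology of pointwise convergence. -/
def EllisZ [TopologicalSpace A] (θ : ℕ → Equiv.Perm A) (ℓ : ℕ) :
    Set (↥(XSet θ ℓ) → ↥(XSet θ ℓ)) :=
  closure (Set.range fun n : ℤ => shiftX θ ℓ n)

section Aux

variable (θ : ℕ → Equiv.Perm A) (ℓ : ℕ)

lemma substSeq_apply (x : ℤ → A) (m : ℤ) :
    substSeq θ ℓ x m = θ ((m % (ℓ : ℤ)).toNat) (x (m / (ℓ : ℤ))) := rfl

lemma expandPerm_succ (n k : ℕ) :
    expandPerm θ ℓ (n + 1) k = θ (k % ℓ) * expandPerm θ ℓ n (k / ℓ) := rfl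

lemma expandPerm_split (hl : 0 < ℓ) (K : ℕ) :
    ∀ (n q s : ℕ), s < ℓ ^ n →
      expandPerm θ ℓ (n + K) (q * ℓ ^ n + s) = expandPerm θ ℓ n s * expandPerm θ ℓ K q := by
  intro n
  induction n with
  | zero =>
    intro q s hs
    have hs0 : s = 0 := by simpa using hs
    subst hs0
    simp [expandPerm]
  | succ n ih =>
    intro q s hs
    have h1 : n + 1 + K = (n + K) + 1 := by omega
    rw [h1, expandPerm_succ]
    have hk : q * ℓ ^ (n + 1) + s = s % ℓ + ℓ * (q * ℓ ^ n + s / ℓ) := by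
      have hdm : ℓ * (s / ℓ) + s % ℓ = s := Nat.div_add_mod s ℓ
      have hps : ℓ * (q * ℓ ^ n + s / ℓ) = q * ℓ ^ (n + 1) + ℓ * (s / ℓ) := by ring
      rw [hps]
      omega
    rw [hk, Nat.add_mul_mod_self_left, Nat.add_mul_div_left _ _ hl,
      Nat.mod_eq_of_lt (Nat.mod_lt s hl), Nat.div_eq_of_lt (Nat.mod_lt s hl), zero_add]
    have hsd : s / ℓ < ℓ ^ n := Nat.div_lt_of_lt_mul (by rw [← pow_succ']; exact hs)
    rw [ih q (s / ℓ) hsd, expandPerm_succ, mul_assoc]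

lemma expandPerm_zero_idx (h0 : θ 0 = 1) : ∀ n, expandPerm θ ℓ n 0 = 1 := by
  intro n
  induction n with
  | zero => rfl
  | succ n ih => rw [expandPerm_succ, Nat.zero_mod, Nat.zero_div, h0, ih, one_mul]

lemma expandPerm_stable (h0 : θ 0 = 1) (hl : 0 < ℓ) {n k : ℕ} (K : ℕ) (hk : k < ℓ ^ n) :
    expandPerm θ ℓ (n + K) k = expandPerm θ ℓ n k := by
  have h := expandPerm_split θ ℓ hl K n 0 k hk
  simpa [expandPerm_zero_idx θ ℓ h0] using h

lemma expandPerm_one (q : ℕ) : expandPerm θ ℓ 1 q = θ (q % ℓ) := by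
  rw [expandPerm_succ]
  simp [expandPerm]

lemma expandPerm_top (h0 : θ 0 = 1) (h1 : θ (ℓ - 1) = 1) (hl : 0 < ℓ) (n : ℕ) :
    expandPerm θ ℓ (n + 1) ((ℓ - 1) * ℓ ^ n) = 1 := by
  have h := expandPerm_split θ ℓ hl 1 n (ℓ - 1) 0 (pow_pos hl n)
  rw [add_zero] at h
  rw [h, expandPerm_zero_idx θ ℓ h0, expandPerm_one θ ℓ, Nat.mod_eq_of_lt (by omega), h1, one_mul]

lemma int_digit (hl : 0 < ℓ) (n : ℕ) (m : ℤ) :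
    m / ((ℓ : ℤ) ^ (n + 1)) = (m / (ℓ : ℤ)) / ((ℓ : ℤ) ^ n) ∧
    m % ((ℓ : ℤ) ^ (n + 1)) = (ℓ : ℤ) * ((m / (ℓ : ℤ)) % ((ℓ : ℤ) ^ n)) + m % (ℓ : ℤ) := by
  have hl' : (0 : ℤ) < (ℓ : ℤ) := by exact_mod_cast hl
  have hpn : (0 : ℤ) < (ℓ : ℤ) ^ n := pow_pos hl' n
  have hb : (0 : ℤ) < (ℓ : ℤ) ^ (n + 1) := pow_pos hl' _
  have e1 := Int.mul_ediv_add_emod m (ℓ : ℤ)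
  have e2 := Int.mul_ediv_add_emod (m / (ℓ : ℤ)) ((ℓ : ℤ) ^ n)
  have hr0 : 0 ≤ m % (ℓ : ℤ) := Int.emod_nonneg m (ne_of_gt hl')
  have hrl : m % (ℓ : ℤ) < (ℓ : ℤ) := Int.emod_lt_of_pos m hl'
  have hs0 : 0 ≤ (m / (ℓ : ℤ)) % ((ℓ : ℤ) ^ n) := Int.emod_nonneg _ (ne_of_gt hpn)
  have hsl : (m / (ℓ : ℤ)) % ((ℓ : ℤ) ^ n) < (ℓ : ℤ) ^ n := Int.emod_lt_of_pos _ hpn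
  have h := (Int.ediv_emod_unique (a := m) (b := (ℓ : ℤ) ^ (n + 1))
      (q := (m / (ℓ : ℤ)) / ((ℓ : ℤ) ^ n))
      (r := (ℓ : ℤ) * ((m / (ℓ : ℤ)) % ((ℓ : ℤ) ^ n)) + m % (ℓ : ℤ)) hb).mpr ?_
  · exact h
  · refine ⟨by linear_combination e1 + (ℓ : ℤ) * e2, by positivity, ?_⟩
    have h4 : (ℓ : ℤ) * ((m / (ℓ : ℤ)) % ((ℓ : ℤ) ^ n) + 1) ≤ (ℓ : ℤ) * (ℓ : ℤ) ^ n :=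
      mul_le_mul_of_nonneg_left (by omega) (le_of_lt hl')
    have hps : ((ℓ : ℤ)) ^ (n + 1) = (ℓ : ℤ) * (ℓ : ℤ) ^ n := by ring
    rw [hps]
    nlinarith

lemma toNat_digit (hl : 0 < ℓ) (n : ℕ) (m : ℤ) :
    (m % ((ℓ : ℤ) ^ (n + 1))).toNat % ℓ = (m % (ℓ : ℤ)).toNat ∧
    (m % ((ℓ : ℤ) ^ (n + 1))).toNat / ℓ = ((m / (ℓ : ℤ)) % ((ℓ : ℤ) ^ n)).toNat := by
  have hl' : (0 : ℤ) < (ℓ : ℤ) := by exact_mod_cast hl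
  have hpn : (0 : ℤ) < (ℓ : ℤ) ^ n := pow_pos hl' n
  obtain ⟨-, h2⟩ := int_digit ℓ hl n m
  have hr0 : 0 ≤ m % (ℓ : ℤ) := Int.emod_nonneg m (ne_of_gt hl')
  have hrl : m % (ℓ : ℤ) < (ℓ : ℤ) := Int.emod_lt_of_pos m hl'
  have hs0 : 0 ≤ (m / (ℓ : ℤ)) % ((ℓ : ℤ) ^ n) := Int.emod_nonneg _ (ne_of_gt hpn)
  have key : (m % ((ℓ : ℤ) ^ (n + 1))).toNat
      = (m % (ℓ : ℤ)).toNat + ℓ * ((m / (ℓ : ℤ)) % ((ℓ : ℤ) ^ n)).toNat := by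
    have hnn : 0 ≤ m % ((ℓ : ℤ) ^ (n + 1)) := Int.emod_nonneg m (by positivity)
    apply @Nat.cast_injective ℤ _ _
    push_cast [Int.toNat_of_nonneg hnn, Int.toNat_of_nonneg hr0, Int.toNat_of_nonneg hs0]
    linarith [h2]
  have hRlt : (m % (ℓ : ℤ)).toNat < ℓ := by omega
  constructor
  · rw [key, Nat.add_mul_mod_self_left, Nat.mod_eq_of_lt hRlt]
  · rw [key, Nat.add_mul_div_left _ _ hl, Nat.div_eq_of_lt hRlt, zero_add]

lemma expandPerm_emod_succ (hl : 0 < ℓ) (n : ℕ) (m : ℤ) :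
    expandPerm θ ℓ (n + 1) ((m % ((ℓ : ℤ) ^ (n + 1))).toNat)
      = θ ((m % (ℓ : ℤ)).toNat)
        * expandPerm θ ℓ n (((m / (ℓ : ℤ)) % ((ℓ : ℤ) ^ n)).toNat) := by
  obtain ⟨ha, hb⟩ := toNat_digit ℓ hl n m
  rw [expandPerm_succ, ha, hb]

lemma natAbs_ediv_le (hl : 0 < ℓ) (m : ℤ) : (m / (ℓ : ℤ)).natAbs ≤ m.natAbs := by
  have hl' : (0 : ℤ) < (ℓ : ℤ) := by exact_mod_cast hl
  have e := Int.mul_ediv_add_emod m (ℓ : ℤ)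
  have hr0 : 0 ≤ m % (ℓ : ℤ) := Int.emod_nonneg m (ne_of_gt hl')
  have hrl : m % (ℓ : ℤ) < (ℓ : ℤ) := Int.emod_lt_of_pos m hl'
  rcases le_or_gt 0 m with h | h
  · have h2 : 0 ≤ m / (ℓ : ℤ) := Int.ediv_nonneg h (le_of_lt hl')
    have h3 : m / (ℓ : ℤ) ≤ m := Int.ediv_le_self _ h
    omega
  · have h2 : m / (ℓ : ℤ) < 0 := Int.ediv_neg_of_neg_of_pos h hl'
    have h3 : m ≤ m / (ℓ : ℤ) := by
      nlinarith [mul_nonneg (by linarith : (0 : ℤ) ≤ (ℓ : ℤ) - 1)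
        (by linarith : (0 : ℤ) ≤ -1 - m / (ℓ : ℤ))]
    omega

lemma natAbs_ediv_lt (hl2 : 2 ≤ ℓ) {m : ℤ} (h0 : m ≠ 0) (h1 : m ≠ -1) :
    (m / (ℓ : ℤ)).natAbs < m.natAbs := by
  have hl' : (2 : ℤ) ≤ (ℓ : ℤ) := by exact_mod_cast hl2
  have e := Int.mul_ediv_add_emod m (ℓ : ℤ)
  have hr0 : 0 ≤ m % (ℓ : ℤ) := Int.emod_nonneg m (by linarith)
  have hrl : m % (ℓ : ℤ) < (ℓ : ℤ) := Int.emod_lt_of_pos m (by linarith)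
  rcases lt_or_ge 0 m with h | h
  · have h2 : 0 ≤ m / (ℓ : ℤ) := Int.ediv_nonneg (by linarith) (by linarith)
    have key : 2 * (m / (ℓ : ℤ)) ≤ m := by
      nlinarith [mul_nonneg (by linarith : (0 : ℤ) ≤ (ℓ : ℤ) - 2) h2]
    omega
  · have hm2 : m ≤ -2 := by omega
    have h2 : m / (ℓ : ℤ) < 0 := Int.ediv_neg_of_neg_of_pos (by omega) (by linarith)
    have key : m + 1 ≤ m / (ℓ : ℤ) := by
      rw [Int.le_ediv_iff_mul_le (by linarith : (0:ℤ) < (ℓ:ℤ))]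
      nlinarith [mul_nonneg (by linarith : (0 : ℤ) ≤ (ℓ : ℤ) - 1)
        (by linarith : (0 : ℤ) ≤ -m - 2)]
    omega

lemma lt_pow_self' (hl2 : 2 ≤ ℓ) (k : ℕ) : k < ℓ ^ k :=
  lt_of_lt_of_le (Nat.lt_two_pow_self (n := k)) (Nat.pow_le_pow_left hl2 k)

lemma lt_pow_succ_self (hl2 : 2 ≤ ℓ) (k : ℕ) : k < ℓ ^ (k + 1) :=
  lt_of_lt_of_le (lt_pow_self' ℓ hl2 k) (Nat.pow_le_pow_right (by omega) (Nat.le_succ k))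

lemma neg_emod_eq {m b : ℤ} (hb : 0 < b) (h1 : -b ≤ m) (h2 : m < 0) :
    m % b = m + b ∧ m / b = -1 := by
  have h := (Int.ediv_emod_unique (a := m) (b := b) (q := -1) (r := m + b) hb).mpr
    ⟨by ring, by omega, by omega⟩
  exact ⟨h.2, h.1⟩

lemma iterate_substSeq (hl : 0 < ℓ) :
    ∀ (n : ℕ) (z : ℤ → A) (m : ℤ), (substSeq θ ℓ)^[n] z m
      = expandPerm θ ℓ n ((m % ((ℓ : ℤ) ^ n)).toNat) (z (m / ((ℓ : ℤ) ^ n))) := by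
  intro n
  induction n with
  | zero =>
    intro z m
    simp [expandPerm]
  | succ n ih =>
    intro z m
    have hit : (substSeq θ ℓ)^[n + 1] z = substSeq θ ℓ ((substSeq θ ℓ)^[n] z) :=
      Function.iterate_succ_apply' _ _ _
    rw [hit, substSeq_apply, ih, expandPerm_emod_succ θ ℓ hl, (int_digit ℓ hl n m).1,
      Equiv.Perm.mul_apply]

lemma fiber_formula (hl : 0 < ℓ) (h0 : θ 0 = 1) {x : ℤ → A}
    (hfib : ∀ n : ℕ, ∃ z ∈ XSet θ ℓ, (substSeq θ ℓ)^[n] z = x) (n : ℕ) (m : ℤ) :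
    x m = expandPerm θ ℓ n ((m % ((ℓ : ℤ) ^ n)).toNat)
      (x ((ℓ : ℤ) ^ n * (m / ((ℓ : ℤ) ^ n)))) := by
  obtain ⟨z, hzX, hz⟩ := hfib n
  have hl' : (0 : ℤ) < (ℓ : ℤ) := by exact_mod_cast hl
  have hpn : ((ℓ : ℤ) ^ n) ≠ 0 := by positivity
  have h2 : x ((ℓ : ℤ) ^ n * (m / ((ℓ : ℤ) ^ n))) = z (m / ((ℓ : ℤ) ^ n)) := by
    rw [← hz, iterate_substSeq θ ℓ hl n, Int.mul_emod_right, Int.mul_ediv_cancel_left _ hpn]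
    simp [expandPerm_zero_idx θ ℓ h0]
  rw [h2, ← hz, iterate_substSeq θ ℓ hl n]

end Aux

section Aux2
variable (θ : ℕ → Equiv.Perm A) (ℓ : ℕ)

lemma fiber_fixed (hl2 : 2 ≤ ℓ) (h0 : θ 0 = 1) (h1 : θ (ℓ - 1) = 1) {x : ℤ → A}
    (hfib : ∀ n : ℕ, ∃ z ∈ XSet θ ℓ, (substSeq θ ℓ)^[n] z = x) :
    substSeq θ ℓ x = x := by
  have hl : 0 < ℓ := by omega
  have hl' : (0 : ℤ) < (ℓ : ℤ) := by exact_mod_cast hl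
  funext m
  set n := m.natAbs with hn
  have hbound : m.natAbs < ℓ ^ (n + 1) := lt_pow_succ_self ℓ hl2 n
  have hcastp : ((ℓ ^ (n + 1) : ℕ) : ℤ) = (ℓ : ℤ) ^ (n + 1) := by push_cast; ring
  have hbz : (m.natAbs : ℤ) < (ℓ : ℤ) ^ (n + 1) := by
    rw [← hcastp]; exact_mod_cast hbound
  have hbz1 : -((ℓ : ℤ) ^ (n + 1)) ≤ m := by omega
  have hbz2 : m < (ℓ : ℤ) ^ (n + 1) := by omega
  have hq : m / ((ℓ : ℤ) ^ (n + 1)) = 0 ∨ m / ((ℓ : ℤ) ^ (n + 1)) = -1 := by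
    rcases le_or_gt 0 m with hm | hm
    · exact Or.inl (Int.ediv_eq_zero_of_lt hm hbz2)
    · exact Or.inr (neg_emod_eq (pow_pos hl' _) hbz1 hm).2
  have hxq : x ((ℓ : ℤ) ^ n * (m / ((ℓ : ℤ) ^ (n + 1))))
      = x ((ℓ : ℤ) ^ (n + 1) * (m / ((ℓ : ℤ) ^ (n + 1)))) := by
    rcases hq with hq | hq
    · rw [hq, mul_zero, mul_zero]
    · rw [hq]
      have hform := fiber_formula θ ℓ hl h0 hfib (n + 1) (-((ℓ : ℤ) ^ n))
      have hpow : (ℓ : ℤ) ^ n ≤ (ℓ : ℤ) ^ (n + 1) := by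
        calc (ℓ : ℤ) ^ n = 1 * (ℓ : ℤ) ^ n := by ring
        _ ≤ (ℓ : ℤ) * (ℓ : ℤ) ^ n := by
            apply mul_le_mul_of_nonneg_right (by omega) (by positivity)
        _ = (ℓ : ℤ) ^ (n + 1) := by ring
      have hppos : (0 : ℤ) < (ℓ : ℤ) ^ n := by positivity
      obtain ⟨hem, hed⟩ := neg_emod_eq (pow_pos hl' (n + 1))
        (b := (ℓ : ℤ) ^ (n + 1)) (m := -((ℓ : ℤ) ^ n)) (by omega) (by omega)
      rw [hem, hed] at hform
      have htn : (-((ℓ : ℤ) ^ n) + (ℓ : ℤ) ^ (n + 1)).toNat = (ℓ - 1) * ℓ ^ n := by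
        apply @Nat.cast_injective ℤ _ _
        push_cast [Int.toNat_of_nonneg (by omega : (0:ℤ) ≤ -((ℓ : ℤ) ^ n) + (ℓ : ℤ) ^ (n + 1)),
          Nat.cast_sub (by omega : 1 ≤ ℓ)]
        ring
      rw [htn, expandPerm_top θ ℓ h0 h1 hl n] at hform
      simp only [Equiv.Perm.one_apply] at hform
      calc x ((ℓ : ℤ) ^ n * (-1)) = x (-((ℓ : ℤ) ^ n)) := by ring_nf
      _ = x ((ℓ : ℤ) ^ (n + 1) * (-1)) := hform
  rw [substSeq_apply, fiber_formula θ ℓ hl h0 hfib n (m / (ℓ : ℤ)),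
    ← Equiv.Perm.mul_apply, ← expandPerm_emod_succ θ ℓ hl, ← (int_digit ℓ hl n m).1, hxq,
    ← fiber_formula θ ℓ hl h0 hfib (n + 1) m]

end Aux2

/-- The canonical fixed point of the substitution with seed `(a, b)` at positions `(-1, 0)`. -/
def fixSeq (θ : ℕ → Equiv.Perm A) (ℓ : ℕ) (a b : A) : ℤ → A := fun m =>
  expandPerm θ ℓ (m.natAbs + 1) ((m % ((ℓ : ℤ) ^ (m.natAbs + 1))).toNat) (if 0 ≤ m then b else a)

section Aux3
variable (θ : ℕ → Equiv.Perm A) (ℓ : ℕ)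

lemma emod_step (hl2 : 2 ≤ ℓ) (h0 : θ 0 = 1) (h1 : θ (ℓ - 1) = 1) {n : ℕ} {m : ℤ}
    (hm : m.natAbs < ℓ ^ n) :
    expandPerm θ ℓ (n + 1) ((m % ((ℓ : ℤ) ^ (n + 1))).toNat)
      = expandPerm θ ℓ n ((m % ((ℓ : ℤ) ^ n)).toNat) := by
  have hl : 0 < ℓ := by omega
  have hl' : (0 : ℤ) < (ℓ : ℤ) := by exact_mod_cast hl
  have hcn : ((ℓ ^ n : ℕ) : ℤ) = (ℓ : ℤ) ^ n := by push_cast; ring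
  have hbz : (m.natAbs : ℤ) < (ℓ : ℤ) ^ n := by rw [← hcn]; exact_mod_cast hm
  have hpow : (ℓ : ℤ) ^ n < (ℓ : ℤ) ^ (n + 1) := by
    have : (1 : ℤ) * (ℓ : ℤ) ^ n < (ℓ : ℤ) * (ℓ : ℤ) ^ n := by
      apply mul_lt_mul_of_pos_right (by omega) (by positivity)
    calc (ℓ : ℤ) ^ n = 1 * (ℓ : ℤ) ^ n := by ring
    _ < (ℓ : ℤ) * (ℓ : ℤ) ^ n := this
    _ = (ℓ : ℤ) ^ (n + 1) := by ring
  rcases le_or_gt 0 m with hm0 | hm0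
  · have e1 : m % ((ℓ : ℤ) ^ n) = m := Int.emod_eq_of_lt hm0 (by omega)
    have e2 : m % ((ℓ : ℤ) ^ (n + 1)) = m := Int.emod_eq_of_lt hm0 (by omega)
    rw [e1, e2]
    exact expandPerm_stable θ ℓ h0 hl 1 (by omega)
  · have e1 : m % ((ℓ : ℤ) ^ n) = m + (ℓ : ℤ) ^ n :=
      (neg_emod_eq (by positivity) (by omega) hm0).1
    have e2 : m % ((ℓ : ℤ) ^ (n + 1)) = m + (ℓ : ℤ) ^ (n + 1) :=
      (neg_emod_eq (by positivity) (by omega) hm0).1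
    rw [e1, e2]
    have hsplit : (m + (ℓ : ℤ) ^ (n + 1)).toNat = (ℓ - 1) * ℓ ^ n + (m + (ℓ : ℤ) ^ n).toNat := by
      apply @Nat.cast_injective ℤ _ _
      push_cast [Int.toNat_of_nonneg (by omega : (0 : ℤ) ≤ m + (ℓ : ℤ) ^ (n + 1)),
        Int.toNat_of_nonneg (by omega : (0 : ℤ) ≤ m + (ℓ : ℤ) ^ n),
        Nat.cast_sub (by omega : 1 ≤ ℓ)]
      ring
    have hlt : (m + (ℓ : ℤ) ^ n).toNat < ℓ ^ n := by omega
    rw [hsplit, expandPerm_split θ ℓ hl 1 n (ℓ - 1) _ hlt, expandPerm_one θ ℓ,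
      Nat.mod_eq_of_lt (by omega), h1, mul_one]

lemma emod_stable (hl2 : 2 ≤ ℓ) (h0 : θ 0 = 1) (h1 : θ (ℓ - 1) = 1) {m : ℤ} :
    ∀ (j n : ℕ), m.natAbs < ℓ ^ n →
      expandPerm θ ℓ (n + j) ((m % ((ℓ : ℤ) ^ (n + j))).toNat)
        = expandPerm θ ℓ n ((m % ((ℓ : ℤ) ^ n)).toNat) := by
  intro j
  induction j with
  | zero => intro n _; rfl
  | succ j ih =>
    intro n hn
    have hn' : m.natAbs < ℓ ^ (n + j) :=
      lt_of_lt_of_le hn (Nat.pow_le_pow_right (by omega) (by omega))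
    have hstep := emod_step θ ℓ hl2 h0 h1 hn'
    have hEq : n + (j + 1) = (n + j) + 1 := rfl
    rw [hEq, hstep, ih n hn]

lemma fixSeq_eq (hl2 : 2 ≤ ℓ) (h0 : θ 0 = 1) (h1 : θ (ℓ - 1) = 1) (a b : A) {n : ℕ} {m : ℤ}
    (hm : m.natAbs < ℓ ^ n) :
    fixSeq θ ℓ a b m
      = expandPerm θ ℓ n ((m % ((ℓ : ℤ) ^ n)).toNat) (if 0 ≤ m then b else a) := by
  have hN : m.natAbs < ℓ ^ (m.natAbs + 1) := lt_pow_succ_self ℓ hl2 m.natAbs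
  unfold fixSeq
  rcases le_total n (m.natAbs + 1) with h | h
  · have hEq : m.natAbs + 1 = n + (m.natAbs + 1 - n) := by omega
    rw [hEq, emod_stable θ ℓ hl2 h0 h1 _ n hm]
  · have hEq : n = (m.natAbs + 1) + (n - (m.natAbs + 1)) := by omega
    conv_rhs => rw [hEq]
    rw [emod_stable θ ℓ hl2 h0 h1 _ _ hN]

lemma fixSeq_zero (hl2 : 2 ≤ ℓ) (h0 : θ 0 = 1) (h1 : θ (ℓ - 1) = 1) (a b : A) :
    fixSeq θ ℓ a b 0 = b := by
  have h : (0 : ℤ).natAbs < ℓ ^ 0 := by simp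
  rw [fixSeq_eq θ ℓ hl2 h0 h1 a b h]
  simp [expandPerm]

lemma fixSeq_neg_one (hl2 : 2 ≤ ℓ) (h0 : θ 0 = 1) (h1 : θ (ℓ - 1) = 1) (a b : A) :
    fixSeq θ ℓ a b (-1) = a := by
  have hl : 0 < ℓ := by omega
  have hl' : (0 : ℤ) < (ℓ : ℤ) := by exact_mod_cast hl
  have hl2' : (2 : ℤ) ≤ (ℓ : ℤ) := by exact_mod_cast hl2
  have h : ((-1 : ℤ)).natAbs < ℓ ^ 1 := by simpa using (show 1 < ℓ by omega)
  rw [fixSeq_eq θ ℓ hl2 h0 h1 a b h]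
  have hmod : (-1 : ℤ) % ((ℓ : ℤ) ^ 1) = (ℓ : ℤ) - 1 := by
    rw [pow_one]
    have := (neg_emod_eq (m := (-1 : ℤ)) (b := (ℓ : ℤ)) hl' (by omega) (by omega)).1
    omega
  rw [hmod, if_neg (by norm_num)]
  have htn : ((ℓ : ℤ) - 1).toNat = ℓ - 1 := by omega
  rw [htn, expandPerm_one θ ℓ, Nat.mod_eq_of_lt (by omega), h1]
  simp

lemma fixSeq_fixed (hl2 : 2 ≤ ℓ) (h0 : θ 0 = 1) (h1 : θ (ℓ - 1) = 1) (a b : A) :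
    substSeq θ ℓ (fixSeq θ ℓ a b) = fixSeq θ ℓ a b := by
  have hl : 0 < ℓ := by omega
  have hl' : (0 : ℤ) < (ℓ : ℤ) := by exact_mod_cast hl
  funext m
  set n := m.natAbs with hn
  have h_div : (m / (ℓ : ℤ)).natAbs < ℓ ^ n :=
    lt_of_le_of_lt (natAbs_ediv_le ℓ hl m) (lt_pow_self' ℓ hl2 n)
  have h_m : m.natAbs < ℓ ^ (n + 1) := lt_pow_succ_self ℓ hl2 n
  rw [substSeq_apply, fixSeq_eq θ ℓ hl2 h0 h1 a b h_div, fixSeq_eq θ ℓ hl2 h0 h1 a b h_m]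
  rcases le_or_gt 0 m with hm0 | hm0
  · rw [if_pos hm0, if_pos (Int.ediv_nonneg hm0 (le_of_lt hl')),
      ← Equiv.Perm.mul_apply, ← expandPerm_emod_succ θ ℓ hl n m]
  · have hdiv_neg : m / (ℓ : ℤ) < 0 := Int.ediv_neg_of_neg_of_pos hm0 hl'
    rw [if_neg (by omega), if_neg (by omega),
      ← Equiv.Perm.mul_apply, ← expandPerm_emod_succ θ ℓ hl n m]

end Aux3

section Aux4
variable (θ : ℕ → Equiv.Perm A) (ℓ : ℕ)

lemma fixSeq_mem (hl2 : 2 ≤ ℓ) (h0 : θ 0 = 1) (h1 : θ (ℓ - 1) = 1) {a b c : A} {K J : ℕ}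
    (hJ : J + 2 ≤ ℓ ^ K) (ha : expandPerm θ ℓ K J c = a) (hb : expandPerm θ ℓ K (J + 1) c = b) :
    fixSeq θ ℓ a b ∈ XSet θ ℓ := by
  have hl : 0 < ℓ := by omega
  have hl' : (0 : ℤ) < (ℓ : ℤ) := by exact_mod_cast hl
  intro i m
  set n := i.natAbs + m with hn
  have hnb : i.natAbs + m < ℓ ^ n := lt_pow_self' ℓ hl2 n
  set Pn := ℓ ^ n with hPn
  have hcn : ((Pn : ℕ) : ℤ) = (ℓ : ℤ) ^ n := by rw [hPn]; push_cast; ring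
  set Q := (J + 1) * Pn with hQ
  set QJ := J * Pn with hQJ
  have hQc : Q = QJ + Pn := by rw [hQ, hQJ]; ring
  refine ⟨n + K, c, ((Q : ℤ) + i).toNat, ?_, ?_⟩
  · have hQle : Q + Pn ≤ ℓ ^ (n + K) := by
      have hmul : (J + 2) * Pn ≤ ℓ ^ K * Pn := Nat.mul_le_mul_right _ hJ
      calc Q + Pn = (J + 2) * Pn := by rw [hQ]; ring
      _ ≤ ℓ ^ K * Pn := hmul
      _ = ℓ ^ (n + K) := by rw [hPn, ← pow_add]; ring_nf
    omega
  · intro t ht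
    have habs : (i + (t : ℤ)).natAbs < Pn := by omega
    have habs' : (i + (t : ℤ)).natAbs < ℓ ^ n := by rw [← hPn]; exact habs
    rw [fixSeq_eq θ ℓ hl2 h0 h1 a b habs']
    rcases le_or_gt 0 (i + (t : ℤ)) with hs0 | hs0
    · have e1 : (i + (t : ℤ)) % ((ℓ : ℤ) ^ n) = i + (t : ℤ) :=
        Int.emod_eq_of_lt hs0 (by omega)
      rw [if_pos hs0, e1]
      have hidx : ((Q : ℤ) + i).toNat + t = Q + (i + (t : ℤ)).toNat := by omega
      have hform : Q + (i + (t : ℤ)).toNat = (J + 1) * ℓ ^ n + (i + (t : ℤ)).toNat := by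
        rw [hQ, hPn]
      have hlt1 : (i + (t : ℤ)).toNat < ℓ ^ n := by rw [← hPn]; omega
      rw [hidx, hform, expandPerm_split θ ℓ hl K n (J + 1) ((i + (t : ℤ)).toNat) hlt1,
        Equiv.Perm.mul_apply, hb]
    · have e1 : (i + (t : ℤ)) % ((ℓ : ℤ) ^ n) = i + (t : ℤ) + (ℓ : ℤ) ^ n :=
        (neg_emod_eq (by positivity) (by omega) hs0).1
      rw [if_neg (by omega), e1]
      have hidx : ((Q : ℤ) + i).toNat + t = QJ + (i + (t : ℤ) + (ℓ : ℤ) ^ n).toNat := by omega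
      have hform : QJ + (i + (t : ℤ) + (ℓ : ℤ) ^ n).toNat
          = J * ℓ ^ n + (i + (t : ℤ) + (ℓ : ℤ) ^ n).toNat := by rw [hQJ, hPn]
      have hlt : (i + (t : ℤ) + (ℓ : ℤ) ^ n).toNat < ℓ ^ n := by
        rw [← hPn]; omega
      rw [hidx, hform, expandPerm_split θ ℓ hl K n J _ hlt, Equiv.Perm.mul_apply, ha]

end Aux4

/-- For a primitive aperiodic bijective simplified substitution `θ` of length `ℓ`, the fibre
`π⁻¹(0)` of the odometer factor map, i.e. `⋂ₙ θⁿ(X_θ)`, consists exactly of the fixed points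
of `θ`, and the map `x ↦ (x₋₁, x₀)` is a bijection from it onto the set of allowed two-letter
words of `θ`. -/
theorem stmt_9 [Fintype A] (θ : ℕ → Equiv.Perm A) (ℓ : ℕ) (hl : 0 < ℓ)
    (hprim : IsPrimitive θ ℓ) (haper : (XSet θ ℓ).Infinite) (hsimp : IsSimplified θ ℓ) :
    {x ∈ XSet θ ℓ | ∀ n : ℕ, ∃ z ∈ XSet θ ℓ, (substSeq θ ℓ)^[n] z = x} =
      {x ∈ XSet θ ℓ | substSeq θ ℓ x = x} ∧
    Set.BijOn (fun x : ℤ → A => (x (-1), x 0))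
      {x ∈ XSet θ ℓ | substSeq θ ℓ x = x}
      {p : A × A | ∃ (k : ℕ) (c : A) (j : ℕ), j + 2 ≤ ℓ ^ k ∧
        expandPerm θ ℓ k j c = p.1 ∧ expandPerm θ ℓ k (j + 1) c = p.2} := by
  obtain ⟨h0, h1, hall⟩ := hsimp
  have hl2 : 2 ≤ ℓ := by
    by_contra hcon
    have hone : ℓ = 1 := by omega
    have hsub : ∀ a b : A, a = b := by
      intro a b
      obtain ⟨i, hi, hab⟩ := hall a b
      have hi0 : i = 0 := by omega
      subst hi0
      rw [h0] at hab
      simpa using hab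
    obtain ⟨x, -, y, -, hxy⟩ := haper.nontrivial
    exact hxy (funext fun i => hsub _ _)
  constructor
  · ext x
    simp only [Set.mem_setOf_eq]
    constructor
    · rintro ⟨hxX, hfib⟩
      exact ⟨hxX, fiber_fixed θ ℓ hl2 h0 h1 hfib⟩
    · rintro ⟨hxX, hfx⟩
      exact ⟨hxX, fun n => ⟨x, hxX, Function.iterate_fixed hfx n⟩⟩
  · refine ⟨?_, ?_, ?_⟩
    · rintro x ⟨hxX, -⟩
      obtain ⟨k, a, j, hj, h⟩ := hxX (-1) 2
      have h0' := h 0 (by norm_num)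
      have h1' := h 1 (by norm_num)
      norm_num at h0' h1'
      exact ⟨k, a, j, hj, h0'.symm, h1'.symm⟩
    · rintro x ⟨hxX, hx⟩ y ⟨hyX, hy⟩ hpair
      have hp1 : x (-1) = y (-1) := congrArg Prod.fst hpair
      have hp2 : x 0 = y 0 := congrArg Prod.snd hpair
      have key : ∀ N : ℕ, ∀ m : ℤ, m.natAbs ≤ N → x m = y m := by
        intro N
        induction N with
        | zero =>
          intro m hm
          have hm0 : m = 0 := by omega
          subst hm0
          exact hp2
        | succ N ih =>
          intro m hm
          by_cases hm0 : m = 0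
          · subst hm0; exact hp2
          by_cases hm1 : m = -1
          · subst hm1; exact hp1
          have hdec : (m / (ℓ : ℤ)).natAbs < m.natAbs := natAbs_ediv_lt ℓ hl2 hm0 hm1
          calc x m = substSeq θ ℓ x m := by rw [hx]
          _ = θ ((m % (ℓ : ℤ)).toNat) (x (m / (ℓ : ℤ))) := substSeq_apply θ ℓ x m
          _ = θ ((m % (ℓ : ℤ)).toNat) (y (m / (ℓ : ℤ))) := by
              rw [ih (m / (ℓ : ℤ)) (by omega)]
          _ = substSeq θ ℓ y m := (substSeq_apply θ ℓ y m).symm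
          _ = y m := by rw [hy]
      exact funext fun m => key m.natAbs m le_rfl
    · rintro ⟨p1, p2⟩ ⟨K, c, J, hJ, hKa, hKb⟩
      refine ⟨fixSeq θ ℓ p1 p2, ⟨fixSeq_mem θ ℓ hl2 h0 h1 hJ hKa hKb,
        fixSeq_fixed θ ℓ hl2 h0 h1 p1 p2⟩, ?_⟩
      show (fixSeq θ ℓ p1 p2 (-1), fixSeq θ ℓ p1 p2 0) = (p1, p2)
      rw [fixSeq_neg_one θ ℓ hl2 h0 h1 p1 p2, fixSeq_zero θ ℓ hl2 h0 h1 p1 p2]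
end

section
/- Let θ be a primitive aperiodic bijective (simplified) substitution. Then the structural semigroup M^fib_0(X_θ) is isomorphic to the matrix semigroup M[G_θ; I_θ, {±}; A], where G_θ is the structure group of θ, I_θ is its R-set, and, for a fixed g₀ ∈ I_θ, the sandwich matrix A has entries a_{+,g} = 1 and a_{−,g} = g₀ g^{-1} for g ∈ I_θ. -/
variable {A : Type*}

/-- The generators `(θⁿ)_i` of the structure group. -/
def GensSet (θ : ℕ → Equiv.Perm A) (ℓ : ℕ) : Set (Equiv.Perm A) :=
  { g | ∃ (n i : ℕ), i < ℓ ^ n ∧ g = expandPerm θ ℓ n i }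

/-- The structure group `G_θ`. -/
def Gtheta (θ : ℕ → Equiv.Perm A) (ℓ : ℕ) : Subgroup (Equiv.Perm A) :=
  Subgroup.closure (GensSet θ ℓ)

/-- The R-set `I_θ`. -/
def RSet (θ : ℕ → Equiv.Perm A) (ℓ : ℕ) : Set (Equiv.Perm A) :=
  { g | ∃ (n i : ℕ), 1 ≤ i ∧ i < ℓ ^ n ∧
      g = expandPerm θ ℓ n i * (expandPerm θ ℓ n (i - 1))⁻¹ }

theorem rset_subset_G (θ : ℕ → Equiv.Perm A) (ℓ : ℕ) {g : Equiv.Perm A}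
    (hg : g ∈ RSet θ ℓ) : g ∈ Gtheta θ ℓ := by
  obtain ⟨n, i, h1, h2, rfl⟩ := hg
  exact mul_mem (Subgroup.subset_closure ⟨n, i, h2, rfl⟩)
    (inv_mem (Subgroup.subset_closure ⟨n, i - 1, by omega, rfl⟩))

/-- The sandwich matrix `A` of `M[G_θ; I_θ, {±}; A]`:
`a_{+,g} = 1` and `a_{−,g} = g₀ g⁻¹`, for a fixed `g₀ ∈ I_θ` (`true = +`, `false = −`). -/
def sandwichA (θ : ℕ → Equiv.Perm A) (ℓ : ℕ) (g₀ : Equiv.Perm A) (hg₀ : g₀ ∈ RSet θ ℓ) :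
    Bool → ↥(RSet θ ℓ) → ↥(Gtheta θ ℓ) :=
  fun b j =>
    if b then 1
    else ⟨g₀ * (j : Equiv.Perm A)⁻¹,
      mul_mem (rset_subset_G θ ℓ hg₀) (inv_mem (rset_subset_G θ ℓ j.2))⟩

/-- Multiplication of the Rees matrix semigroup `M[G; ι, Λ; A]`. -/
def matMul {ι Λ γ : Type*} [Mul γ] (Amat : Λ → ι → γ) (p q : ι × γ × Λ) : ι × γ × Λ :=
  (p.1, p.2.1 * Amat p.2.2 q.1 * q.2.1, q.2.2)

/-- The fibre `π⁻¹(0)` of the odometer factor map: `⋂ₙ θⁿ(X_θ)`. -/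
def Fib0 (θ : ℕ → Equiv.Perm A) (ℓ : ℕ) : Set ↥(XSet θ ℓ) :=
  { x | ∀ n : ℕ, ∃ z ∈ XSet θ ℓ, (substSeq θ ℓ)^[n] z = (x : ℤ → A) }

/-- The fibre-preserving part `E^fib(X_θ)`: elements of the Ellis semigroup preserving each
fibre of the odometer factor map (i.e. each set `σⁱ(θⁿ(X_θ))`). -/
def EfibSet [TopologicalSpace A] (θ : ℕ → Equiv.Perm A) (ℓ : ℕ) :
    Set (↥(XSet θ ℓ) → ↥(XSet θ ℓ)) :=
  { f | f ∈ EllisZ θ ℓ ∧ ∀ (n i : ℕ) (x : ↥(XSet θ ℓ)),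
      (∃ z ∈ XSet θ ℓ, shiftSeq (i : ℤ) ((substSeq θ ℓ)^[n] z) = (x : ℤ → A)) →
      ∃ z ∈ XSet θ ℓ, shiftSeq (i : ℤ) ((substSeq θ ℓ)^[n] z) = (f x : ℤ → A) }

/-- The restriction `E^fib_0(X_θ)` of `E^fib(X_θ)` to the fibre `π⁻¹(0)`. -/
def Efib0 [TopologicalSpace A] (θ : ℕ → Equiv.Perm A) (ℓ : ℕ) :
    Set (↥(Fib0 θ ℓ) → ↥(Fib0 θ ℓ)) :=
  { φ | ∃ f ∈ EfibSet θ ℓ, ∀ x : ↥(Fib0 θ ℓ), (φ x : ↥(XSet θ ℓ)) = f (x : ↥(XSet θ ℓ)) }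

/-- `M` is a (two-sided) ideal of the semigroup `S` of self-maps under composition. -/
def IsIdealIn {α : Type*} (S M : Set (α → α)) : Prop :=
  M.Nonempty ∧ M ⊆ S ∧ ∀ f ∈ S, ∀ g ∈ M, f ∘ g ∈ M ∧ g ∘ f ∈ M

/-- `M` is the kernel (smallest two-sided ideal) of the semigroup `S`. -/
def IsKernelIn {α : Type*} (S M : Set (α → α)) : Prop :=
  IsIdealIn S M ∧ ∀ N, IsIdealIn S N → M ⊆ N

/-! ### Auxiliary development -/

section Aux

variable (θ : ℕ → Equiv.Perm A) (ℓ : ℕ)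

lemma expandPerm_zero (k : ℕ) : expandPerm θ ℓ 0 k = 1 := rfl

lemma expand_split (n s k : ℕ) :
    expandPerm θ ℓ (n + s) k =
      expandPerm θ ℓ n (k % ℓ ^ n) * expandPerm θ ℓ s (k / ℓ ^ n) := by
  induction n generalizing k with
  | zero => simp [expandPerm_zero]
  | succ n ih =>
    have e1 : n + 1 + s = (n + s) + 1 := by omega
    rw [e1, expandPerm_succ, ih, expandPerm_succ]
    have hd : ℓ ∣ ℓ ^ (n + 1) := dvd_pow_self ℓ (by omega)
    have h1 : k % ℓ ^ (n + 1) % ℓ = k % ℓ := Nat.mod_mod_of_dvd k hd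
    have h2 : k % ℓ ^ (n + 1) / ℓ = k / ℓ % ℓ ^ n := by
      rw [show ℓ ^ (n+1) = ℓ * ℓ ^ n by rw [pow_succ, mul_comm]]
      exact Nat.mod_mul_right_div_self k ℓ (ℓ ^ n)
    have h3 : k / ℓ ^ (n + 1) = k / ℓ / ℓ ^ n := by
      rw [Nat.div_div_eq_div_mul, show ℓ * ℓ ^ n = ℓ ^ (n+1) by rw [pow_succ, mul_comm]]
    rw [h1, h2, h3, mul_assoc]

variable {θ ℓ}

lemma expand_idx_zero (h0 : θ 0 = 1) (n : ℕ) : expandPerm θ ℓ n 0 = 1 := by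
  induction n with
  | zero => rfl
  | succ n ih => rw [expandPerm_succ, Nat.zero_mod, Nat.zero_div, ih, h0, one_mul]

lemma expand_last (hl : 0 < ℓ) (h1 : θ (ℓ - 1) = 1) (n : ℕ) :
    expandPerm θ ℓ n (ℓ ^ n - 1) = 1 := by
  induction n with
  | zero => rfl
  | succ n ih =>
    have hP : 1 ≤ ℓ ^ n := Nat.one_le_pow _ _ hl
    have e : ℓ ^ (n + 1) - 1 = (ℓ ^ n - 1) * ℓ + (ℓ - 1) := by
      have h2 : (ℓ ^ n - 1) * ℓ = ℓ ^ n * ℓ - ℓ := by rw [Nat.sub_mul, one_mul]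
      have h3 : ℓ ^ (n + 1) = ℓ ^ n * ℓ := pow_succ ℓ n
      have h4 : ℓ ≤ ℓ ^ n * ℓ := Nat.le_mul_of_pos_left ℓ hP
      omega
    rw [expandPerm_succ, e]
    have hd : ((ℓ ^ n - 1) * ℓ + (ℓ - 1)) % ℓ = ℓ - 1 := by
      rw [Nat.mul_add_mod', Nat.mod_eq_of_lt (by omega)]
    have hq : ((ℓ ^ n - 1) * ℓ + (ℓ - 1)) / ℓ = ℓ ^ n - 1 := by
      rw [mul_comm, Nat.mul_add_div hl, Nat.div_eq_of_lt (by omega), add_zero]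
    rw [hd, hq, ih, h1, one_mul]

lemma expand_mul {i k : ℕ} (hi : i < ℓ ^ k) (s v : ℕ) :
    expandPerm θ ℓ (k + s) (i + ℓ ^ k * v) =
      expandPerm θ ℓ k i * expandPerm θ ℓ s v := by
  have hpos : 0 < ℓ ^ k := by omega
  rw [expand_split]
  have h1 : (i + ℓ ^ k * v) % ℓ ^ k = i := by
    rw [Nat.add_mul_mod_self_left, Nat.mod_eq_of_lt hi]
  have h2 : (i + ℓ ^ k * v) / ℓ ^ k = v := by
    rw [Nat.add_mul_div_left _ _ hpos, Nat.div_eq_of_lt hi, zero_add]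
  rw [h1, h2]

lemma expand_pad (h0 : θ 0 = 1) {i k : ℕ} (hi : i < ℓ ^ k) {K : ℕ} (hk : k ≤ K) :
    expandPerm θ ℓ K i = expandPerm θ ℓ k i := by
  obtain ⟨s, rfl⟩ := Nat.exists_eq_add_of_le hk
  have := expand_mul (θ := θ) hi s 0
  rw [mul_zero, add_zero] at this
  rw [this, expand_idx_zero h0, mul_one]

lemma expand_upad (hl : 0 < ℓ) (h1 : θ (ℓ - 1) = 1) {j k : ℕ} (hj : 1 ≤ j)
    (hj2 : j ≤ ℓ ^ k) {K : ℕ} (hk : k ≤ K) :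
    expandPerm θ ℓ K (ℓ ^ K - j) = expandPerm θ ℓ k (ℓ ^ k - j) := by
  obtain ⟨s, rfl⟩ := Nat.exists_eq_add_of_le hk
  have e : ℓ ^ (k + s) - j = (ℓ ^ k - j) + ℓ ^ k * (ℓ ^ s - 1) := by
    have h2 : ℓ ^ k * (ℓ ^ s - 1) = ℓ ^ k * ℓ ^ s - ℓ ^ k := by
      rw [Nat.mul_sub, mul_one]
    have h3 : ℓ ^ (k + s) = ℓ ^ k * ℓ ^ s := pow_add ℓ k s
    have h4 : 1 ≤ ℓ ^ s := Nat.one_le_pow _ _ hl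
    have h5 : ℓ ^ k ≤ ℓ ^ k * ℓ ^ s := Nat.le_mul_of_pos_right _ (by omega)
    omega
  rw [e, expand_mul (Nat.sub_lt (by omega) hj) s _, expand_last hl h1, mul_one]

lemma pow_grow (hl : 2 ≤ ℓ) (n : ℕ) : n < ℓ ^ n :=
  lt_of_lt_of_le (Nat.lt_two_pow_self) (Nat.pow_le_pow_left hl n)

end Aux

/-- The special points of the fibre over `0`: left-infinite limit word of `a` followed by
right-infinite limit word of `b`. -/
def xab (θ : ℕ → Equiv.Perm A) (ℓ : ℕ) (a b : A) : ℤ → A := fun m =>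
  if 0 ≤ m then expandPerm θ ℓ (m.natAbs + 1) m.natAbs b
  else expandPerm θ ℓ (m.natAbs + 1) (ℓ ^ (m.natAbs + 1) - m.natAbs) a

/-- `ab` is an admissible (legal) two-letter word. -/
def Adm (θ : ℕ → Equiv.Perm A) (ℓ : ℕ) (a b : A) : Prop :=
  ∃ k c i, i + 1 < ℓ ^ k ∧ expandPerm θ ℓ k i c = a ∧ expandPerm θ ℓ k (i + 1) c = b

section Aux2

variable {θ : ℕ → Equiv.Perm A} {ℓ : ℕ}

lemma xab_spec_nonneg (hl : 2 ≤ ℓ) (h0 : θ 0 = 1) {a b : A} {n : ℕ} {m : ℤ}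
    (hm : 0 ≤ m) (h : m.natAbs < ℓ ^ n) :
    xab θ ℓ a b m = expandPerm θ ℓ n m.natAbs b := by
  rw [xab, if_pos hm]
  have hi1 : m.natAbs < ℓ ^ (m.natAbs + 1) :=
    lt_of_lt_of_le (pow_grow hl _) (Nat.pow_le_pow_right (by omega) (by omega))
  rw [show expandPerm θ ℓ (m.natAbs + 1) m.natAbs
      = expandPerm θ ℓ (max (m.natAbs + 1) n) m.natAbs from
    (expand_pad h0 hi1 (le_max_left _ _)).symm,
    expand_pad h0 h (le_max_right _ _)]

lemma xab_spec_neg (hl : 2 ≤ ℓ) (h1 : θ (ℓ - 1) = 1) {a b : A} {n : ℕ} {m : ℤ}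
    (hm : m < 0) (h : m.natAbs ≤ ℓ ^ n) :
    xab θ ℓ a b m = expandPerm θ ℓ n (ℓ ^ n - m.natAbs) a := by
  rw [xab, if_neg (by omega)]
  have hj : 1 ≤ m.natAbs := by omega
  have hj2 : m.natAbs ≤ ℓ ^ (m.natAbs + 1) :=
    le_of_lt (lt_of_lt_of_le (pow_grow hl _) (Nat.pow_le_pow_right (by omega) (by omega)))
  rw [show expandPerm θ ℓ (m.natAbs + 1) (ℓ ^ (m.natAbs + 1) - m.natAbs)
      = expandPerm θ ℓ (max (m.natAbs + 1) n) (ℓ ^ (max (m.natAbs + 1) n) - m.natAbs) from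
    (expand_upad (by omega) h1 hj hj2 (le_max_left _ _)).symm,
    expand_upad (by omega) h1 hj h (le_max_right _ _)]

lemma adm_of_mem {x : ℤ → A} (hx : x ∈ XSet θ ℓ) (i : ℤ) : Adm θ ℓ (x i) (x (i + 1)) := by
  obtain ⟨k, a, j, hb, hv⟩ := hx i 2
  refine ⟨k, a, j, by omega, ?_, ?_⟩
  · have := hv 0 (by norm_num)
    simpa using this.symm
  · have := hv 1 (by norm_num)
    simpa using this.symm

lemma xab_block (hl : 2 ≤ ℓ) (h0 : θ 0 = 1) (h1 : θ (ℓ - 1) = 1) {k i₀ : ℕ} {c : A}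
    (hi : i₀ + 1 < ℓ ^ k) (n : ℕ) {p : ℤ} (hp1 : -((ℓ ^ n : ℕ) : ℤ) ≤ p)
    (hp2 : p < ((ℓ ^ n : ℕ) : ℤ)) :
    xab θ ℓ (expandPerm θ ℓ k i₀ c) (expandPerm θ ℓ k (i₀ + 1) c) p
      = expandPerm θ ℓ (n + k) ((((ℓ ^ n : ℕ) : ℤ) + p).toNat + ℓ ^ n * i₀) c := by
  rcases le_or_gt 0 p with hp | hp
  · have hlt : p.natAbs < ℓ ^ n := by omega
    rw [xab_spec_nonneg hl h0 hp hlt]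
    have e : (((ℓ ^ n : ℕ) : ℤ) + p).toNat + ℓ ^ n * i₀ = p.natAbs + ℓ ^ n * (i₀ + 1) := by
      have h2 : ℓ ^ n * (i₀ + 1) = ℓ ^ n * i₀ + ℓ ^ n := by ring
      omega
    rw [e, expand_mul hlt, Equiv.Perm.mul_apply]
  · have hub : p.natAbs ≤ ℓ ^ n := by omega
    rw [xab_spec_neg hl h1 hp hub]
    have e : (((ℓ ^ n : ℕ) : ℤ) + p).toNat + ℓ ^ n * i₀ = (ℓ ^ n - p.natAbs) + ℓ ^ n * i₀ := by
      omega
    rw [e, expand_mul (by omega), Equiv.Perm.mul_apply]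

lemma xab_mem (hl : 2 ≤ ℓ) (h0 : θ 0 = 1) (h1 : θ (ℓ - 1) = 1) {a b : A}
    (h : Adm θ ℓ a b) : xab θ ℓ a b ∈ XSet θ ℓ := by
  obtain ⟨k, c, i₀, hi, ha, hb⟩ := h
  intro i m
  obtain ⟨n, hn⟩ : ∃ n, i.natAbs + m ≤ ℓ ^ n := ⟨i.natAbs + m, le_of_lt (pow_grow hl _)⟩
  have hi1 : -((ℓ ^ n : ℕ) : ℤ) ≤ i := by omega
  have hi2 : i + m ≤ ((ℓ ^ n : ℕ) : ℤ) := by omega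
  refine ⟨n + k, c, (((ℓ ^ n : ℕ) : ℤ) + i).toNat + ℓ ^ n * i₀, ?_, ?_⟩
  · have hdist : ℓ ^ n * (i₀ + 2) = ℓ ^ n * i₀ + 2 * ℓ ^ n := by ring
    have hB : ℓ ^ n * (i₀ + 2) ≤ ℓ ^ n * ℓ ^ k := Nat.mul_le_mul_left _ (by omega)
    have hpa : ℓ ^ n * ℓ ^ k = ℓ ^ (n + k) := (pow_add ℓ n k).symm
    omega
  · intro t ht
    rw [← ha, ← hb]
    have hp1 : -((ℓ ^ n : ℕ) : ℤ) ≤ i + t := by omega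
    have hp2 : i + (t : ℤ) < ((ℓ ^ n : ℕ) : ℤ) := by omega
    rw [xab_block hl h0 h1 hi n hp1 hp2]
    have e : (((ℓ ^ n : ℕ) : ℤ) + (i + (t : ℤ))).toNat + ℓ ^ n * i₀
        = ((((ℓ ^ n : ℕ) : ℤ) + i).toNat + ℓ ^ n * i₀) + t := by omega
    rw [e]

lemma int_ediv_emod {d : ℤ} (hd : 0 < d) {a q r : ℤ} (h : a = d * q + r)
    (hr0 : 0 ≤ r) (hr1 : r < d) : a / d = q ∧ a % d = r :=
  (Int.ediv_emod_unique hd).2 ⟨by omega, hr0, hr1⟩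

lemma substSeq_def (z : ℤ → A) (m : ℤ) :
    substSeq θ ℓ z m = θ ((m % (ℓ : ℤ)).toNat) (z (m / (ℓ : ℤ))) := rfl

lemma subst_shift (hl : 0 < ℓ) (q : ℤ) (z : ℤ → A) :
    substSeq θ ℓ (shiftSeq q z) = shiftSeq ((ℓ : ℤ) * q) (substSeq θ ℓ z) := by
  funext m
  have hL : (0 : ℤ) < (ℓ : ℤ) := by exact_mod_cast hl
  have e1 := Int.mul_ediv_add_emod m (ℓ : ℤ)
  have hr0 := Int.emod_nonneg m (by omega : (ℓ : ℤ) ≠ 0)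
  have hr1 := Int.emod_lt_of_pos m hL
  obtain ⟨hdiv, hmod⟩ := int_ediv_emod hL
    (show m + (ℓ : ℤ) * q = (ℓ : ℤ) * (m / ℓ + q) + m % ℓ by rw [mul_add]; linarith) hr0 hr1
  show θ ((m % (ℓ:ℤ)).toNat) (z (m / (ℓ:ℤ) + q)) = substSeq θ ℓ z (m + (ℓ:ℤ) * q)
  rw [substSeq_def, hmod, hdiv]

lemma subst_iterate (hl : 0 < ℓ) (n : ℕ) (z : ℤ → A) (m : ℤ) :
    (substSeq θ ℓ)^[n] z m
      = expandPerm θ ℓ n ((m % ((ℓ ^ n : ℕ) : ℤ)).toNat) (z (m / ((ℓ ^ n : ℕ) : ℤ))) := by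
  induction n generalizing z m with
  | zero => simp [expandPerm_zero]
  | succ n ih =>
    have hL : (0 : ℤ) < (ℓ : ℤ) := by exact_mod_cast hl
    have hLn : (0 : ℤ) < ((ℓ ^ n : ℕ) : ℤ) := by positivity
    have hLn1 : (0 : ℤ) < ((ℓ ^ (n + 1) : ℕ) : ℤ) := by positivity
    rw [Function.iterate_succ_apply, ih (substSeq θ ℓ z) m, substSeq_def]
    set d1 := m / ((ℓ ^ n : ℕ) : ℤ) with hd1
    have e1 := Int.mul_ediv_add_emod m ((ℓ ^ n : ℕ) : ℤ)
    have e2 := Int.mul_ediv_add_emod d1 (ℓ : ℤ)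
    have hr0 : 0 ≤ m % ((ℓ ^ n : ℕ) : ℤ) := Int.emod_nonneg m (by omega)
    have hr1 : m % ((ℓ ^ n : ℕ) : ℤ) < ((ℓ ^ n : ℕ) : ℤ) := Int.emod_lt_of_pos m hLn
    have hs0 : 0 ≤ d1 % (ℓ : ℤ) := Int.emod_nonneg d1 (by omega)
    have hs1 : d1 % (ℓ : ℤ) < (ℓ : ℤ) := Int.emod_lt_of_pos d1 hL
    -- division of m by ℓ^(n+1)
    have key : m = ((ℓ ^ (n+1) : ℕ) : ℤ) * (d1 / (ℓ : ℤ))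
        + (m % ((ℓ ^ n : ℕ) : ℤ) + ((ℓ ^ n : ℕ) : ℤ) * (d1 % (ℓ : ℤ))) := by
      have hc : ((ℓ ^ (n+1) : ℕ) : ℤ) = ((ℓ ^ n : ℕ) : ℤ) * (ℓ : ℤ) := by
        push_cast; ring
      rw [hc]
      linear_combination (-1 : ℤ) * e1 - ((ℓ ^ n : ℕ) : ℤ) * e2
    have hrb : m % ((ℓ ^ n : ℕ) : ℤ) + ((ℓ ^ n : ℕ) : ℤ) * (d1 % (ℓ : ℤ))
        < ((ℓ ^ (n+1) : ℕ) : ℤ) := by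
      have hle : ((ℓ ^ n : ℕ) : ℤ) * (d1 % (ℓ : ℤ)) ≤ ((ℓ ^ n : ℕ) : ℤ) * ((ℓ : ℤ) - 1) :=
        mul_le_mul_of_nonneg_left (by omega) (by omega)
      have hc : ((ℓ ^ n : ℕ) : ℤ) * ((ℓ : ℤ) - 1) = ((ℓ ^ (n+1) : ℕ) : ℤ) - ((ℓ ^ n : ℕ) : ℤ) := by
        push_cast; ring
      omega
    obtain ⟨hdiv, hmod⟩ := int_ediv_emod hLn1 key (by positivity) hrb
    set r0 := (m % ((ℓ ^ n : ℕ) : ℤ)).toNat with hr0d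
    set s0 := (d1 % (ℓ : ℤ)).toNat with hs0d
    have hJ : (m % ((ℓ ^ (n+1) : ℕ) : ℤ)).toNat = r0 + ℓ ^ n * s0 := by
      have hs' : ((s0 : ℕ) : ℤ) = d1 % (ℓ:ℤ) := Int.toNat_of_nonneg hs0
      have hr' : ((r0 : ℕ) : ℤ) = m % ((ℓ ^ n : ℕ) : ℤ) := Int.toNat_of_nonneg hr0
      have hcast : ((r0 + ℓ ^ n * s0 : ℕ) : ℤ) = m % ((ℓ ^ (n+1) : ℕ) : ℤ) := by
        rw [hmod, Nat.cast_add, Nat.cast_mul, hs', hr']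
      omega
    rw [hJ, hdiv]
    have hsplit := expand_split θ ℓ n 1 (r0 + ℓ ^ n * s0)
    have hmodn : (r0 + ℓ ^ n * s0) % ℓ ^ n = r0 := by
      rw [Nat.add_mul_mod_self_left, Nat.mod_eq_of_lt (by omega)]
    have hdivn : (r0 + ℓ ^ n * s0) / ℓ ^ n = s0 := by
      rw [Nat.add_mul_div_left _ _ (by positivity), Nat.div_eq_of_lt (by omega), zero_add]
    have h1e : expandPerm θ ℓ 1 s0 = θ s0 := by
      rw [show (1:ℕ) = 0 + 1 from rfl, expandPerm_succ, expandPerm_zero, mul_one,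
        Nat.mod_eq_of_lt (by omega)]
    rw [hsplit, hmodn, hdivn, Equiv.Perm.mul_apply, h1e]

end Aux2

section Aux3

variable {θ : ℕ → Equiv.Perm A} {ℓ : ℕ}

lemma expand_succ_decomp (hl : 0 < ℓ) {r : ℕ} (hr : r < ℓ) (n w : ℕ) :
    expandPerm θ ℓ (n + 1) (r + ℓ * w) = θ r * expandPerm θ ℓ n w := by
  rw [expandPerm_succ, Nat.add_mul_mod_self_left, Nat.mod_eq_of_lt hr,
    Nat.add_mul_div_left _ _ hl, Nat.div_eq_of_lt hr, zero_add]

lemma xab_at_zero (hl : 2 ≤ ℓ) (h0 : θ 0 = 1) (a b : A) : xab θ ℓ a b 0 = b := by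
  rw [xab_spec_nonneg hl h0 le_rfl (show (0:ℤ).natAbs < ℓ ^ 1 by simp; omega)]
  simp [expand_idx_zero h0]

lemma xab_at_negone (hl : 2 ≤ ℓ) (h1 : θ (ℓ - 1) = 1) (a b : A) : xab θ ℓ a b (-1) = a := by
  rw [xab_spec_neg hl h1 (by norm_num) (show (-1:ℤ).natAbs ≤ ℓ ^ 1 by simp; omega),
    show ((-1 : ℤ)).natAbs = 1 from rfl, expand_last (by omega) h1 1]
  rfl

lemma subst_xab (hl : 2 ≤ ℓ) (h0 : θ 0 = 1) (h1 : θ (ℓ - 1) = 1) (a b : A) :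
    substSeq θ ℓ (xab θ ℓ a b) = xab θ ℓ a b := by
  funext m
  have hL0 : (0:ℤ) < (ℓ:ℤ) := by exact_mod_cast (show 0 < ℓ by omega)
  obtain ⟨n, hn⟩ : ∃ n, m.natAbs < ℓ ^ n := ⟨m.natAbs, pow_grow hl _⟩
  rw [substSeq_def]
  obtain ⟨q, hq⟩ : ∃ q, m / (ℓ:ℤ) = q := ⟨_, rfl⟩
  obtain ⟨r, hr⟩ : ∃ r, m % (ℓ:ℤ) = r := ⟨_, rfl⟩
  have e1 : (ℓ:ℤ) * q + r = m := by rw [← hq, ← hr]; exact Int.mul_ediv_add_emod m ℓ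
  have hr0 : 0 ≤ r := hr ▸ Int.emod_nonneg m (by omega)
  have hr1 : r < (ℓ:ℤ) := hr ▸ Int.emod_lt_of_pos m hL0
  rw [hq, hr]
  have hrc : ((r.toNat : ℕ) : ℤ) = r := Int.toNat_of_nonneg hr0
  have hrl : r.toNat < ℓ := by omega
  rcases le_or_gt 0 m with hm | hm
  · have hq0 : 0 ≤ q := by
      by_contra hc
      push_neg at hc
      have h2 : (ℓ:ℤ) * q ≤ (ℓ:ℤ) * (-1) := mul_le_mul_of_nonneg_left (by omega) (by omega)
      omega
    have hqm : q ≤ m := by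
      have h2 : q ≤ (ℓ:ℤ) * q := le_mul_of_one_le_left hq0 (by omega)
      omega
    have hqb : q.natAbs < ℓ ^ n := by omega
    have hqc : ((q.natAbs : ℕ) : ℤ) = q := Int.natAbs_of_nonneg hq0
    have hNA : m.natAbs = r.toNat + ℓ * q.natAbs := by
      have hcast : ((r.toNat + ℓ * q.natAbs : ℕ) : ℤ) = m := by
        rw [Nat.cast_add, Nat.cast_mul, hqc, hrc]; omega
      omega
    have hmb : m.natAbs < ℓ ^ (n + 1) := by
      have h3 : ℓ * (q.natAbs + 1) ≤ ℓ * ℓ ^ n := Nat.mul_le_mul_left _ (by omega)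
      have h4 : ℓ * (q.natAbs + 1) = ℓ * q.natAbs + ℓ := by ring
      have h5 : ℓ ^ (n+1) = ℓ * ℓ ^ n := by rw [pow_succ, mul_comm]
      omega
    rw [xab_spec_nonneg hl h0 hm hmb, xab_spec_nonneg hl h0 hq0 hqb, hNA,
      expand_succ_decomp (by omega) hrl, Equiv.Perm.mul_apply]
  · have hqneg : q < 0 := by
      by_contra hc
      push_neg at hc
      have h2 : 0 ≤ (ℓ:ℤ) * q := mul_nonneg (by omega) hc
      omega
    have hqm : m ≤ q := by
      have h2 : ((ℓ:ℤ) - 1) * q ≤ ((ℓ:ℤ) - 1) * (-1) :=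
        mul_le_mul_of_nonneg_left (by omega) (by omega)
      have h3 : ((ℓ:ℤ) - 1) * q = (ℓ:ℤ) * q - q := by ring
      have h4 : ((ℓ:ℤ) - 1) * (-1) = 1 - (ℓ:ℤ) := by ring
      omega
    have hqb : q.natAbs ≤ ℓ ^ n := by omega
    have hqc : ((q.natAbs : ℕ) : ℤ) = -q := Int.ofNat_natAbs_of_nonpos (le_of_lt hqneg)
    have hNA : m.natAbs + r.toNat = ℓ * q.natAbs := by
      have hcast : ((ℓ * q.natAbs : ℕ) : ℤ) = -m + r := by
        rw [Nat.cast_mul, hqc]; linear_combination -e1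
      omega
    have hpow : ℓ ^ (n+1) = ℓ * ℓ ^ n := by rw [pow_succ, mul_comm]
    have hmb : m.natAbs ≤ ℓ ^ (n + 1) := by
      have h2 : ℓ * q.natAbs ≤ ℓ * ℓ ^ n := Nat.mul_le_mul_left _ hqb
      omega
    rw [xab_spec_neg hl h1 hm hmb, xab_spec_neg hl h1 hqneg hqb]
    have hidx : ℓ ^ (n + 1) - m.natAbs = r.toNat + ℓ * (ℓ ^ n - q.natAbs) := by
      have h2 : ℓ * (ℓ ^ n - q.natAbs) = ℓ * ℓ ^ n - ℓ * q.natAbs := Nat.mul_sub _ _ _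
      have h3 : ℓ * q.natAbs ≤ ℓ * ℓ ^ n := Nat.mul_le_mul_left _ hqb
      omega
    rw [hidx, expand_succ_decomp (by omega) hrl, Equiv.Perm.mul_apply]

lemma subst_iterate_xab (hl : 2 ≤ ℓ) (h0 : θ 0 = 1) (h1 : θ (ℓ - 1) = 1) (a b : A) (n : ℕ) :
    (substSeq θ ℓ)^[n] (xab θ ℓ a b) = xab θ ℓ a b :=
  Function.iterate_fixed (subst_xab hl h0 h1 a b) n

lemma fib0_char (hl : 2 ≤ ℓ) (h0 : θ 0 = 1) (h1 : θ (ℓ - 1) = 1) {x : ℤ → A}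
    (hfib : ∀ n : ℕ, ∃ z ∈ XSet θ ℓ, (substSeq θ ℓ)^[n] z = x) :
    x = xab θ ℓ (x (-1)) (x 0) := by
  funext m
  obtain ⟨n, hn⟩ : ∃ n, m.natAbs < ℓ ^ n := ⟨m.natAbs, pow_grow hl _⟩
  obtain ⟨z, _, hzx⟩ := hfib n
  have hLn : (0:ℤ) < ((ℓ ^ n : ℕ) : ℤ) := by
    have : 0 < ℓ ^ n := by positivity
    omega
  have hx0 : x 0 = z 0 := by
    have h := congrFun hzx 0
    rw [subst_iterate (by omega) n z 0] at h
    rw [← h, Int.zero_emod, Int.zero_ediv]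
    simp [expand_idx_zero h0]
  have hx1 : x (-1) = z (-1) := by
    have h := congrFun hzx (-1)
    rw [subst_iterate (by omega) n z (-1)] at h
    have hkey : (-1 : ℤ) = ((ℓ ^ n : ℕ) : ℤ) * (-1) + (((ℓ ^ n : ℕ) : ℤ) - 1) := by ring
    obtain ⟨hdiv, hmod⟩ := int_ediv_emod hLn hkey (by omega) (by omega)
    rw [← h, hdiv, hmod, show (((ℓ ^ n : ℕ) : ℤ) - 1).toNat = ℓ ^ n - 1 by omega,
      expand_last (by omega) h1]
    rfl
  have h := congrFun hzx m
  rw [subst_iterate (by omega) n z m] at h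
  rcases le_or_gt 0 m with hm | hm
  · have hmlt : m < ((ℓ ^ n : ℕ) : ℤ) := by omega
    rw [xab_spec_nonneg hl h0 hm hn, ← h, Int.emod_eq_of_lt hm hmlt,
      Int.ediv_eq_zero_of_lt hm hmlt, ← hx0, show m.toNat = m.natAbs by omega]
  · have hkey : m = ((ℓ ^ n : ℕ) : ℤ) * (-1) + (((ℓ ^ n : ℕ) : ℤ) + m) := by ring
    obtain ⟨hdiv, hmod⟩ := int_ediv_emod hLn hkey (by omega) (by omega)
    rw [xab_spec_neg (n := n) hl h1 hm (by omega), ← h, hdiv, hmod, ← hx1,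
      show (((ℓ ^ n : ℕ) : ℤ) + m).toNat = ℓ ^ n - m.natAbs by omega]

lemma shift_xab_pos (hl : 2 ≤ ℓ) (h0 : θ 0 = 1) (h1 : θ (ℓ - 1) = 1) {s u : ℕ}
    (hu : 1 ≤ u) (hus : u < ℓ ^ s) (n : ℕ) {j : ℤ} (hj1 : -((ℓ ^ n : ℕ) : ℤ) ≤ j)
    (hj2 : j < ((ℓ ^ n : ℕ) : ℤ)) (a b : A) :
    xab θ ℓ a b (j + ((ℓ ^ n * u : ℕ) : ℤ))
      = xab θ ℓ (expandPerm θ ℓ s (u - 1) b) (expandPerm θ ℓ s u b) j := by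
  obtain ⟨m, hmdef⟩ : ∃ m, j + ((ℓ ^ n * u : ℕ) : ℤ) = m := ⟨_, rfl⟩
  rw [hmdef]
  have h8 : ℓ ^ n * u = ℓ ^ n * (u - 1) + ℓ ^ n := by
    have := Nat.mul_sub (ℓ ^ n) u 1
    have h9 : ℓ ^ n * 1 = ℓ ^ n := by ring
    have h10 : ℓ ^ n ≤ ℓ ^ n * u := Nat.le_mul_of_pos_right _ (by omega)
    omega
  have hpow : ℓ ^ (n + s) = ℓ ^ n * ℓ ^ s := pow_add ℓ n s
  have h11 : ℓ ^ n * (u + 1) ≤ ℓ ^ n * ℓ ^ s := Nat.mul_le_mul_left _ (by omega)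
  have h12 : ℓ ^ n * (u + 1) = ℓ ^ n * u + ℓ ^ n := by ring
  have hm0 : 0 ≤ m := by omega
  rcases le_or_gt 0 j with hj | hj
  · have hja : j.natAbs < ℓ ^ n := by omega
    have hNA : m.natAbs = j.natAbs + ℓ ^ n * u := by omega
    have hmb : m.natAbs < ℓ ^ (n + s) := by omega
    rw [xab_spec_nonneg hl h0 hm0 hmb, xab_spec_nonneg hl h0 hj hja, hNA,
      expand_mul hja, Equiv.Perm.mul_apply]
  · have hja1 : 1 ≤ j.natAbs := by omega
    have hja : j.natAbs ≤ ℓ ^ n := by omega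
    have hNA : m.natAbs = (ℓ ^ n - j.natAbs) + ℓ ^ n * (u - 1) := by omega
    have hmb : m.natAbs < ℓ ^ (n + s) := by omega
    rw [xab_spec_nonneg hl h0 hm0 hmb, xab_spec_neg hl h1 hj hja, hNA,
      expand_mul (show ℓ ^ n - j.natAbs < ℓ ^ n by omega), Equiv.Perm.mul_apply]

lemma shift_xab_neg (hl : 2 ≤ ℓ) (h0 : θ 0 = 1) (h1 : θ (ℓ - 1) = 1) {s w : ℕ}
    (hw : 1 ≤ w) (hws : w < ℓ ^ s) (n : ℕ) {j : ℤ} (hj1 : -((ℓ ^ n : ℕ) : ℤ) ≤ j)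
    (hj2 : j < ((ℓ ^ n : ℕ) : ℤ)) (a b : A) :
    xab θ ℓ a b (j - ((ℓ ^ n * (ℓ ^ s - w) : ℕ) : ℤ))
      = xab θ ℓ (expandPerm θ ℓ s (w - 1) a) (expandPerm θ ℓ s w a) j := by
  obtain ⟨m, hmdef⟩ : ∃ m, j - ((ℓ ^ n * (ℓ ^ s - w) : ℕ) : ℤ) = m := ⟨_, rfl⟩
  rw [hmdef]
  have hvw : (ℓ ^ s - w) + w = ℓ ^ s := by omega
  have h9 : ℓ ^ n * (ℓ ^ s - w) + ℓ ^ n * w = ℓ ^ n * ℓ ^ s := by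
    rw [← Nat.left_distrib, hvw]
  have h10 : ℓ ^ n * w = ℓ ^ n * (w - 1) + ℓ ^ n := by
    have := Nat.mul_sub (ℓ ^ n) w 1
    have h9' : ℓ ^ n * 1 = ℓ ^ n := by ring
    have h10' : ℓ ^ n ≤ ℓ ^ n * w := Nat.le_mul_of_pos_right _ (by omega)
    omega
  have h11 : ℓ ^ n ≤ ℓ ^ n * (ℓ ^ s - w) := Nat.le_mul_of_pos_right _ (by omega)
  have hpow : ℓ ^ (n + s) = ℓ ^ n * ℓ ^ s := pow_add ℓ n s
  have hm0 : m < 0 := by omega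
  have hmb : m.natAbs ≤ ℓ ^ (n + s) := by omega
  rw [xab_spec_neg hl h1 hm0 hmb]
  rcases le_or_gt 0 j with hj | hj
  · have hja : j.natAbs < ℓ ^ n := by omega
    have hidx : ℓ ^ (n + s) - m.natAbs = j.natAbs + ℓ ^ n * w := by omega
    rw [hidx, expand_mul hja, Equiv.Perm.mul_apply, xab_spec_nonneg hl h0 hj hja]
  · have hja1 : 1 ≤ j.natAbs := by omega
    have hja : j.natAbs ≤ ℓ ^ n := by omega
    have hidx : ℓ ^ (n + s) - m.natAbs = (ℓ ^ n - j.natAbs) + ℓ ^ n * (w - 1) := by omega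
    rw [hidx, expand_mul (show ℓ ^ n - j.natAbs < ℓ ^ n by omega), Equiv.Perm.mul_apply,
      xab_spec_neg hl h1 hj hja]

end Aux3

section Aux4

variable {θ : ℕ → Equiv.Perm A} {ℓ : ℕ}

lemma shiftSeq_add (a b : ℤ) (x : ℤ → A) :
    shiftSeq a (shiftSeq b x) = shiftSeq (a + b) x := by
  funext j
  show x (j + a + b) = x (j + (a + b))
  rw [add_assoc]

lemma mem_gens_one : (1 : Equiv.Perm A) ∈ GensSet θ ℓ :=
  ⟨0, 0, by norm_num, rfl⟩

lemma gens_mul {g h : Equiv.Perm A} (hg : g ∈ GensSet θ ℓ) (hh : h ∈ GensSet θ ℓ) :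
    g * h ∈ GensSet θ ℓ := by
  obtain ⟨n, i, hi, rfl⟩ := hg
  obtain ⟨s, v, hv, rfl⟩ := hh
  refine ⟨n + s, i + ℓ ^ n * v, ?_, (expand_mul hi s v).symm⟩
  have h1 : ℓ ^ n * (v + 1) ≤ ℓ ^ n * ℓ ^ s := Nat.mul_le_mul_left _ (by omega)
  have h2 : ℓ ^ n * (v + 1) = ℓ ^ n * v + ℓ ^ n := by ring
  have hpow : ℓ ^ (n + s) = ℓ ^ n * ℓ ^ s := pow_add ℓ n s
  omega

lemma gens_pow {g : Equiv.Perm A} (hg : g ∈ GensSet θ ℓ) (k : ℕ) :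
    g ^ k ∈ GensSet θ ℓ := by
  induction k with
  | zero => simpa using mem_gens_one
  | succ k ih => rw [pow_succ]; exact gens_mul ih hg

lemma gens_inv [Finite A] {g : Equiv.Perm A} (hg : g ∈ GensSet θ ℓ) :
    g⁻¹ ∈ GensSet θ ℓ := by
  have hpos : 0 < orderOf g := orderOf_pos g
  have h1 : g * g ^ (orderOf g - 1) = 1 := by
    rw [← pow_succ', show orderOf g - 1 + 1 = orderOf g by omega, pow_orderOf_eq_one]
  rw [inv_eq_of_mul_eq_one_right h1]
  exact gens_pow hg _

lemma gtheta_eq_gens [Finite A] : (Gtheta θ ℓ : Set (Equiv.Perm A)) = GensSet θ ℓ := by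
  apply subset_antisymm
  · have : Gtheta θ ℓ ≤
        { carrier := GensSet θ ℓ
          one_mem' := mem_gens_one
          mul_mem' := fun ha hb => gens_mul ha hb
          inv_mem' := fun ha => gens_inv ha : Subgroup (Equiv.Perm A) } :=
      (Subgroup.closure_le _).2 (le_refl _)
    exact this
  · exact Subgroup.subset_closure

lemma realize [Finite A] {t p : Equiv.Perm A} (ht : t ∈ RSet θ ℓ) (hp : p ∈ GensSet θ ℓ) :
    ∃ s u, 1 ≤ u ∧ u < ℓ ^ s ∧ expandPerm θ ℓ s (u - 1) = t⁻¹ * p ∧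
      expandPerm θ ℓ s u = p := by
  obtain ⟨k, i, hi1, hik, rfl⟩ := ht
  have hmem : (expandPerm θ ℓ k i)⁻¹ * p ∈ GensSet θ ℓ :=
    gens_mul (gens_inv ⟨k, i, hik, rfl⟩) hp
  obtain ⟨s', v, hv, hvev⟩ := hmem
  refine ⟨k + s', i + ℓ ^ k * v, by omega, ?_, ?_, ?_⟩
  · have h1 : ℓ ^ k * (v + 1) ≤ ℓ ^ k * ℓ ^ s' := Nat.mul_le_mul_left _ (by omega)
    have h2 : ℓ ^ k * (v + 1) = ℓ ^ k * v + ℓ ^ k := by ring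
    have hpow : ℓ ^ (k + s') = ℓ ^ k * ℓ ^ s' := pow_add ℓ k s'
    omega
  · have he : i + ℓ ^ k * v - 1 = (i - 1) + ℓ ^ k * v := by omega
    rw [he, expand_mul (by omega) s' v, ← hvev]
    have hinv : (expandPerm θ ℓ k i * (expandPerm θ ℓ k (i - 1))⁻¹)⁻¹
        = expandPerm θ ℓ k (i - 1) * (expandPerm θ ℓ k i)⁻¹ := by group
    rw [hinv, mul_assoc]
  · rw [expand_mul (by omega) s' v, ← hvev]
    group

end Aux4

section Aux5

variable {θ : ℕ → Equiv.Perm A} {ℓ : ℕ}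
variable [TopologicalSpace A] [DiscreteTopology A]

lemma isClosed_XSet : IsClosed (XSet θ ℓ) := by
  have hE : XSet θ ℓ = ⋂ (i : ℤ), ⋂ (m : ℕ),
      (fun (x : ℤ → A) (t : Fin m) => x (i + ((t : ℕ) : ℤ))) ⁻¹'
        {f : Fin m → A | ∃ k a j, j + m ≤ ℓ ^ k ∧
          ∀ t : Fin m, f t = expandPerm θ ℓ k (j + (t : ℕ)) a} := by
    ext x
    simp only [XSet, Set.mem_setOf_eq, Set.mem_iInter, Set.mem_preimage]
    constructor
    · intro hx i m
      obtain ⟨k, a, j, hb, hv⟩ := hx i m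
      exact ⟨k, a, j, hb, fun t => hv t t.isLt⟩
    · intro hx i m
      obtain ⟨k, a, j, hb, hv⟩ := hx i m
      exact ⟨k, a, j, hb, fun t ht => hv ⟨t, ht⟩⟩
  rw [hE]
  exact isClosed_iInter fun i => isClosed_iInter fun m =>
    IsClosed.preimage (continuous_pi fun t => continuous_apply _) (isClosed_discrete _)

lemma compactSpace_X [Finite A] : CompactSpace ↥(XSet θ ℓ) :=
  isCompact_iff_compactSpace.1 (isClosed_XSet.isCompact)

lemma continuous_substSeq : Continuous (substSeq θ ℓ : (ℤ → A) → (ℤ → A)) :=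
  continuous_pi fun m =>
    continuous_of_discreteTopology.comp (continuous_apply (m.ediv (ℓ : ℤ)))

lemma continuous_shiftSeq (n : ℤ) : Continuous (shiftSeq n : (ℤ → A) → (ℤ → A)) :=
  continuous_pi fun j => continuous_apply (j + n)

/-- The set `σ^i(θ^n(X))` as a subset of `X`. -/
def Sset (θ : ℕ → Equiv.Perm A) (ℓ : ℕ) (n i : ℕ) : Set ↥(XSet θ ℓ) :=
  { x | ∃ z ∈ XSet θ ℓ, shiftSeq (i : ℤ) ((substSeq θ ℓ)^[n] z) = (x : ℤ → A) }

lemma isClosed_Sset [Finite A] (n i : ℕ) : IsClosed (Sset θ ℓ n i) := by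
  have hE : Sset θ ℓ n i = Subtype.val ⁻¹'
      ((shiftSeq (i : ℤ) ∘ (substSeq θ ℓ)^[n]) '' (XSet θ ℓ)) := by
    ext x
    exact ⟨fun ⟨z, hz, hzx⟩ => ⟨z, hz, hzx⟩, fun ⟨z, hz, hzx⟩ => ⟨z, hz, hzx⟩⟩
  rw [hE]
  refine IsClosed.preimage continuous_subtype_val ?_
  refine IsCompact.isClosed (IsCompact.image isClosed_XSet.isCompact ?_)
  exact (continuous_shiftSeq _).comp (continuous_substSeq.iterate n)

lemma subst_iter_shift (hl : 0 < ℓ) (k : ℕ) (q : ℤ) (z : ℤ → A) :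
    (substSeq θ ℓ)^[k] (shiftSeq q z)
      = shiftSeq (((ℓ ^ k : ℕ) : ℤ) * q) ((substSeq θ ℓ)^[k] z) := by
  induction k generalizing z q with
  | zero => simp
  | succ k ih =>
    rw [Function.iterate_succ_apply, subst_shift hl, Function.iterate_succ_apply, ih]
    congr 1
    push_cast [pow_succ]
    ring

lemma shift_S_mem (hl : 0 < ℓ) {k i : ℕ} {m : ℤ} (hd : ((ℓ ^ k : ℕ) : ℤ) ∣ m)
    {x : ↥(XSet θ ℓ)} (hx : x ∈ Sset θ ℓ k i) : shiftX θ ℓ m x ∈ Sset θ ℓ k i := by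
  obtain ⟨z, hz, hzx⟩ := hx
  obtain ⟨q, rfl⟩ := hd
  refine ⟨shiftSeq q z, shiftSeq_mem q hz, ?_⟩
  show shiftSeq (i : ℤ) ((substSeq θ ℓ)^[k] (shiftSeq q z)) = shiftSeq _ x.1
  rw [subst_iter_shift hl, shiftSeq_add, ← hzx, shiftSeq_add, add_comm]

lemma tendsto_shift_iff {α : Type*} {F : Filter α} {g : α → ↥(XSet θ ℓ)}
    {y : ↥(XSet θ ℓ)} :
    Filter.Tendsto g F (nhds y) ↔ ∀ j : ℤ, ∀ᶠ n in F, (g n : ℤ → A) j = (y : ℤ → A) j := by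
  rw [tendsto_subtype_rng, tendsto_pi_nhds]
  refine forall_congr' fun j => ?_
  rw [nhds_discrete A, Filter.tendsto_pure]

lemma exists_ultrafilter_of_mem_EllisZ {f : ↥(XSet θ ℓ) → ↥(XSet θ ℓ)}
    (hf : f ∈ EllisZ θ ℓ) :
    ∃ U : Ultrafilter ℤ, Filter.Tendsto (fun n => shiftX θ ℓ n) (U : Filter ℤ) (nhds f) := by
  obtain ⟨V, hV1, hV2⟩ := mem_closure_iff_ultrafilter.1 hf
  have hne : (Filter.comap (fun n => shiftX θ ℓ n) (V : Filter _)).NeBot := by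
    refine Filter.comap_neBot fun t ht => ?_
    have h2 : t ∩ Set.range (fun n : ℤ => shiftX θ ℓ n) ∈ V := Filter.inter_mem ht hV1
    obtain ⟨y, hyt, n, rfl⟩ := V.nonempty_of_mem h2
    exact ⟨n, hyt⟩
  refine ⟨Ultrafilter.of (Filter.comap (fun n => shiftX θ ℓ n) (V : Filter _)), ?_⟩
  exact le_trans (Filter.map_mono (Ultrafilter.of_le _)) (le_trans Filter.map_comap_le hV2)

end Aux5

section Aux6

variable {θ : ℕ → Equiv.Perm A} {ℓ : ℕ}

lemma substSeq_mem (hl : 0 < ℓ) {z : ℤ → A} (hz : z ∈ XSet θ ℓ) :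
    substSeq θ ℓ z ∈ XSet θ ℓ := by
  intro i m
  rcases m with _ | m'
  · exact ⟨0, z 0, 0, by norm_num, fun t ht => absurd ht (by omega)⟩
  set m := m' + 1 with hm
  have hL : (0:ℤ) < (ℓ:ℤ) := by exact_mod_cast hl
  obtain ⟨q0, hq0⟩ : ∃ q0, i / (ℓ:ℤ) = q0 := ⟨_, rfl⟩
  have e0 := Int.mul_ediv_add_emod i (ℓ:ℤ)
  rw [hq0] at e0
  obtain ⟨d, hd⟩ : ∃ d : ℕ, (d:ℤ) = i % (ℓ:ℤ) := ⟨(i % ℓ).toNat,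
    Int.toNat_of_nonneg (Int.emod_nonneg i (by omega))⟩
  have hdl : d < ℓ := by
    have := Int.emod_lt_of_pos i hL
    omega
  obtain ⟨k, a, j, hb, hv⟩ := hz q0 m
  refine ⟨k + 1, a, d + ℓ * j, ?_, ?_⟩
  · have h1 : m' ≤ ℓ * m' := Nat.le_mul_of_pos_left m' hl
    have h2 : ℓ * (j + m) = ℓ * j + ℓ * m' + ℓ := by rw [hm]; ring
    have h3 : ℓ * (j + m) ≤ ℓ * ℓ ^ k := Nat.mul_le_mul_left _ hb
    have h4 : ℓ ^ (k + 1) = ℓ * ℓ ^ k := by rw [pow_succ, mul_comm]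
    omega
  · intro t ht
    have e2 := Nat.div_add_mod (d + t) ℓ
    have he2 : (d + t) % ℓ < ℓ := Nat.mod_lt _ hl
    have hdiv : (d + t) / ℓ < m := by
      have h5 : d + t < m * ℓ := by
        have h6 : m * ℓ = ℓ * m' + ℓ := by rw [hm]; ring
        have h7 : m' ≤ ℓ * m' := Nat.le_mul_of_pos_left m' hl
        omega
      exact (Nat.div_lt_iff_lt_mul hl).2 h5
    obtain ⟨hdivI, hmodI⟩ := int_ediv_emod hL
      (show i + (t:ℤ) = (ℓ:ℤ) * (q0 + (((d + t) / ℓ : ℕ) : ℤ)) + (((d + t) % ℓ : ℕ) : ℤ) by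
        have hc : ((ℓ * ((d + t) / ℓ) : ℕ) : ℤ) = (ℓ:ℤ) * (((d + t) / ℓ : ℕ) : ℤ) :=
          Nat.cast_mul _ _
        have hdist : (ℓ:ℤ) * (q0 + (((d + t) / ℓ : ℕ) : ℤ))
            = (ℓ:ℤ) * q0 + (ℓ:ℤ) * (((d + t) / ℓ : ℕ) : ℤ) := by ring
        omega)
      (by positivity) (by exact_mod_cast he2)
    rw [substSeq_def, hdivI, hmodI, show ((((d + t) % ℓ : ℕ) : ℤ)).toNat = (d + t) % ℓ by omega,
      hv _ hdiv, show d + ℓ * j + t = (d + t) % ℓ + ℓ * (j + (d + t) / ℓ) by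
        have hc : ℓ * (j + (d + t) / ℓ) = ℓ * j + ℓ * ((d + t) / ℓ) := by ring
        omega,
      expand_succ_decomp hl he2, Equiv.Perm.mul_apply]

lemma subst_iter_mem (hl : 0 < ℓ) {z : ℤ → A} (hz : z ∈ XSet θ ℓ) (k : ℕ) :
    (substSeq θ ℓ)^[k] z ∈ XSet θ ℓ := by
  induction k with
  | zero => exact hz
  | succ k ih => rw [Function.iterate_succ_apply']; exact substSeq_mem hl ih

lemma subst_inj (hl : 0 < ℓ) (h0 : θ 0 = 1) :
    Function.Injective (substSeq θ ℓ : (ℤ → A) → (ℤ → A)) := by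
  intro z z' h
  funext m
  have h2 := congrFun h ((ℓ:ℤ) * m)
  have hL : (ℓ:ℤ) ≠ 0 := by exact_mod_cast (by omega : ℓ ≠ 0)
  rw [substSeq_def, substSeq_def, Int.mul_emod_right, Int.mul_ediv_cancel_left m hL] at h2
  simpa [h0] using h2

lemma window_in_w (hl : 2 ≤ ℓ) (hprim : IsPrimitive θ ℓ) {x w : ℤ → A}
    (hx : x ∈ XSet θ ℓ) (hw : w ∈ XSet θ ℓ) (i : ℤ) (m : ℕ) :
    ∃ i' : ℕ, ∀ t : ℕ, t < m → x (i + t) = w ((i' : ℤ) + t) := by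
  obtain ⟨p, _, hp⟩ := hprim
  obtain ⟨k, c, j, hb, hv⟩ := hx i m
  obtain ⟨K, e, J, hb', hv'⟩ := hw 0 (2 * ℓ ^ (k + p))
  have hB1 : 1 ≤ ℓ ^ (k + p) := Nat.one_le_pow _ _ (by omega)
  have hKgt : k + p < K := by
    by_contra hc
    push_neg at hc
    have := Nat.pow_le_pow_right (show 1 ≤ ℓ by omega) hc
    omega
  obtain ⟨K', rfl⟩ : ∃ K', K = (k + p) + K' := ⟨K - (k + p), by omega⟩
  -- find an aligned block within the window of w
  obtain ⟨t₀, Q, ht₀, hQ⟩ : ∃ t₀ Q, t₀ < ℓ ^ (k + p) ∧ J + t₀ = ℓ ^ (k + p) * Q := by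
    rcases Nat.eq_zero_or_pos (J % ℓ ^ (k + p)) with hz0 | hz0
    · exact ⟨0, J / ℓ ^ (k + p), by omega, by
        have := Nat.div_add_mod J (ℓ ^ (k + p)); omega⟩
    · refine ⟨ℓ ^ (k + p) - J % ℓ ^ (k + p), J / ℓ ^ (k + p) + 1, by
        have := Nat.mod_lt J (show 0 < ℓ ^ (k+p) by omega); omega, ?_⟩
      have h2 := Nat.div_add_mod J (ℓ ^ (k + p))
      have h3 : ℓ ^ (k+p) * (J / ℓ ^ (k+p) + 1) = ℓ ^ (k+p) * (J / ℓ ^ (k+p)) + ℓ ^ (k+p) := by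
        ring
      have h4 : J % ℓ ^ (k + p) < ℓ ^ (k + p) := Nat.mod_lt J (by omega)
      omega
  -- the block letter
  set dlet := expandPerm θ ℓ K' Q e with hdlet
  have hblock : ∀ t' : ℕ, t' < ℓ ^ (k + p) → w ((t₀ : ℤ) + t') = expandPerm θ ℓ (k + p) t' dlet := by
    intro t' ht'
    have h5 := hv' (t₀ + t') (by omega)
    have h6 : (0 : ℤ) + ((t₀ + t' : ℕ) : ℤ) = (t₀ : ℤ) + (t' : ℤ) := by push_cast; ring
    rw [h6] at h5
    rw [h5, show J + (t₀ + t') = t' + ℓ ^ (k + p) * Q by omega, expand_mul ht' K' Q,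
      Equiv.Perm.mul_apply]
  obtain ⟨qc, hqc, hqcv⟩ := hp dlet c
  refine ⟨t₀ + j + ℓ ^ k * qc, fun t ht => ?_⟩
  have hjt : j + t < ℓ ^ k := by omega
  have hsmall : (j + t) + ℓ ^ k * qc < ℓ ^ (k + p) := by
    have h7 : ℓ ^ k * (qc + 1) ≤ ℓ ^ k * ℓ ^ p := Nat.mul_le_mul_left _ (by omega)
    have h8 : ℓ ^ k * (qc + 1) = ℓ ^ k * qc + ℓ ^ k := by ring
    have h9 : ℓ ^ (k + p) = ℓ ^ k * ℓ ^ p := pow_add ℓ k p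
    omega
  have h10 := hblock ((j + t) + ℓ ^ k * qc) hsmall
  rw [hv t ht, ← hqcv, ← Equiv.Perm.mul_apply, ← expand_mul hjt p qc]
  rw [show ((t₀ + j + ℓ ^ k * qc : ℕ) : ℤ) + (t : ℤ) = (t₀ : ℤ) + (((j + t) + ℓ ^ k * qc : ℕ) : ℤ)
    by push_cast; ring, h10]

lemma periodic_mul {w : ℤ → A} {P : ℕ} (hper : ∀ k : ℤ, w (k + P) = w k) :
    ∀ (q : ℤ) (k : ℤ), w (k + (P : ℤ) * q) = w k := by
  intro q
  induction q using Int.induction_on with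
  | zero => simp
  | succ n ih =>
    intro k
    have h1 : k + (P : ℤ) * ((n : ℤ) + 1) = (k + (P : ℤ) * n) + P := by ring
    rw [h1, hper, ih]
  | pred n ih =>
    intro k
    have h2 := hper (k + (P : ℤ) * (-(n : ℤ) - 1))
    rw [show k + (P : ℤ) * (-(n : ℤ) - 1) + (P : ℤ) = k + (P : ℤ) * (-(n : ℤ)) by ring] at h2
    exact h2.symm.trans (ih k)

lemma finite_of_periodic (hl : 2 ≤ ℓ) (hprim : IsPrimitive θ ℓ) {w : ℤ → A}
    (hw : w ∈ XSet θ ℓ) {P : ℕ} (hP : 0 < P) (hper : ∀ k : ℤ, w (k + P) = w k) :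
    (XSet θ ℓ).Finite := by
  have hmain : ∀ x ∈ XSet θ ℓ, ∃ r : Fin P, x = fun m : ℤ => w ((r : ℕ) + m) := by
    intro x hx
    have hwin := fun N : ℕ => window_in_w hl hprim hx hw (-(N : ℤ)) (2 * N + 1)
    choose I hI using hwin
    have hval : ∀ (N : ℕ) (m : ℤ), m.natAbs ≤ N → x m = w (((I N + N) % P : ℕ) + m) := by
      intro N m hm
      have ht : (m + N).toNat < 2 * N + 1 := by omega
      have h1 := hI N (m + N).toNat ht
      rw [show -(N : ℤ) + ((m + N).toNat : ℤ) = m by omega] at h1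
      rw [h1]
      have e2 := Nat.div_add_mod (I N + N) P
      have h3 := periodic_mul hper ((I N + N) / P : ℕ) ((((I N + N) % P : ℕ) : ℤ) + m)
      rw [show (((I N + N) % P : ℕ) : ℤ) + m + (P : ℤ) * (((I N + N) / P : ℕ) : ℤ)
          = ((I N : ℤ)) + ((m + N).toNat : ℤ) by
        have hc : ((P * ((I N + N) / P) : ℕ) : ℤ) = (P : ℤ) * (((I N + N) / P : ℕ) : ℤ) :=
          Nat.cast_mul _ _
        omega] at h3
      rw [← h3]
    have hfin : ∀ N : ℕ, (I N + N) % P < P := fun N => Nat.mod_lt _ hP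
    obtain ⟨r, hr⟩ := Finite.exists_infinite_fiber
      (fun N : ℕ => (⟨(I N + N) % P, hfin N⟩ : Fin P))
    refine ⟨r, ?_⟩
    funext m
    have hinf : Set.Infinite ((fun N : ℕ => (⟨(I N + N) % P, hfin N⟩ : Fin P)) ⁻¹' {r}) :=
      Set.infinite_coe_iff.1 hr
    obtain ⟨N, hN1, hN2⟩ := hinf.exists_gt m.natAbs
    have h4 := hval N m (by omega)
    have h5 : (I N + N) % P = (r : ℕ) := by
      have := (Set.mem_preimage.1 hN1)
      simpa [Fin.ext_iff] using this
    rw [h4, h5]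
  have hsub : XSet θ ℓ ⊆ Set.range (fun r : Fin P => fun m : ℤ => w ((r : ℕ) + m)) := by
    intro x hx
    obtain ⟨r, hr⟩ := hmain x hx
    exact ⟨r, hr.symm⟩
  exact Set.Finite.subset (Set.finite_range _) hsub

lemma recog1 (hl : 2 ≤ ℓ) (h0 : θ 0 = 1) (h1 : θ (ℓ - 1) = 1) (hprim : IsPrimitive θ ℓ)
    (hinf : ¬ (XSet θ ℓ).Finite) [Finite A] {r : ℕ} (hr : 0 < r) (hrl : r < ℓ)
    {z w : ℤ → A} (hw : w ∈ XSet θ ℓ)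
    (heq : substSeq θ ℓ z = shiftSeq (r : ℤ) (substSeq θ ℓ w)) : False := by
  have hL : (0:ℤ) < (ℓ:ℤ) := by exact_mod_cast (by omega : 0 < ℓ)
  have hA : ∀ kk : ℤ, z kk = θ r (w kk) := by
    intro kk
    have h2 := congrFun heq ((ℓ:ℤ) * kk)
    have hL' : (ℓ:ℤ) ≠ 0 := by omega
    rw [substSeq_def, Int.mul_emod_right, Int.mul_ediv_cancel_left kk hL'] at h2
    have h3 : shiftSeq (r : ℤ) (substSeq θ ℓ w) ((ℓ:ℤ) * kk) = substSeq θ ℓ w ((ℓ:ℤ) * kk + r) := rfl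
    obtain ⟨hdiv, hmod⟩ := int_ediv_emod hL
      (show (ℓ:ℤ) * kk + (r : ℤ) = (ℓ:ℤ) * kk + (r:ℤ) by ring) (by positivity)
      (by exact_mod_cast hrl)
    rw [h3, substSeq_def, hdiv, hmod, show ((r:ℤ)).toNat = r by omega] at h2
    simpa [h0] using h2
  have hB : ∀ kk : ℤ, z (kk - 1) = θ (r - 1) (w kk) := by
    intro kk
    have h2 := congrFun heq ((ℓ:ℤ) * kk - 1)
    obtain ⟨hdiv1, hmod1⟩ := int_ediv_emod hL
      (show (ℓ:ℤ) * kk - 1 = (ℓ:ℤ) * (kk - 1) + ((ℓ:ℤ) - 1) by ring) (by omega) (by omega)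
    obtain ⟨hdiv2, hmod2⟩ := int_ediv_emod hL
      (show (ℓ:ℤ) * kk - 1 + (r : ℤ) = (ℓ:ℤ) * kk + ((r:ℤ) - 1) by ring) (by omega)
      (by exact_mod_cast (by omega : (r:ℤ) - 1 < (ℓ:ℤ)))
    have h3 : shiftSeq (r : ℤ) (substSeq θ ℓ w) ((ℓ:ℤ) * kk - 1)
        = substSeq θ ℓ w ((ℓ:ℤ) * kk - 1 + r) := rfl
    rw [substSeq_def, hdiv1, hmod1, h3, substSeq_def, hdiv2, hmod2,
      show (((ℓ:ℤ)) - 1).toNat = ℓ - 1 by omega, show (((r:ℤ)) - 1).toNat = r - 1 by omega,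
      h1] at h2
    simpa using h2
  have hstep : ∀ kk : ℤ, w kk = ((θ (r - 1))⁻¹ * θ r) (w (kk - 1)) := by
    intro kk
    have h4 : θ r (w (kk - 1)) = θ (r - 1) (w kk) := by
      rw [← hA (kk - 1), hB kk]
    have h5 : ((θ (r - 1))⁻¹) (θ (r - 1) (w kk)) = w kk := by simp
    rw [← h4] at h5
    rw [Equiv.Perm.mul_apply]
    exact h5.symm
  set ρ := (θ (r - 1))⁻¹ * θ r with hρ
  have hiter : ∀ (t : ℕ) (kk : ℤ), w (kk + t) = (ρ ^ t) (w kk) := by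
    intro t
    induction t with
    | zero => simp
    | succ t ih =>
      intro kk
      have h6 := hstep (kk + t + 1)
      rw [show kk + (t:ℤ) + 1 - 1 = kk + t by ring] at h6
      rw [show kk + ((t:ℕ) + 1 : ℕ) = kk + (t:ℤ) + 1 by push_cast; ring, h6, ih kk,
        ← Equiv.Perm.mul_apply, ← pow_succ']
  have hP : 0 < orderOf ρ := orderOf_pos ρ
  have hper : ∀ kk : ℤ, w (kk + (orderOf ρ : ℕ)) = w kk := by
    intro kk
    rw [hiter (orderOf ρ) kk, pow_orderOf_eq_one]
    rfl
  exact hinf (finite_of_periodic hl hprim hw hP hper)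

lemma recogk (hl : 2 ≤ ℓ) (h0 : θ 0 = 1) (h1 : θ (ℓ - 1) = 1) (hprim : IsPrimitive θ ℓ)
    (hinf : ¬ (XSet θ ℓ).Finite) [Finite A] (k : ℕ) :
    ∀ {r : ℕ}, 0 < r → r < ℓ ^ k → ∀ {z w : ℤ → A}, z ∈ XSet θ ℓ → w ∈ XSet θ ℓ →
      (substSeq θ ℓ)^[k] z = shiftSeq (r : ℤ) ((substSeq θ ℓ)^[k] w) → False := by
  induction k with
  | zero =>
    intro r hr hrk
    simp at hrk
    omega
  | succ k ih =>
    intro r hr hrk z w hz hw heq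
    rw [Function.iterate_succ_apply', Function.iterate_succ_apply'] at heq
    obtain ⟨r', q, hr'l, hqe⟩ : ∃ r' q : ℕ, r' < ℓ ∧ r = ℓ * q + r' :=
      ⟨r % ℓ, r / ℓ, Nat.mod_lt _ (by omega), (Nat.div_add_mod r ℓ).symm⟩
    have hq : q < ℓ ^ k := by
      have h2 : ℓ ^ (k + 1) = ℓ * ℓ ^ k := by rw [pow_succ, mul_comm]
      by_contra hc
      push_neg at hc
      have h3 : ℓ * ℓ ^ k ≤ ℓ * q := Nat.mul_le_mul_left _ hc
      omega
    have hsplit : shiftSeq (r : ℤ) (substSeq θ ℓ ((substSeq θ ℓ)^[k] w))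
        = shiftSeq (r' : ℤ) (substSeq θ ℓ (shiftSeq (q : ℤ) ((substSeq θ ℓ)^[k] w))) := by
      rw [subst_shift (by omega), shiftSeq_add]
      congr 1
      push_cast [hqe]
      ring
    rw [hsplit] at heq
    rcases Nat.eq_zero_or_pos r' with hr'0 | hr'0
    · subst hr'0
      have hq0 : 0 < q := by
        rcases Nat.eq_zero_or_pos q with hq' | hq'
        · subst hq'; simp at hqe; omega
        · exact hq' 
      have heq2 : (substSeq θ ℓ)^[k] z = shiftSeq (q : ℤ) ((substSeq θ ℓ)^[k] w) := by
        apply subst_inj (by omega : 0 < ℓ) h0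
        rw [heq]
        funext j
        show substSeq θ ℓ (shiftSeq (q:ℤ) ((substSeq θ ℓ)^[k] w)) (j + ((0:ℕ):ℤ)) = _
        norm_num
      exact ih hq0 hq hz hw heq2
    · exact recog1 hl h0 h1 hprim hinf hr'0 hr'l
        (shiftSeq_mem _ (subst_iter_mem (by omega) hw k)) heq

end Aux6

section Aux7

variable {θ : ℕ → Equiv.Perm A} {ℓ : ℕ}

lemma ultra_fiber {α β : Type*} [Finite β] (U : Ultrafilter α) (φ : α → β) :
    ∃ b, φ ⁻¹' {b} ∈ U := by
  by_contra hc
  push_neg at hc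
  have h2 : ∀ b, (φ ⁻¹' {b})ᶜ ∈ U := fun b => Ultrafilter.compl_mem_iff_notMem.2 (hc b)
  have h3 : (⋂ b, (φ ⁻¹' {b})ᶜ) ∈ (U : Filter α) := Filter.iInter_mem.2 h2
  obtain ⟨a, ha⟩ := U.nonempty_of_mem h3
  exact (Set.mem_iInter.1 ha (φ a)) rfl

variable [TopologicalSpace A] [DiscreteTopology A]

lemma shiftSeq_natzero (y : ℤ → A) : shiftSeq ((0 : ℕ) : ℤ) y = y := by
  funext j
  show y (j + ((0 : ℕ) : ℤ)) = y j
  norm_num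

lemma shiftX_zero (x : ↥(XSet θ ℓ)) : shiftX θ ℓ 0 x = x := by
  refine Subtype.ext (funext fun j => ?_)
  show x.1 (j + 0) = x.1 j
  rw [add_zero]

lemma shiftX_val (m : ℤ) (x : ↥(XSet θ ℓ)) (j : ℤ) :
    (shiftX θ ℓ m x : ℤ → A) j = (x : ℤ → A) (j + m) := rfl

lemma mem_Sset_xab (hl : 2 ≤ ℓ) (h0 : θ 0 = 1) (h1 : θ (ℓ - 1) = 1) {a b : A}
    (hm : xab θ ℓ a b ∈ XSet θ ℓ) (k : ℕ) :
    (⟨xab θ ℓ a b, hm⟩ : ↥(XSet θ ℓ)) ∈ Sset θ ℓ k 0 :=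
  ⟨xab θ ℓ a b, hm, by rw [subst_iterate_xab hl h0 h1, shiftSeq_natzero]⟩

lemma shift_mem_Sset (hl : 2 ≤ ℓ) (h0 : θ 0 = 1) (h1 : θ (ℓ - 1) = 1) {a b : A}
    (hm : xab θ ℓ a b ∈ XSet θ ℓ) {k r : ℕ} (q : ℤ) (mq : ℤ)
    (hmq : mq = ((ℓ ^ k : ℕ) : ℤ) * q + (r : ℤ)) :
    shiftX θ ℓ mq (⟨xab θ ℓ a b, hm⟩ : ↥(XSet θ ℓ)) ∈ Sset θ ℓ k r := by
  refine ⟨shiftSeq q (xab θ ℓ a b), shiftSeq_mem q hm, ?_⟩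
  show shiftSeq (r : ℤ) ((substSeq θ ℓ)^[k] (shiftSeq q (xab θ ℓ a b))) = shiftSeq mq (xab θ ℓ a b)
  rw [subst_iter_shift (by omega), subst_iterate_xab hl h0 h1, shiftSeq_add, hmq, add_comm]

lemma construct_efib [Finite A] (hl : 2 ≤ ℓ)
    (msel : ℕ → ℤ) (hdiv : ∀ k n : ℕ, k ≤ n → ((ℓ ^ k : ℕ) : ℤ) ∣ msel n) :
    ∃ F ∈ EfibSet θ ℓ, ∀ (x : ↥(XSet θ ℓ)) (j : ℤ) (v : A),
      (∀ᶠ n in Filter.atTop, (shiftX θ ℓ (msel n) x : ℤ → A) j = v) →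
        (F x : ℤ → A) j = v := by
  haveI : CompactSpace ↥(XSet θ ℓ) := compactSpace_X
  have hU0le : ((Ultrafilter.of Filter.atTop : Ultrafilter ℕ) : Filter ℕ) ≤ Filter.atTop :=
    Ultrafilter.of_le _
  set U0 : Ultrafilter ℕ := Ultrafilter.of Filter.atTop with hU0
  have hconv : ∀ x : ↥(XSet θ ℓ),
      ∃ y, Filter.Tendsto (fun n => shiftX θ ℓ (msel n) x) (U0 : Filter ℕ) (nhds y) := by
    intro x
    obtain ⟨y, _, hy⟩ := isCompact_univ.ultrafilter_le_nhds
      (U0.map (fun n => shiftX θ ℓ (msel n) x)) (by simp)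
    exact ⟨y, hy⟩
  choose F hF using hconv
  have hFclos : F ∈ EllisZ θ ℓ := by
    refine mem_closure_of_tendsto (tendsto_pi_nhds.2 hF)
      (Filter.Eventually.of_forall fun n => ⟨msel n, rfl⟩)
  refine ⟨F, ⟨hFclos, ?_⟩, ?_⟩
  · intro n i x hx
    have hev : ∀ᶠ m in (U0 : Filter ℕ), shiftX θ ℓ (msel m) x ∈ Sset θ ℓ n i := by
      have hm : {m : ℕ | n ≤ m} ∈ (U0 : Filter ℕ) := hU0le (Filter.mem_atTop n)
      exact Filter.mem_of_superset hm (fun m hm' => shift_S_mem (by omega) (hdiv n m hm') hx)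
    exact (isClosed_Sset n i).mem_of_tendsto (hF x) hev
  · intro x j v hev
    have hc1 : ∀ᶠ n in (U0 : Filter ℕ),
        (shiftX θ ℓ (msel n) x : ℤ → A) j = (F x : ℤ → A) j :=
      tendsto_shift_iff.1 (hF x) j
    obtain ⟨n, hn1, hn2⟩ := (hc1.and (hU0le hev)).exists
    rw [← hn1, hn2]

lemma classify [Finite A] (hl : 2 ≤ ℓ) (h0 : θ 0 = 1) (h1 : θ (ℓ - 1) = 1)
    (hprim : IsPrimitive θ ℓ) (hinf : ¬ (XSet θ ℓ).Finite)
    (hne : (XSet θ ℓ).Nonempty)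
    {f : ↥(XSet θ ℓ) → ↥(XSet θ ℓ)} (hf : f ∈ EfibSet θ ℓ) :
    (∀ x, f x = x) ∨
    ∃ g' g : Equiv.Perm A, g ∈ GensSet θ ℓ ∧ g * g'⁻¹ ∈ RSet θ ℓ ∧ g' ∈ GensSet θ ℓ ∧
      ((∀ a b (hm : xab θ ℓ a b ∈ XSet θ ℓ),
          ((f ⟨xab θ ℓ a b, hm⟩ : ↥(XSet θ ℓ)) : ℤ → A) = xab θ ℓ (g' b) (g b)) ∨
       (∀ a b (hm : xab θ ℓ a b ∈ XSet θ ℓ),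
          ((f ⟨xab θ ℓ a b, hm⟩ : ↥(XSet θ ℓ)) : ℤ → A) = xab θ ℓ (g' a) (g a))) := by
  classical
  obtain ⟨U, hU⟩ := exists_ultrafilter_of_mem_EllisZ hf.1
  have hUx : ∀ x, Filter.Tendsto (fun n : ℤ => shiftX θ ℓ n x) (U : Filter ℤ) (nhds (f x)) :=
    fun x => (tendsto_pi_nhds.1 hU) x
  -- a point of the fibre over 0
  obtain ⟨y₀, hy₀⟩ := hne
  have hadm₀ : Adm θ ℓ (y₀ (-1)) (y₀ 0) := by
    have := adm_of_mem hy₀ (-1)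
    norm_num at this
    exact this
  have hmem₀ : xab θ ℓ (y₀ (-1)) (y₀ 0) ∈ XSet θ ℓ := xab_mem hl h0 h1 hadm₀
  set x₀ : ↥(XSet θ ℓ) := ⟨xab θ ℓ (y₀ (-1)) (y₀ 0), hmem₀⟩ with hx₀
  -- step 1: U concentrates on multiples of ℓ^k for every k
  have hdvdU : ∀ k : ℕ, {m : ℤ | ((ℓ ^ k : ℕ) : ℤ) ∣ m} ∈ (U : Filter ℤ) := by
    intro k
    have hLpos : (0 : ℤ) < ((ℓ ^ k : ℕ) : ℤ) := by
      have : 0 < ℓ ^ k := by positivity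
      omega
    obtain ⟨r, hr⟩ := ultra_fiber U (fun m : ℤ =>
      (⟨(m % ((ℓ ^ k : ℕ) : ℤ)).toNat, by
        have h2 := Int.emod_nonneg m (by omega : ((ℓ ^ k : ℕ) : ℤ) ≠ 0)
        have h3 := Int.emod_lt_of_pos m hLpos
        omega⟩ : Fin (ℓ ^ k)))
    have hsub : (fun m : ℤ => (⟨(m % ((ℓ ^ k : ℕ) : ℤ)).toNat, by
        have h2 := Int.emod_nonneg m (by omega : ((ℓ ^ k : ℕ) : ℤ) ≠ 0)
        have h3 := Int.emod_lt_of_pos m hLpos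
        omega⟩ : Fin (ℓ ^ k))) ⁻¹' {r} ⊆
        {m : ℤ | shiftX θ ℓ m x₀ ∈ Sset θ ℓ k (r : ℕ)} := by
      intro m hmr
      have hval : (m % ((ℓ ^ k : ℕ) : ℤ)).toNat = (r : ℕ) := by
        simpa [Fin.ext_iff] using hmr
      have h2 := Int.emod_nonneg m (by omega : ((ℓ ^ k : ℕ) : ℤ) ≠ 0)
      have e1 := Int.mul_ediv_add_emod m ((ℓ ^ k : ℕ) : ℤ)
      exact shift_mem_Sset hl h0 h1 hmem₀ (m / ((ℓ ^ k : ℕ) : ℤ)) m (by omega)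
    have hfx₀ : f x₀ ∈ Sset θ ℓ k (r : ℕ) := by
      refine (isClosed_Sset k (r : ℕ)).mem_of_tendsto (hUx x₀) ?_
      exact Filter.mem_of_superset hr hsub
    have hfx₀' : f x₀ ∈ Sset θ ℓ k 0 := by
      have := hf.2 k 0 x₀ (mem_Sset_xab hl h0 h1 hmem₀ k)
      exact this
    have hr0 : (r : ℕ) = 0 := by
      by_contra hc
      obtain ⟨z, hz, hzv⟩ := hfx₀'
      obtain ⟨z', hz', hzv'⟩ := hfx₀
      rw [shiftSeq_natzero] at hzv
      exact recogk hl h0 h1 hprim hinf k (by omega) r.isLt hz hz' (by rw [hzv, ← hzv'])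
    refine Filter.mem_of_superset hr ?_
    intro m hmr
    have hval : (m % ((ℓ ^ k : ℕ) : ℤ)).toNat = (r : ℕ) := by
      simpa [Fin.ext_iff] using hmr
    have h2 := Int.emod_nonneg m (by omega : ((ℓ ^ k : ℕ) : ℤ) ≠ 0)
    have h4 : m % ((ℓ ^ k : ℕ) : ℤ) = 0 := by omega
    exact Int.dvd_of_emod_eq_zero h4
  -- step 2: sign trichotomy
  rcases Ultrafilter.mem_or_compl_mem U {m : ℤ | 0 < m} with hpos | hnonpos
  · -- positive case
    right
    have hBn : ∀ n : ℕ, {m : ℤ | 0 < m ∧ ((ℓ ^ n : ℕ) : ℤ) ∣ m} ∈ (U : Filter ℤ) :=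
      fun n => Filter.inter_mem hpos (hdvdU n)
    set φp : ℕ → ℤ → Equiv.Perm A × Equiv.Perm A := fun n m =>
      if h : 0 < m ∧ ((ℓ ^ n : ℕ) : ℤ) ∣ m then
        (expandPerm θ ℓ ((m / ((ℓ ^ n : ℕ) : ℤ)).toNat + 1) ((m / ((ℓ ^ n : ℕ) : ℤ)).toNat - 1),
         expandPerm θ ℓ ((m / ((ℓ ^ n : ℕ) : ℤ)).toNat + 1) ((m / ((ℓ ^ n : ℕ) : ℤ)).toNat))
      else (1, 1) with hφp
    have hPn : ∀ n : ℕ, ∃ P : Equiv.Perm A × Equiv.Perm A,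
        (φp n ⁻¹' {P}) ∩ {m : ℤ | 0 < m ∧ ((ℓ ^ n : ℕ) : ℤ) ∣ m} ∈ (U : Filter ℤ) := by
      intro n
      obtain ⟨P, hP⟩ := ultra_fiber U (φp n)
      exact ⟨P, Filter.inter_mem hP (hBn n)⟩
    choose Pn hPn' using hPn
    obtain ⟨gg, hgg⟩ := Finite.exists_infinite_fiber Pn
    have hgginf : Set.Infinite (Pn ⁻¹' {gg}) := Set.infinite_coe_iff.1 hgg
    -- extract properties of the pair from one witness
    have hup : ∀ n : ℕ, Pn n = gg → ∃ u : ℕ, 1 ≤ u ∧ u < ℓ ^ (u + 1) ∧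
        gg.1 = expandPerm θ ℓ (u + 1) (u - 1) ∧ gg.2 = expandPerm θ ℓ (u + 1) u ∧
        (∀ a b (hm : xab θ ℓ a b ∈ XSet θ ℓ) (j : ℤ),
          -((ℓ ^ n : ℕ) : ℤ) ≤ j → j < ((ℓ ^ n : ℕ) : ℤ) →
          {m : ℤ | (shiftX θ ℓ m ⟨xab θ ℓ a b, hm⟩ : ℤ → A) j
            = xab θ ℓ (gg.1 b) (gg.2 b) j} ∈ (U : Filter ℤ)) := by
      intro n hn
      have hLpos : (0 : ℤ) < ((ℓ ^ n : ℕ) : ℤ) := by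
        have : 0 < ℓ ^ n := by positivity
        omega
      obtain ⟨m₁, hm₁⟩ := U.nonempty_of_mem (hPn' n)
      obtain ⟨hm₁p, hm₁pos, hm₁dvd⟩ : φp n m₁ = Pn n ∧ 0 < m₁ ∧ ((ℓ ^ n : ℕ) : ℤ) ∣ m₁ :=
        ⟨hm₁.1, hm₁.2.1, hm₁.2.2⟩
      obtain ⟨q₁, rfl⟩ := hm₁dvd
      have hq₁pos : 0 < q₁ := by
        by_contra hc
        push_neg at hc
        have : ((ℓ ^ n : ℕ) : ℤ) * q₁ ≤ 0 := mul_nonpos_of_nonneg_of_nonpos (by omega) hc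
        omega
      have hdivval : ((ℓ ^ n : ℕ) : ℤ) * q₁ / ((ℓ ^ n : ℕ) : ℤ) = q₁ :=
        Int.mul_ediv_cancel_left q₁ (by omega)
      set u := q₁.toNat with hu
      have hu1 : 1 ≤ u := by omega
      have huu : u < ℓ ^ (u + 1) :=
        lt_of_lt_of_le (pow_grow hl u) (Nat.pow_le_pow_right (by omega) (by omega))
      have hφval : φp n (((ℓ ^ n : ℕ) : ℤ) * q₁)
          = (expandPerm θ ℓ (u + 1) (u - 1), expandPerm θ ℓ (u + 1) u) := by
        rw [hφp]
        simp only []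
        rw [dif_pos ⟨hm₁pos, Dvd.intro q₁ rfl⟩, hdivval]
      have hggval : gg = (expandPerm θ ℓ (u + 1) (u - 1), expandPerm θ ℓ (u + 1) u) := by
        rw [← hn, ← hm₁p, hφval]
      refine ⟨u, hu1, huu, by rw [hggval], by rw [hggval], ?_⟩
      intro a b hm j hj1 hj2
      refine Filter.mem_of_superset (hPn' n) ?_
      rintro m ⟨hmP, hmpos, hmdvd⟩
      obtain ⟨q, rfl⟩ := hmdvd
      have hqpos : 0 < q := by
        by_contra hc
        push_neg at hc
        have : ((ℓ ^ n : ℕ) : ℤ) * q ≤ 0 := mul_nonpos_of_nonneg_of_nonpos (by omega) hc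
        omega
      set uq := q.toNat with huq
      have huq1 : 1 ≤ uq := by omega
      have huqq : uq < ℓ ^ (uq + 1) :=
        lt_of_lt_of_le (pow_grow hl uq) (Nat.pow_le_pow_right (by omega) (by omega))
      have hdivval2 : ((ℓ ^ n : ℕ) : ℤ) * q / ((ℓ ^ n : ℕ) : ℤ) = q :=
        Int.mul_ediv_cancel_left q (by omega)
      have hφval2 : φp n (((ℓ ^ n : ℕ) : ℤ) * q)
          = (expandPerm θ ℓ (uq + 1) (uq - 1), expandPerm θ ℓ (uq + 1) uq) := by
        rw [hφp]
        simp only []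
        rw [dif_pos ⟨hmpos, Dvd.intro q rfl⟩, hdivval2]
      have hpair : gg = (expandPerm θ ℓ (uq + 1) (uq - 1), expandPerm θ ℓ (uq + 1) uq) := by
        rw [← hn, ← hmP, hφval2]
      show (shiftX θ ℓ (((ℓ ^ n : ℕ) : ℤ) * q) ⟨xab θ ℓ a b, hm⟩ : ℤ → A) j
        = xab θ ℓ (gg.1 b) (gg.2 b) j
      rw [shiftX_val]
      show xab θ ℓ a b (j + ((ℓ ^ n : ℕ) : ℤ) * q) = xab θ ℓ (gg.1 b) (gg.2 b) j
      have hcast : ((ℓ ^ n : ℕ) : ℤ) * q = ((ℓ ^ n * uq : ℕ) : ℤ) := by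
        rw [Nat.cast_mul]
        have : ((uq : ℕ) : ℤ) = q := by omega
        rw [this]
      rw [hcast, shift_xab_pos hl h0 h1 huq1 huqq n hj1 hj2 a b, hpair]
    -- pick the parameters from some witness n
    obtain ⟨n₀, hn₀⟩ := hgginf.nonempty
    obtain ⟨u₀, hu₀1, hu₀2, hg1, hg2, _⟩ := hup n₀ hn₀
    refine ⟨gg.1, gg.2, ⟨u₀ + 1, u₀, hu₀2, hg2⟩, ?_, ?_, Or.inl ?_⟩
    · rw [hg1, hg2]
      exact ⟨u₀ + 1, u₀, hu₀1, hu₀2, rfl⟩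
    · -- gg.1 ∈ GensSet
      refine ⟨u₀ + 1, u₀ - 1, by omega, hg1⟩
    · intro a b hm
      funext j
      obtain ⟨n, hnfib, hnj⟩ := hgginf.exists_gt j.natAbs
      obtain ⟨u, _, _, _, _, hact⟩ := hup n hnfib
      have hj1 : -((ℓ ^ n : ℕ) : ℤ) ≤ j := by
        have := pow_grow hl n
        omega
      have hj2 : j < ((ℓ ^ n : ℕ) : ℤ) := by
        have := pow_grow hl n
        omega
      have hset := hact a b hm j hj1 hj2
      have hc1 : {m : ℤ | (shiftX θ ℓ m ⟨xab θ ℓ a b, hm⟩ : ℤ → A) j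
          = ((f ⟨xab θ ℓ a b, hm⟩ : ↥(XSet θ ℓ)) : ℤ → A) j} ∈ (U : Filter ℤ) :=
        tendsto_shift_iff.1 (hUx ⟨xab θ ℓ a b, hm⟩) j
      obtain ⟨m, hm1, hm2⟩ := U.nonempty_of_mem (Filter.inter_mem hc1 hset)
      rw [← hm1, hm2]
  · -- nonpositive
    rcases Ultrafilter.mem_or_compl_mem U {m : ℤ | m < 0} with hneg | hnonneg
    · -- negative case
      right
      have hBn : ∀ n : ℕ, {m : ℤ | m < 0 ∧ ((ℓ ^ n : ℕ) : ℤ) ∣ m} ∈ (U : Filter ℤ) :=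
        fun n => Filter.inter_mem hneg (hdvdU n)
      set φm : ℕ → ℤ → Equiv.Perm A × Equiv.Perm A := fun n m =>
        if h : m < 0 ∧ ((ℓ ^ n : ℕ) : ℤ) ∣ m then
          (expandPerm θ ℓ ((-m / ((ℓ ^ n : ℕ) : ℤ)).toNat + 1)
            (ℓ ^ ((-m / ((ℓ ^ n : ℕ) : ℤ)).toNat + 1) - (-m / ((ℓ ^ n : ℕ) : ℤ)).toNat - 1),
           expandPerm θ ℓ ((-m / ((ℓ ^ n : ℕ) : ℤ)).toNat + 1)
            (ℓ ^ ((-m / ((ℓ ^ n : ℕ) : ℤ)).toNat + 1) - (-m / ((ℓ ^ n : ℕ) : ℤ)).toNat))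
        else (1, 1) with hφm
      have hPn : ∀ n : ℕ, ∃ P : Equiv.Perm A × Equiv.Perm A,
          (φm n ⁻¹' {P}) ∩ {m : ℤ | m < 0 ∧ ((ℓ ^ n : ℕ) : ℤ) ∣ m} ∈ (U : Filter ℤ) := by
        intro n
        obtain ⟨P, hP⟩ := ultra_fiber U (φm n)
        exact ⟨P, Filter.inter_mem hP (hBn n)⟩
      choose Pn hPn' using hPn
      obtain ⟨gg, hgg⟩ := Finite.exists_infinite_fiber Pn
      have hgginf : Set.Infinite (Pn ⁻¹' {gg}) := Set.infinite_coe_iff.1 hgg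
      have hup : ∀ n : ℕ, Pn n = gg → ∃ s w : ℕ, 1 ≤ w ∧ w < ℓ ^ s ∧
          gg.1 = expandPerm θ ℓ s (w - 1) ∧ gg.2 = expandPerm θ ℓ s w ∧
          (∀ a b (hm : xab θ ℓ a b ∈ XSet θ ℓ) (j : ℤ),
            -((ℓ ^ n : ℕ) : ℤ) ≤ j → j < ((ℓ ^ n : ℕ) : ℤ) →
            {m : ℤ | (shiftX θ ℓ m ⟨xab θ ℓ a b, hm⟩ : ℤ → A) j
              = xab θ ℓ (gg.1 a) (gg.2 a) j} ∈ (U : Filter ℤ)) := by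
        intro n hn
        have hLpos : (0 : ℤ) < ((ℓ ^ n : ℕ) : ℤ) := by
          have : 0 < ℓ ^ n := by positivity
          omega
        have key : ∀ m : ℤ, m < 0 → ((ℓ ^ n : ℕ) : ℤ) ∣ m → ∃ v : ℕ, 1 ≤ v ∧
            v < ℓ ^ (v + 1) ∧ m = -(((ℓ ^ n * v : ℕ) : ℤ)) ∧
            φm n m = (expandPerm θ ℓ (v + 1) (ℓ ^ (v + 1) - v - 1),
              expandPerm θ ℓ (v + 1) (ℓ ^ (v + 1) - v)) := by
          intro m hmneg hmdvd
          obtain ⟨q, rfl⟩ := hmdvd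
          have hqneg : q < 0 := by
            by_contra hc
            push_neg at hc
            have : 0 ≤ ((ℓ ^ n : ℕ) : ℤ) * q := mul_nonneg (by omega) hc
            omega
          refine ⟨(-q).toNat, by omega, lt_of_lt_of_le (pow_grow hl _)
            (Nat.pow_le_pow_right (by omega) (by omega)), ?_, ?_⟩
          · rw [Nat.cast_mul]
            have : (((-q).toNat : ℕ) : ℤ) = -q := by omega
            rw [this]
            ring
          · have hdv : -(((ℓ ^ n : ℕ) : ℤ) * q) / ((ℓ ^ n : ℕ) : ℤ) = -q := by
              rw [show -(((ℓ ^ n : ℕ) : ℤ) * q) = ((ℓ ^ n : ℕ) : ℤ) * (-q) by ring]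
              exact Int.mul_ediv_cancel_left (-q) (by omega)
            rw [hφm]
            simp only []
            rw [dif_pos ⟨hmneg, Dvd.intro q rfl⟩, hdv]
        obtain ⟨m₁, hm₁⟩ := U.nonempty_of_mem (hPn' n)
        obtain ⟨v₁, hv₁1, hv₁2, hm₁e, hφ₁⟩ := key m₁ hm₁.2.1 hm₁.2.2
        have hpair₁ : gg = (expandPerm θ ℓ (v₁ + 1) (ℓ ^ (v₁ + 1) - v₁ - 1),
            expandPerm θ ℓ (v₁ + 1) (ℓ ^ (v₁ + 1) - v₁)) := by
          rw [← hn, ← hm₁.1, hφ₁]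
        refine ⟨v₁ + 1, ℓ ^ (v₁ + 1) - v₁, by omega, by omega, ?_, ?_, ?_⟩
        · rw [hpair₁]
        · rw [hpair₁]
        · intro a b hm j hj1 hj2
          refine Filter.mem_of_superset (hPn' n) ?_
          rintro m ⟨hmP, hmneg, hmdvd⟩
          obtain ⟨v, hv1, hv2, hme, hφv⟩ := key m hmneg hmdvd
          have hpair : gg = (expandPerm θ ℓ (v + 1) (ℓ ^ (v + 1) - v - 1),
              expandPerm θ ℓ (v + 1) (ℓ ^ (v + 1) - v)) := by
            rw [← hn, ← hmP, hφv]
          show (shiftX θ ℓ m ⟨xab θ ℓ a b, hm⟩ : ℤ → A) j = xab θ ℓ (gg.1 a) (gg.2 a) j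
          rw [shiftX_val]
          show xab θ ℓ a b (j + m) = xab θ ℓ (gg.1 a) (gg.2 a) j
          have hwdef : ℓ ^ (v + 1) - (ℓ ^ (v + 1) - v) = v := by omega
          have hje : j + m = j - ((ℓ ^ n * (ℓ ^ (v + 1) - (ℓ ^ (v + 1) - v)) : ℕ) : ℤ) := by
            rw [hwdef, hme]
            ring
          rw [hje, shift_xab_neg hl h0 h1 (show 1 ≤ ℓ ^ (v+1) - v by omega)
            (show ℓ ^ (v+1) - v < ℓ ^ (v+1) by omega) n hj1 hj2 a b, hpair]
      obtain ⟨n₀, hn₀⟩ := hgginf.nonempty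
      obtain ⟨s₀, w₀, hw₀1, hw₀2, hg1, hg2, _⟩ := hup n₀ hn₀
      refine ⟨gg.1, gg.2, ⟨s₀, w₀, hw₀2, hg2⟩, ?_, ?_, Or.inr ?_⟩
      · rw [hg1, hg2]
        exact ⟨s₀, w₀, hw₀1, hw₀2, rfl⟩
      · exact ⟨s₀, w₀ - 1, by omega, hg1⟩
      · intro a b hm
        funext j
        obtain ⟨n, hnfib, hnj⟩ := hgginf.exists_gt j.natAbs
        obtain ⟨s, w, _, _, _, _, hact⟩ := hup n hnfib
        have hj1 : -((ℓ ^ n : ℕ) : ℤ) ≤ j := by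
          have := pow_grow hl n
          omega
        have hj2 : j < ((ℓ ^ n : ℕ) : ℤ) := by
          have := pow_grow hl n
          omega
        have hset := hact a b hm j hj1 hj2
        have hc1 : {m : ℤ | (shiftX θ ℓ m ⟨xab θ ℓ a b, hm⟩ : ℤ → A) j
            = ((f ⟨xab θ ℓ a b, hm⟩ : ↥(XSet θ ℓ)) : ℤ → A) j} ∈ (U : Filter ℤ) :=
          tendsto_shift_iff.1 (hUx ⟨xab θ ℓ a b, hm⟩) j
        obtain ⟨m, hm1, hm2⟩ := U.nonempty_of_mem (Filter.inter_mem hc1 hset)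
        rw [← hm1, hm2]
    · -- zero case : f = id
      left
      have hzero : {(0 : ℤ)} ∈ (U : Filter ℤ) := by
        have h2 : {m : ℤ | 0 < m}ᶜ ∩ {m : ℤ | m < 0}ᶜ ∈ (U : Filter ℤ) :=
          Filter.inter_mem hnonpos hnonneg
        refine Filter.mem_of_superset h2 ?_
        intro m hm
        have h3 : ¬ (0 < m) := hm.1
        have h4 : ¬ (m < 0) := hm.2
        simp only [Set.mem_singleton_iff]
        omega
      intro x
      refine Subtype.ext (funext fun j => ?_)
      have hc1 : {m : ℤ | (shiftX θ ℓ m x : ℤ → A) j = ((f x : ↥(XSet θ ℓ)) : ℤ → A) j}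
          ∈ (U : Filter ℤ) := tendsto_shift_iff.1 (hUx x) j
      obtain ⟨m, hm1, hm2⟩ := U.nonempty_of_mem (Filter.inter_mem hc1 hzero)
      have hm0 : m = 0 := hm2
      rw [← hm1, hm0, shiftX_zero]

end Aux7

section Aux8

variable {θ : ℕ → Equiv.Perm A} {ℓ : ℕ}

/-- realization of a pair of permutations as adjacent columns of an expansion -/
def Rz (θ : ℕ → Equiv.Perm A) (ℓ : ℕ) (q p : Equiv.Perm A) : Prop :=
  ∃ s u, 1 ≤ u ∧ u < ℓ ^ s ∧ expandPerm θ ℓ s (u - 1) = q ∧ expandPerm θ ℓ s u = p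

lemma inv_Rz [Finite A] {q p : Equiv.Perm A} (hR : p * q⁻¹ ∈ RSet θ ℓ)
    (hp : p ∈ GensSet θ ℓ) : Rz θ ℓ q p := by
  obtain ⟨s, u, h1, h2, hq, hp'⟩ := realize hR hp
  refine ⟨s, u, h1, h2, ?_, hp'⟩
  rw [hq]
  group

lemma Rz_adm {q p : Equiv.Perm A} (hR : Rz θ ℓ q p) (b : A) : Adm θ ℓ (q b) (p b) := by
  obtain ⟨s, u, h1, h2, hq, hp⟩ := hR
  exact ⟨s, b, u - 1, by omega, by rw [hq], by rw [show u - 1 + 1 = u by omega, hp]⟩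

lemma Rz_gens {q p : Equiv.Perm A} (hR : Rz θ ℓ q p) :
    q ∈ GensSet θ ℓ ∧ p ∈ GensSet θ ℓ := by
  obtain ⟨s, u, h1, h2, hq, hp⟩ := hR
  exact ⟨⟨s, u - 1, by omega, hq.symm⟩, ⟨s, u, h2, hp.symm⟩⟩

variable [TopologicalSpace A]

/-- the coordinate of a fibre point relevant for a one-sided limit -/
def fcoord : Bool → ↥(Fib0 θ ℓ) → A
  | true, x => ((x : ↥(XSet θ ℓ)) : ℤ → A) 0
  | false, x => ((x : ↥(XSet θ ℓ)) : ℤ → A) (-1)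

open Classical in
/-- the candidate kernel elements of `E^fib_0` -/
noncomputable def cmap (hl : 2 ≤ ℓ) (h0 : θ 0 = 1) (h1 : θ (ℓ - 1) = 1) (lam : Bool)
    (q p : Equiv.Perm A) (x : ↥(Fib0 θ ℓ)) : ↥(Fib0 θ ℓ) :=
  if h : Adm θ ℓ (q (fcoord lam x)) (p (fcoord lam x)) then
    ⟨⟨xab θ ℓ (q (fcoord lam x)) (p (fcoord lam x)), xab_mem hl h0 h1 h⟩,
      fun n => ⟨xab θ ℓ (q (fcoord lam x)) (p (fcoord lam x)), xab_mem hl h0 h1 h,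
        subst_iterate_xab hl h0 h1 _ _ n⟩⟩
  else x

lemma cmap_val (hl : 2 ≤ ℓ) (h0 : θ 0 = 1) (h1 : θ (ℓ - 1) = 1) {lam : Bool}
    {q p : Equiv.Perm A} (hadm : ∀ b, Adm θ ℓ (q b) (p b)) (x : ↥(Fib0 θ ℓ)) :
    ((cmap hl h0 h1 lam q p x : ↥(XSet θ ℓ)) : ℤ → A)
      = xab θ ℓ (q (fcoord lam x)) (p (fcoord lam x)) := by
  rw [cmap, dif_pos (hadm (fcoord lam x))]

lemma cmap_fcoord (hl : 2 ≤ ℓ) (h0 : θ 0 = 1) (h1 : θ (ℓ - 1) = 1) {lam lam' : Bool}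
    {q p : Equiv.Perm A} (hadm : ∀ b, Adm θ ℓ (q b) (p b)) (x : ↥(Fib0 θ ℓ)) :
    fcoord lam' (cmap hl h0 h1 lam q p x)
      = (if lam' then p else q) (fcoord lam x) := by
  cases lam' with
  | true =>
    show ((cmap hl h0 h1 lam q p x : ↥(XSet θ ℓ)) : ℤ → A) 0 = _
    rw [cmap_val hl h0 h1 hadm, xab_at_zero hl h0]
    rfl
  | false =>
    show ((cmap hl h0 h1 lam q p x : ↥(XSet θ ℓ)) : ℤ → A) (-1) = _
    rw [cmap_val hl h0 h1 hadm, xab_at_negone hl h1]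
    rfl

lemma fib0_pt (hl : 2 ≤ ℓ) (h0 : θ 0 = 1) (h1 : θ (ℓ - 1) = 1) (x : ↥(Fib0 θ ℓ)) :
    ((x : ↥(XSet θ ℓ)) : ℤ → A)
      = xab θ ℓ (((x : ↥(XSet θ ℓ)) : ℤ → A) (-1)) (((x : ↥(XSet θ ℓ)) : ℤ → A) 0) :=
  fib0_char hl h0 h1 x.2

lemma fib0_adm (x : ↥(Fib0 θ ℓ)) :
    Adm θ ℓ (((x : ↥(XSet θ ℓ)) : ℤ → A) (-1)) (((x : ↥(XSet θ ℓ)) : ℤ → A) 0) := by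
  have := adm_of_mem (x : ↥(XSet θ ℓ)).2 (-1)
  norm_num at this
  exact this

lemma cmap_comp (hl : 2 ≤ ℓ) (h0 : θ 0 = 1) (h1 : θ (ℓ - 1) = 1) {lam1 lam2 : Bool}
    {q1 p1 q2 p2 : Equiv.Perm A} (hadm1 : ∀ b, Adm θ ℓ (q1 b) (p1 b))
    (hadm2 : ∀ b, Adm θ ℓ (q2 b) (p2 b)) :
    cmap hl h0 h1 lam1 q1 p1 ∘ cmap hl h0 h1 lam2 q2 p2
      = cmap hl h0 h1 lam2 (q1 * (if lam1 then p2 else q2)) (p1 * (if lam1 then p2 else q2)) := by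
  funext x
  have hadm3 : ∀ b, Adm θ ℓ ((q1 * (if lam1 then p2 else q2)) b)
      ((p1 * (if lam1 then p2 else q2)) b) := by
    intro b
    rw [Equiv.Perm.mul_apply, Equiv.Perm.mul_apply]
    exact hadm1 _
  refine Subtype.ext (Subtype.ext ?_)
  show ((cmap hl h0 h1 lam1 q1 p1 (cmap hl h0 h1 lam2 q2 p2 x) : ↥(XSet θ ℓ)) : ℤ → A) = _
  rw [cmap_val hl h0 h1 hadm1, cmap_val hl h0 h1 hadm3,
    cmap_fcoord hl h0 h1 hadm2, Equiv.Perm.mul_apply, Equiv.Perm.mul_apply]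

lemma cmap_mem_Efib0 [Finite A] [DiscreteTopology A] (hl : 2 ≤ ℓ) (h0 : θ 0 = 1)
    (h1 : θ (ℓ - 1) = 1) {q p : Equiv.Perm A} (hR : Rz θ ℓ q p) (lam : Bool) :
    cmap hl h0 h1 lam q p ∈ Efib0 θ ℓ := by
  obtain ⟨s, u, hu1, hu2, hqE, hpE⟩ := hR
  have hadm : ∀ b, Adm θ ℓ (q b) (p b) := Rz_adm ⟨s, u, hu1, hu2, hqE, hpE⟩
  set msel : ℕ → ℤ := fun n => match lam with
    | true => ((ℓ ^ n * u : ℕ) : ℤ)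
    | false => -((ℓ ^ n * (ℓ ^ s - u) : ℕ) : ℤ) with hmsel
  have hdiv : ∀ k n : ℕ, k ≤ n → ((ℓ ^ k : ℕ) : ℤ) ∣ msel n := by
    intro k n hkn
    have h2 : ℓ ^ k ∣ ℓ ^ n * u := dvd_mul_of_dvd_left (pow_dvd_pow ℓ hkn) u
    have h3 : ℓ ^ k ∣ ℓ ^ n * (ℓ ^ s - u) := dvd_mul_of_dvd_left (pow_dvd_pow ℓ hkn) _
    rw [hmsel]
    cases lam with
    | true => exact Int.natCast_dvd_natCast.2 h2
    | false => exact Dvd.dvd.neg_right (Int.natCast_dvd_natCast.2 h3)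
  obtain ⟨F, hFE, hFact⟩ := construct_efib (θ := θ) hl msel hdiv
  refine ⟨F, hFE, ?_⟩
  intro x
  have hx := fib0_pt hl h0 h1 x
  have hcval : ((cmap hl h0 h1 lam q p x : ↥(XSet θ ℓ)) : ℤ → A)
      = xab θ ℓ (q (fcoord lam x)) (p (fcoord lam x)) := cmap_val hl h0 h1 hadm x
  refine Subtype.ext ?_
  rw [hcval]
  funext j
  refine (hFact (x : ↥(XSet θ ℓ)) j (xab θ ℓ (q (fcoord lam x)) (p (fcoord lam x)) j) ?_).symm
  rw [Filter.eventually_atTop]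
  refine ⟨j.natAbs + 1, fun n hn => ?_⟩
  have hj1 : -((ℓ ^ n : ℕ) : ℤ) ≤ j := by
    have h4 := pow_grow hl n
    omega
  have hj2 : j < ((ℓ ^ n : ℕ) : ℤ) := by
    have h4 := pow_grow hl n
    omega
  rw [shiftX_val]
  show ((x : ↥(XSet θ ℓ)) : ℤ → A) (j + msel n) = _
  rw [hx]
  cases lam with
  | true =>
    have hms : msel n = ((ℓ ^ n * u : ℕ) : ℤ) := by rw [hmsel]
    rw [hms, shift_xab_pos hl h0 h1 hu1 hu2 n hj1 hj2 _ _, hqE, hpE]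
    rfl
  | false =>
    have hms : msel n = -((ℓ ^ n * (ℓ ^ s - u) : ℕ) : ℤ) := by rw [hmsel]
    rw [hms, show j + -((ℓ ^ n * (ℓ ^ s - u) : ℕ) : ℤ) = j - ((ℓ ^ n * (ℓ ^ s - u) : ℕ) : ℤ)
      by ring, shift_xab_neg hl h0 h1 hu1 hu2 n hj1 hj2 _ _, hqE, hpE]
    rfl

lemma efib0_classify [Finite A] [DiscreteTopology A] (hl : 2 ≤ ℓ) (h0 : θ 0 = 1)
    (h1 : θ (ℓ - 1) = 1) (hprim : IsPrimitive θ ℓ) (hinf : ¬ (XSet θ ℓ).Finite)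
    (hne : (XSet θ ℓ).Nonempty) {φ : ↥(Fib0 θ ℓ) → ↥(Fib0 θ ℓ)} (hφ : φ ∈ Efib0 θ ℓ) :
    (∀ x, φ x = x) ∨ ∃ (lam : Bool) (q p : Equiv.Perm A), p * q⁻¹ ∈ RSet θ ℓ ∧
      p ∈ GensSet θ ℓ ∧ q ∈ GensSet θ ℓ ∧ φ = cmap hl h0 h1 lam q p := by
  obtain ⟨f, hfE, hagree⟩ := hφ
  rcases classify hl h0 h1 hprim hinf hne hfE with hid | ⟨g', g, hgG, hR, hg'G, hact⟩
  · left
    intro x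
    refine Subtype.ext ?_
    rw [hagree x, hid]
  · right
    have hRz : Rz θ ℓ g' g := inv_Rz hR hgG
    have hadm : ∀ b, Adm θ ℓ (g' b) (g b) := Rz_adm hRz
    rcases hact with hactp | hactn
    · refine ⟨true, g', g, hR, hgG, hg'G, ?_⟩
      funext x
      have hx := fib0_pt hl h0 h1 x
      have hadm0 := fib0_adm x
      have hxeq : (x : ↥(XSet θ ℓ)) = ⟨xab θ ℓ (((x : ↥(XSet θ ℓ)) : ℤ → A) (-1))
          (((x : ↥(XSet θ ℓ)) : ℤ → A) 0), xab_mem hl h0 h1 hadm0⟩ := Subtype.ext hx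
      have h5 := congrArg f hxeq
      refine Subtype.ext (Subtype.ext ?_)
      calc ((φ x : ↥(XSet θ ℓ)) : ℤ → A) = ((f (x : ↥(XSet θ ℓ))) : ℤ → A) := by
            rw [hagree x]
        _ = xab θ ℓ (g' (((x : ↥(XSet θ ℓ)) : ℤ → A) 0)) (g (((x : ↥(XSet θ ℓ)) : ℤ → A) 0)) := by
            rw [h5]; exact hactp _ _ _
        _ = ((cmap hl h0 h1 true g' g x : ↥(XSet θ ℓ)) : ℤ → A) := by
            rw [cmap_val hl h0 h1 hadm]; rfl
    · refine ⟨false, g', g, hR, hgG, hg'G, ?_⟩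
      funext x
      have hx := fib0_pt hl h0 h1 x
      have hadm0 := fib0_adm x
      have hxeq : (x : ↥(XSet θ ℓ)) = ⟨xab θ ℓ (((x : ↥(XSet θ ℓ)) : ℤ → A) (-1))
          (((x : ↥(XSet θ ℓ)) : ℤ → A) 0), xab_mem hl h0 h1 hadm0⟩ := Subtype.ext hx
      have h5 := congrArg f hxeq
      refine Subtype.ext (Subtype.ext ?_)
      calc ((φ x : ↥(XSet θ ℓ)) : ℤ → A) = ((f (x : ↥(XSet θ ℓ))) : ℤ → A) := by
            rw [hagree x]
        _ = xab θ ℓ (g' (((x : ↥(XSet θ ℓ)) : ℤ → A) (-1)))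
              (g (((x : ↥(XSet θ ℓ)) : ℤ → A) (-1))) := by
            rw [h5]; exact hactn _ _ _
        _ = ((cmap hl h0 h1 false g' g x : ↥(XSet θ ℓ)) : ℤ → A) := by
            rw [cmap_val hl h0 h1 hadm]; rfl

end Aux8

section Aux9

variable {θ : ℕ → Equiv.Perm A} {ℓ : ℕ}

lemma expand_one (hl : 2 ≤ ℓ) {j : ℕ} (hj : j < ℓ) : expandPerm θ ℓ 1 j = θ j := by
  rw [show (1 : ℕ) = 0 + 1 from rfl, expandPerm_succ, expandPerm_zero, mul_one,
    Nat.mod_eq_of_lt hj]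

variable [TopologicalSpace A]

lemma exists_fib0_b (hl : 2 ≤ ℓ) (h0 : θ 0 = 1) (h1 : θ (ℓ - 1) = 1) (b : A) :
    ∃ x : ↥(Fib0 θ ℓ), fcoord true x = b ∧ fcoord false x = θ (ℓ - 2) b := by
  have hadm : Adm θ ℓ (θ (ℓ - 2) b) b := by
    refine ⟨1, b, ℓ - 2, by rw [pow_one]; omega, ?_, ?_⟩
    · rw [expand_one hl (by omega)]
    · rw [show ℓ - 2 + 1 = ℓ - 1 by omega, expand_one hl (by omega), h1]
      rfl
  refine ⟨⟨⟨xab θ ℓ (θ (ℓ - 2) b) b, xab_mem hl h0 h1 hadm⟩,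
    fun n => ⟨_, xab_mem hl h0 h1 hadm, subst_iterate_xab hl h0 h1 _ _ n⟩⟩, ?_, ?_⟩
  · exact xab_at_zero hl h0 (θ (ℓ - 2) b) b
  · exact xab_at_negone hl h1 (θ (ℓ - 2) b) b

lemma exists_fib0_a (hl : 2 ≤ ℓ) (h0 : θ 0 = 1) (h1 : θ (ℓ - 1) = 1) (a : A) :
    ∃ x : ↥(Fib0 θ ℓ), fcoord false x = a ∧ fcoord true x = θ 1 a := by
  have hadm : Adm θ ℓ a (θ 1 a) := by
    refine ⟨1, a, 0, by rw [pow_one]; omega, ?_, ?_⟩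
    · rw [expand_one hl (by omega), h0]
      rfl
    · rw [expand_one hl (by omega)]
  refine ⟨⟨⟨xab θ ℓ a (θ 1 a), xab_mem hl h0 h1 hadm⟩,
    fun n => ⟨_, xab_mem hl h0 h1 hadm, subst_iterate_xab hl h0 h1 _ _ n⟩⟩, ?_, ?_⟩
  · exact xab_at_negone hl h1 a (θ 1 a)
  · exact xab_at_zero hl h0 a (θ 1 a)

lemma finite_of_det [Finite A] {τ : Equiv.Perm A}
    (hτ : ∀ a b : A, Adm θ ℓ a b → b = τ a) : (XSet θ ℓ).Finite := by
  have key : ∀ x ∈ XSet θ ℓ, ∀ y ∈ XSet θ ℓ, x 0 = y 0 → x = y := by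
    intro x hx y hy h00
    funext m
    induction m using Int.induction_on with
    | zero => exact h00
    | succ i ih =>
      have h2 := hτ _ _ (adm_of_mem hx (i : ℤ))
      have h3 := hτ _ _ (adm_of_mem hy (i : ℤ))
      rw [h2, h3, ih]
    | pred i ih =>
      have h2 := hτ _ _ (adm_of_mem hx (-(i : ℤ) - 1))
      have h3 := hτ _ _ (adm_of_mem hy (-(i : ℤ) - 1))
      rw [show -(i : ℤ) - 1 + 1 = -(i : ℤ) by ring] at h2 h3
      have h4 : τ (x (-(i : ℤ) - 1)) = τ (y (-(i : ℤ) - 1)) := by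
        rw [← h2, ← h3, ih]
      have h5 := τ.injective h4
      exact h5
  have hinj : Set.InjOn (fun x : ℤ → A => x 0) (XSet θ ℓ) :=
    fun x hx y hy h => key x hx y hy h
  exact Set.Finite.of_finite_image (Set.Finite.subset Set.finite_univ (Set.subset_univ _)) hinj

lemma cmap_ne_lam [Finite A] (hl : 2 ≤ ℓ) (h0 : θ 0 = 1) (h1 : θ (ℓ - 1) = 1)
    (hinf : ¬ (XSet θ ℓ).Finite) {q p q' p' : Equiv.Perm A}
    (hadm : ∀ b, Adm θ ℓ (q b) (p b)) (hadm' : ∀ b, Adm θ ℓ (q' b) (p' b))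
    (heq : cmap hl h0 h1 true q p = cmap hl h0 h1 false q' p') : False := by
  have hdet : ∀ a b : A, Adm θ ℓ a b → b = (p⁻¹ * p') a := by
    intro a b hab
    have hmem : xab θ ℓ a b ∈ XSet θ ℓ := xab_mem hl h0 h1 hab
    set x : ↥(Fib0 θ ℓ) := ⟨⟨xab θ ℓ a b, hmem⟩,
      fun n => ⟨_, hmem, subst_iterate_xab hl h0 h1 _ _ n⟩⟩ with hxdef
    have hcT : fcoord true x = b := xab_at_zero hl h0 a b
    have hcF : fcoord false x = a := xab_at_negone hl h1 a b
    have h2 := congrFun heq x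
    have h3 : ((cmap hl h0 h1 true q p x : ↥(XSet θ ℓ)) : ℤ → A)
        = ((cmap hl h0 h1 false q' p' x : ↥(XSet θ ℓ)) : ℤ → A) := by rw [h2]
    rw [cmap_val hl h0 h1 hadm, cmap_val hl h0 h1 hadm', hcT, hcF] at h3
    have h4 := congrFun h3 0
    rw [xab_at_zero hl h0, xab_at_zero hl h0] at h4
    rw [Equiv.Perm.mul_apply, ← h4]
    simp
  exact hinf (finite_of_det hdet)

lemma cmap_inj_components [Finite A] (hl : 2 ≤ ℓ) (h0 : θ 0 = 1) (h1 : θ (ℓ - 1) = 1)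
    {lam : Bool} {q p q' p' : Equiv.Perm A}
    (hadm : ∀ b, Adm θ ℓ (q b) (p b)) (hadm' : ∀ b, Adm θ ℓ (q' b) (p' b))
    (heq : cmap hl h0 h1 lam q p = cmap hl h0 h1 lam q' p') : q = q' ∧ p = p' := by
  have hmain : ∀ b : A, q b = q' b ∧ p b = p' b := by
    intro b
    obtain ⟨x, hx1, _⟩ : ∃ x : ↥(Fib0 θ ℓ), fcoord lam x = b ∧ True := by
      cases lam with
      | true =>
        obtain ⟨x, hx1, _⟩ := exists_fib0_b hl h0 h1 b
        exact ⟨x, hx1, trivial⟩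
      | false =>
        obtain ⟨x, hx1, _⟩ := exists_fib0_a hl h0 h1 b
        exact ⟨x, hx1, trivial⟩
    have h2 := congrFun heq x
    have h3 : ((cmap hl h0 h1 lam q p x : ↥(XSet θ ℓ)) : ℤ → A)
        = ((cmap hl h0 h1 lam q' p' x : ↥(XSet θ ℓ)) : ℤ → A) := by rw [h2]
    rw [cmap_val hl h0 h1 hadm, cmap_val hl h0 h1 hadm', hx1] at h3
    constructor
    · have h4 := congrFun h3 (-1)
      rw [xab_at_negone hl h1, xab_at_negone hl h1] at h4
      exact h4
    · have h4 := congrFun h3 0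
      rw [xab_at_zero hl h0, xab_at_zero hl h0] at h4
      exact h4
  exact ⟨Equiv.ext fun b => (hmain b).1, Equiv.ext fun b => (hmain b).2⟩

/-- the `±`-twist permutation -/
def vB (g₀ : Equiv.Perm A) : Bool → Equiv.Perm A := fun lam => if lam then 1 else g₀

/-- the isomorphism from the Rees matrix semigroup onto the kernel -/
noncomputable def ThetaMap (hl : 2 ≤ ℓ) (h0 : θ 0 = 1) (h1 : θ (ℓ - 1) = 1)
    (g₀ : Equiv.Perm A) :
    ↥(RSet θ ℓ) × ↥(Gtheta θ ℓ) × Bool → (↥(Fib0 θ ℓ) → ↥(Fib0 θ ℓ)) := fun P =>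
  cmap hl h0 h1 P.2.2 ((P.1 : Equiv.Perm A)⁻¹ * ((P.2.1 : Equiv.Perm A) * vB g₀ P.2.2))
    ((P.2.1 : Equiv.Perm A) * vB g₀ P.2.2)

lemma mem_gens_of_gtheta [Finite A] {g : Equiv.Perm A} (h : g ∈ Gtheta θ ℓ) :
    g ∈ GensSet θ ℓ := by
  have h2 := gtheta_eq_gens (θ := θ) (ℓ := ℓ)
  rw [← h2]
  exact h

lemma gens_subset_gtheta {g : Equiv.Perm A} (h : g ∈ GensSet θ ℓ) : g ∈ Gtheta θ ℓ :=
  Subgroup.subset_closure h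

lemma vB_mem {g₀ : Equiv.Perm A} (hg₀ : g₀ ∈ RSet θ ℓ) (lam : Bool) :
    vB g₀ lam ∈ Gtheta θ ℓ := by
  cases lam with
  | true => exact one_mem _
  | false => exact rset_subset_G θ ℓ hg₀

lemma theta_pR (hl : 2 ≤ ℓ) (h0 : θ 0 = 1) (h1 : θ (ℓ - 1) = 1) (g₀ : Equiv.Perm A)
    (P : ↥(RSet θ ℓ) × ↥(Gtheta θ ℓ) × Bool) :
    ((P.2.1 : Equiv.Perm A) * vB g₀ P.2.2)
      * (((P.1 : Equiv.Perm A)⁻¹ * ((P.2.1 : Equiv.Perm A) * vB g₀ P.2.2)))⁻¹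
      ∈ RSet θ ℓ := by
  rw [show ((P.2.1 : Equiv.Perm A) * vB g₀ P.2.2)
      * (((P.1 : Equiv.Perm A)⁻¹ * ((P.2.1 : Equiv.Perm A) * vB g₀ P.2.2)))⁻¹
      = (P.1 : Equiv.Perm A) by group]
  exact P.1.2

lemma theta_pG [Finite A] {g₀ : Equiv.Perm A} (hg₀ : g₀ ∈ RSet θ ℓ)
    (P : ↥(RSet θ ℓ) × ↥(Gtheta θ ℓ) × Bool) :
    (P.2.1 : Equiv.Perm A) * vB g₀ P.2.2 ∈ GensSet θ ℓ :=
  mem_gens_of_gtheta (mul_mem P.2.1.2 (vB_mem hg₀ P.2.2))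

lemma theta_Rz [Finite A] (hl : 2 ≤ ℓ) (h0 : θ 0 = 1) (h1 : θ (ℓ - 1) = 1)
    {g₀ : Equiv.Perm A} (hg₀ : g₀ ∈ RSet θ ℓ)
    (P : ↥(RSet θ ℓ) × ↥(Gtheta θ ℓ) × Bool) :
    Rz θ ℓ ((P.1 : Equiv.Perm A)⁻¹ * ((P.2.1 : Equiv.Perm A) * vB g₀ P.2.2))
      ((P.2.1 : Equiv.Perm A) * vB g₀ P.2.2) :=
  inv_Rz (theta_pR hl h0 h1 g₀ P) (theta_pG hg₀ P)

lemma theta_mem_Efib0 [Finite A] [DiscreteTopology A] (hl : 2 ≤ ℓ) (h0 : θ 0 = 1)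
    (h1 : θ (ℓ - 1) = 1) {g₀ : Equiv.Perm A} (hg₀ : g₀ ∈ RSet θ ℓ)
    (P : ↥(RSet θ ℓ) × ↥(Gtheta θ ℓ) × Bool) :
    ThetaMap hl h0 h1 g₀ P ∈ Efib0 θ ℓ :=
  cmap_mem_Efib0 hl h0 h1 (theta_Rz hl h0 h1 hg₀ P) P.2.2

lemma range_criterion [Finite A] (hl : 2 ≤ ℓ) (h0 : θ 0 = 1) (h1 : θ (ℓ - 1) = 1)
    {g₀ : Equiv.Perm A} (hg₀ : g₀ ∈ RSet θ ℓ) (lam : Bool) (q p : Equiv.Perm A)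
    (hR : p * q⁻¹ ∈ RSet θ ℓ) (hpG : p ∈ GensSet θ ℓ) :
    cmap hl h0 h1 lam q p ∈ Set.range (ThetaMap hl h0 h1 g₀) := by
  refine ⟨(⟨p * q⁻¹, hR⟩, ⟨p * (vB g₀ lam)⁻¹,
    mul_mem (gens_subset_gtheta hpG) (inv_mem (vB_mem hg₀ lam))⟩, lam), ?_⟩
  show cmap hl h0 h1 lam ((p * q⁻¹)⁻¹ * ((p * (vB g₀ lam)⁻¹) * vB g₀ lam))
    ((p * (vB g₀ lam)⁻¹) * vB g₀ lam) = cmap hl h0 h1 lam q p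
  rw [show (p * q⁻¹)⁻¹ * ((p * (vB g₀ lam)⁻¹) * vB g₀ lam) = q by group,
    show (p * (vB g₀ lam)⁻¹) * vB g₀ lam = p by group]

end Aux9

section Aux10

variable {θ : ℕ → Equiv.Perm A} {ℓ : ℕ} [TopologicalSpace A]

lemma vB_true (g₀ : Equiv.Perm A) : vB g₀ true = 1 := rfl

lemma vB_false (g₀ : Equiv.Perm A) : vB g₀ false = g₀ := rfl

lemma theta_hom [Finite A] (hl : 2 ≤ ℓ) (h0 : θ 0 = 1) (h1 : θ (ℓ - 1) = 1)
    {g₀ : Equiv.Perm A} (hg₀ : g₀ ∈ RSet θ ℓ)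
    (P Q : ↥(RSet θ ℓ) × ↥(Gtheta θ ℓ) × Bool) :
    ThetaMap hl h0 h1 g₀ (matMul (sandwichA θ ℓ g₀ hg₀) P Q)
      = ThetaMap hl h0 h1 g₀ P ∘ ThetaMap hl h0 h1 g₀ Q := by
  obtain ⟨i, g, lam⟩ := P
  obtain ⟨j, h, mu⟩ := Q
  have hadm1 := Rz_adm (theta_Rz hl h0 h1 hg₀ (i, g, lam))
  have hadm2 := Rz_adm (theta_Rz hl h0 h1 hg₀ (j, h, mu))
  show cmap hl h0 h1 mu
      ((i : Equiv.Perm A)⁻¹ *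
        (((g * sandwichA θ ℓ g₀ hg₀ lam j * h : ↥(Gtheta θ ℓ)) : Equiv.Perm A) * vB g₀ mu))
      (((g * sandwichA θ ℓ g₀ hg₀ lam j * h : ↥(Gtheta θ ℓ)) : Equiv.Perm A) * vB g₀ mu)
    = cmap hl h0 h1 lam ((i : Equiv.Perm A)⁻¹ * ((g : Equiv.Perm A) * vB g₀ lam))
        ((g : Equiv.Perm A) * vB g₀ lam)
      ∘ cmap hl h0 h1 mu ((j : Equiv.Perm A)⁻¹ * ((h : Equiv.Perm A) * vB g₀ mu))
        ((h : Equiv.Perm A) * vB g₀ mu)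
  rw [cmap_comp hl h0 h1 hadm1 hadm2]
  cases lam with
  | true =>
    have hA : ((g * sandwichA θ ℓ g₀ hg₀ true j * h : ↥(Gtheta θ ℓ)) : Equiv.Perm A)
        = (g : Equiv.Perm A) * (h : Equiv.Perm A) := by
      simp [sandwichA]
    rw [hA]
    have e1 : (g : Equiv.Perm A) * (h : Equiv.Perm A) * vB g₀ mu
        = ((g : Equiv.Perm A) * vB g₀ true)
          * (if true then (h : Equiv.Perm A) * vB g₀ mu
             else (j : Equiv.Perm A)⁻¹ * ((h : Equiv.Perm A) * vB g₀ mu)) := by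
      rw [if_pos rfl, vB_true]
      group
    rw [e1]
    congr 1
  | false =>
    have hA : ((g * sandwichA θ ℓ g₀ hg₀ false j * h : ↥(Gtheta θ ℓ)) : Equiv.Perm A)
        = (g : Equiv.Perm A) * (g₀ * (j : Equiv.Perm A)⁻¹) * (h : Equiv.Perm A) := by
      simp [sandwichA]
    rw [hA]
    have e1 : (g : Equiv.Perm A) * (g₀ * (j : Equiv.Perm A)⁻¹) * (h : Equiv.Perm A) * vB g₀ mu
        = ((g : Equiv.Perm A) * vB g₀ false)
          * (if false then (h : Equiv.Perm A) * vB g₀ mu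
             else (j : Equiv.Perm A)⁻¹ * ((h : Equiv.Perm A) * vB g₀ mu)) := by
      rw [if_neg (by simp), vB_false]
      group
    rw [e1]
    congr 1

lemma theta_inj [Finite A] (hl : 2 ≤ ℓ) (h0 : θ 0 = 1) (h1 : θ (ℓ - 1) = 1)
    (hinf : ¬ (XSet θ ℓ).Finite) {g₀ : Equiv.Perm A} (hg₀ : g₀ ∈ RSet θ ℓ) :
    Function.Injective (ThetaMap hl h0 h1 g₀) := by
  intro P Q heq
  obtain ⟨i, g, lam⟩ := P
  obtain ⟨j, h, mu⟩ := Q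
  have hadm1 := Rz_adm (theta_Rz hl h0 h1 hg₀ (i, g, lam))
  have hadm2 := Rz_adm (theta_Rz hl h0 h1 hg₀ (j, h, mu))
  have hlm : lam = mu := by
    cases lam with
    | true =>
      cases mu with
      | true => rfl
      | false => exact absurd (cmap_ne_lam hl h0 h1 hinf hadm1 hadm2 heq) id
    | false =>
      cases mu with
      | true => exact absurd (cmap_ne_lam hl h0 h1 hinf hadm2 hadm1 heq.symm) id
      | false => rfl
  subst hlm
  obtain ⟨hq, hp⟩ := cmap_inj_components hl h0 h1 hadm1 hadm2 heq
  have hg : g = h := by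
    have h2 : (g : Equiv.Perm A) * vB g₀ lam = (h : Equiv.Perm A) * vB g₀ lam := hp
    have h3 : (g : Equiv.Perm A) = (h : Equiv.Perm A) := mul_right_cancel h2
    exact Subtype.ext h3
  have hi : i = j := by
    have h2 : (i : Equiv.Perm A)⁻¹ * ((g : Equiv.Perm A) * vB g₀ lam)
        = (j : Equiv.Perm A)⁻¹ * ((h : Equiv.Perm A) * vB g₀ lam) := hq
    rw [hg] at h2
    have h3 : (i : Equiv.Perm A)⁻¹ = (j : Equiv.Perm A)⁻¹ := mul_right_cancel h2
    exact Subtype.ext (inv_injective h3)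
  rw [hg, hi]

end Aux10

/-- For a primitive aperiodic bijective (simplified) substitution `θ`, the structural
semigroup `M^fib_0(X_θ)` (the kernel of `E^fib_0(X_θ)`) is isomorphic to the matrix
semigroup `M[G_θ; I_θ, {±}; A]` with sandwich matrix `a_{+,g} = 1`, `a_{−,g} = g₀ g⁻¹`. -/
theorem stmt_13 [Fintype A] [TopologicalSpace A] [DiscreteTopology A]
    (θ : ℕ → Equiv.Perm A) (ℓ : ℕ) (hl : 0 < ℓ)
    (hprim : IsPrimitive θ ℓ) (haper : (XSet θ ℓ).Infinite) (hsimp : IsSimplified θ ℓ)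
    (g₀ : Equiv.Perm A) (hg₀ : g₀ ∈ RSet θ ℓ) :
    ∃ M : Set (↥(Fib0 θ ℓ) → ↥(Fib0 θ ℓ)),
      IsKernelIn (Efib0 θ ℓ) M ∧
      ∃ Θ : ↥(RSet θ ℓ) × ↥(Gtheta θ ℓ) × Bool → (↥(Fib0 θ ℓ) → ↥(Fib0 θ ℓ)),
        Function.Injective Θ ∧ Set.range Θ = M ∧
        ∀ p q, Θ (matMul (sandwichA θ ℓ g₀ hg₀) p q) = Θ p ∘ Θ q := by
  classical
  obtain ⟨h0, h1, hall⟩ := hsimp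
  have hinf : ¬ (XSet θ ℓ).Finite := haper
  have hne : (XSet θ ℓ).Nonempty := haper.nonempty
  have hl2 : 2 ≤ ℓ := by
    by_contra hc
    push_neg at hc
    have hsub : (XSet θ ℓ).Subsingleton := by
      intro x hx y hy
      funext m
      obtain ⟨i, hi, hv⟩ := hall (x m) (y m)
      have hi0 : i = 0 := by omega
      rw [hi0, h0] at hv
      simpa using hv
    exact haper hsub.finite
  set Θ := ThetaMap hl2 h0 h1 g₀ with hΘdef
  have hadmP : ∀ P : ↥(RSet θ ℓ) × ↥(Gtheta θ ℓ) × Bool, ∀ b,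
      Adm θ ℓ (((P.1 : Equiv.Perm A)⁻¹ * ((P.2.1 : Equiv.Perm A) * vB g₀ P.2.2)) b)
        (((P.2.1 : Equiv.Perm A) * vB g₀ P.2.2) b) :=
    fun P => Rz_adm (theta_Rz hl2 h0 h1 hg₀ P)
  have hθcm : ∀ P : ↥(RSet θ ℓ) × ↥(Gtheta θ ℓ) × Bool,
      Θ P = cmap hl2 h0 h1 P.2.2
        ((P.1 : Equiv.Perm A)⁻¹ * ((P.2.1 : Equiv.Perm A) * vB g₀ P.2.2))
        ((P.2.1 : Equiv.Perm A) * vB g₀ P.2.2) := fun _ => rfl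
  have hθqG : ∀ P : ↥(RSet θ ℓ) × ↥(Gtheta θ ℓ) × Bool,
      ((P.1 : Equiv.Perm A)⁻¹ * ((P.2.1 : Equiv.Perm A) * vB g₀ P.2.2)) ∈ GensSet θ ℓ :=
    fun P => (Rz_gens (theta_Rz hl2 h0 h1 hg₀ P)).1
  have hθpG : ∀ P : ↥(RSet θ ℓ) × ↥(Gtheta θ ℓ) × Bool,
      ((P.2.1 : Equiv.Perm A) * vB g₀ P.2.2) ∈ GensSet θ ℓ := fun P => theta_pG hg₀ P
  have hθR : ∀ P : ↥(RSet θ ℓ) × ↥(Gtheta θ ℓ) × Bool,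
      ((P.2.1 : Equiv.Perm A) * vB g₀ P.2.2)
        * (((P.1 : Equiv.Perm A)⁻¹ * ((P.2.1 : Equiv.Perm A) * vB g₀ P.2.2)))⁻¹
        ∈ RSet θ ℓ := theta_pR hl2 h0 h1 g₀
  have hprod : ∀ (lamf : Bool) (qf pf : Equiv.Perm A), pf * qf⁻¹ ∈ RSet θ ℓ →
      pf ∈ GensSet θ ℓ → qf ∈ GensSet θ ℓ →
      ∀ (lam2 : Bool) (q2 p2 : Equiv.Perm A), p2 * q2⁻¹ ∈ RSet θ ℓ →
      p2 ∈ GensSet θ ℓ → q2 ∈ GensSet θ ℓ →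
      cmap hl2 h0 h1 lamf qf pf ∘ cmap hl2 h0 h1 lam2 q2 p2 ∈ Set.range Θ := by
    intro lamf qf pf hRf hpfG hqfG lam2 q2 p2 hR2 hp2G hq2G
    have hadmf : ∀ b, Adm θ ℓ (qf b) (pf b) := Rz_adm (inv_Rz hRf hpfG)
    have hadm2 : ∀ b, Adm θ ℓ (q2 b) (p2 b) := Rz_adm (inv_Rz hR2 hp2G)
    rw [cmap_comp hl2 h0 h1 hadmf hadm2]
    have hXG : (if lamf then p2 else q2) ∈ GensSet θ ℓ := by
      cases lamf
      · simpa using hq2G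
      · simpa using hp2G
    refine range_criterion hl2 h0 h1 hg₀ lam2 _ _ ?_ (gens_mul hpfG hXG)
    rw [show pf * (if lamf then p2 else q2) * (qf * (if lamf then p2 else q2))⁻¹
      = pf * qf⁻¹ by group]
    exact hRf
  refine ⟨Set.range Θ, ⟨⟨⟨Θ (⟨g₀, hg₀⟩, 1, true), ⟨_, rfl⟩⟩, ?_, ?_⟩, ?_⟩, Θ,
    theta_inj hl2 h0 h1 hinf hg₀, rfl, fun P Q => theta_hom hl2 h0 h1 hg₀ P Q⟩
  · -- range Θ ⊆ Efib0
    rintro φ ⟨P, rfl⟩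
    exact theta_mem_Efib0 hl2 h0 h1 hg₀ P
  · -- ideal property
    rintro f hf φ ⟨P, rfl⟩
    rcases efib0_classify hl2 h0 h1 hprim hinf hne hf with hid |
      ⟨lamf, qf, pf, hRf, hpfG, hqfG, rfl⟩
    · constructor
      · have h2 : f ∘ Θ P = Θ P := funext fun x => hid _
        rw [h2]; exact ⟨P, rfl⟩
      · have h2 : Θ P ∘ f = Θ P := funext fun x => congrArg (Θ P) (hid x)
        rw [h2]; exact ⟨P, rfl⟩
    · constructor
      · rw [hθcm P]
        exact hprod lamf qf pf hRf hpfG hqfG P.2.2 _ _ (hθR P) (hθpG P) (hθqG P)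
      · rw [hθcm P]
        exact hprod P.2.2 _ _ (hθR P) (hθpG P) (hθqG P) lamf qf pf hRf hpfG hqfG
  · -- minimality
    rintro N ⟨⟨ψ, hψN⟩, hNsub, hNideal⟩
    rintro φ ⟨P, rfl⟩
    have hψE := hNsub hψN
    have hΘPE : Θ P ∈ Efib0 θ ℓ := theta_mem_Efib0 hl2 h0 h1 hg₀ P
    rcases efib0_classify hl2 h0 h1 hprim hinf hne hψE with hid |
      ⟨lamψ, qψ, pψ, hRψ, hpψG, hqψG, hψeq⟩
    · have h2 := (hNideal (Θ P) hΘPE ψ hψN).1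
      have h3 : Θ P ∘ ψ = Θ P := funext fun x => congrArg (Θ P) (hid x)
      rw [h3] at h2
      exact h2
    · -- ψ is a kernel-type element
      have hadmψ : ∀ b, Adm θ ℓ (qψ b) (pψ b) := Rz_adm (inv_Rz hRψ hpψG)
      set P2 : ↥(RSet θ ℓ) × ↥(Gtheta θ ℓ) × Bool := (⟨g₀, hg₀⟩, 1, P.2.2) with hP2
      set q2 : Equiv.Perm A :=
        ((P2.1 : Equiv.Perm A)⁻¹ * ((P2.2.1 : Equiv.Perm A) * vB g₀ P2.2.2)) with hq2
      set p2 : Equiv.Perm A := ((P2.2.1 : Equiv.Perm A) * vB g₀ P2.2.2) with hp2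
      have hΘP2E : Θ P2 ∈ Efib0 θ ℓ := theta_mem_Efib0 hl2 h0 h1 hg₀ P2
      have hstep1 : ψ ∘ Θ P2 = cmap hl2 h0 h1 P.2.2 (qψ * (if lamψ then p2 else q2))
          (pψ * (if lamψ then p2 else q2)) := by
        rw [hψeq, hθcm P2, ← hq2, ← hp2, cmap_comp hl2 h0 h1 hadmψ (hadmP P2)]
      set X2 : Equiv.Perm A := (if lamψ then p2 else q2) with hX2
      have hX2G : X2 ∈ GensSet θ ℓ := by
        rw [hX2]
        cases lamψ
        · simpa using (Rz_gens (theta_Rz hl2 h0 h1 hg₀ P2)).1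
        · simpa using theta_pG hg₀ P2
      have hinG : (P.2.1 : Equiv.Perm A) * vB g₀ P.2.2 * (pψ * X2)⁻¹ ∈ Gtheta θ ℓ :=
        mul_mem (gens_subset_gtheta (hθpG P))
          (inv_mem (gens_subset_gtheta (gens_mul hpψG hX2G)))
      set P1 : ↥(RSet θ ℓ) × ↥(Gtheta θ ℓ) × Bool :=
        (P.1, ⟨(P.2.1 : Equiv.Perm A) * vB g₀ P.2.2 * (pψ * X2)⁻¹, hinG⟩, true) with hP1
      have hΘP1E : Θ P1 ∈ Efib0 θ ℓ := theta_mem_Efib0 hl2 h0 h1 hg₀ P1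
      -- the inner composite's admissibility
      have hRin : (pψ * X2) * (qψ * X2)⁻¹ ∈ RSet θ ℓ := by
        rw [show (pψ * X2) * (qψ * X2)⁻¹ = pψ * qψ⁻¹ by group]
        exact hRψ
      have hadmin : ∀ b, Adm θ ℓ ((qψ * X2) b) ((pψ * X2) b) :=
        Rz_adm (inv_Rz hRin (gens_mul hpψG hX2G))
      have hstep2 : Θ P1 ∘ (ψ ∘ Θ P2) = Θ P := by
        rw [hstep1, hθcm P1, cmap_comp hl2 h0 h1 (hadmP P1) hadmin, hθcm P]
        have e0 : (if true then pψ * X2 else qψ * X2) = pψ * X2 := rfl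
        rw [e0]
        have hP1p : ((P1.2.1 : Equiv.Perm A) * vB g₀ P1.2.2)
            = (P.2.1 : Equiv.Perm A) * vB g₀ P.2.2 * (pψ * X2)⁻¹ * vB g₀ true := rfl
        have hP1i : (P1.1 : Equiv.Perm A) = (P.1 : Equiv.Perm A) := rfl
        rw [hP1p, hP1i, vB_true]
        have e1 : (P.2.1 : Equiv.Perm A) * vB g₀ P.2.2 * (pψ * X2)⁻¹ * 1 * (pψ * X2)
            = (P.2.1 : Equiv.Perm A) * vB g₀ P.2.2 := by group
        have e2 : (P.1 : Equiv.Perm A)⁻¹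
              * ((P.2.1 : Equiv.Perm A) * vB g₀ P.2.2 * (pψ * X2)⁻¹ * 1) * (pψ * X2)
            = (P.1 : Equiv.Perm A)⁻¹ * ((P.2.1 : Equiv.Perm A) * vB g₀ P.2.2) := by group
        rw [e1, e2]
      have h2 := (hNideal (Θ P2) hΘP2E ψ hψN).2
      have h3 := (hNideal (Θ P1) hΘP1E _ h2).1
      rw [show Θ P1 ∘ (ψ ∘ Θ P2) = Θ P1 ∘ ψ ∘ Θ P2 from rfl] at hstep2
      rw [hstep2] at h3
      exact h3
end

section
/- Let X be a set, G a subgroup of the symmetric group S_X acting transitively on X, and x ∈ X. Then the quotient N_G(Stab_G(x)) / Stab_G(x) of the normaliser in G of the stabiliser of x by the stabiliser of x is isomorphic to the centraliser C_{S_X}(G) of G in S_X. -/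
/-- Let `G` be a subgroup of the permutation group of `X` acting transitively on `X` and let
`x ∈ X`. Then `N_G(Stab_G(x)) / Stab_G(x)` is isomorphic to the centraliser of `G` in `S_X`. -/
theorem stmt_17 {X : Type*} (G : Subgroup (Equiv.Perm X)) (x : X)
    (htrans : ∀ y z : X, ∃ g ∈ G, g • y = z) :
    haveI : ((MulAction.stabilizer G x).subgroupOf
        (Subgroup.normalizer (MulAction.stabilizer G x : Set G))).Normal :=
      Subgroup.normal_in_normalizer
    Nonempty
      ((Subgroup.normalizer (MulAction.stabilizer G x : Set G) ⧸
          (MulAction.stabilizer G x).subgroupOf (Subgroup.normalizer (MulAction.stabilizer G x : Set G))) ≃*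
        Subgroup.centralizer (G : Set (Equiv.Perm X))) := by
  classical
  choose c hcG hcx using htrans x
  let C : X → G := fun y => ⟨c y, hcG y⟩
  have hC : ∀ y, C y • x = y := fun y => hcx y
  -- key well-definedness lemma
  have key : ∀ n ∈ (Subgroup.normalizer (MulAction.stabilizer G x : Set G)), ∀ g : G,
      (C (g • x) * n) • x = (g * n) • x := by
    intro n hn g
    have h1 : (g⁻¹ * C (g • x)) ∈ MulAction.stabilizer G x := by
      rw [MulAction.mem_stabilizer_iff, mul_smul, hC, inv_smul_smul]
    have h2 : n⁻¹ * (g⁻¹ * C (g • x)) * n ∈ MulAction.stabilizer G x := by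
      rw [Subgroup.mem_normalizer_iff] at hn
      have := (hn (n⁻¹ * (g⁻¹ * C (g • x)) * n)).mpr
      apply this
      group
      simpa using h1
    have h3 : (n⁻¹ * (g⁻¹ * C (g • x)) * n) • x = x := h2
    calc (C (g • x) * n) • x
        = (g * n) • ((n⁻¹ * (g⁻¹ * C (g • x)) * n) • x) := by
          rw [← mul_smul]; congr 1; group
      _ = (g * n) • x := by rw [h3]
  let f : G → X → X := fun n y => (C y * n) • x
  have hfg : ∀ n ∈ (Subgroup.normalizer (MulAction.stabilizer G x : Set G)), ∀ g : G,
      f n (g • x) = (g * n) • x := key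
  have hcomp : ∀ m ∈ (Subgroup.normalizer (MulAction.stabilizer G x : Set G)),
      ∀ n ∈ (Subgroup.normalizer (MulAction.stabilizer G x : Set G)), ∀ y,
      f n (f m y) = f (m * n) y := by
    intro m hm n hn y
    have h1 : f m y = (C y * m) • x := rfl
    show f n ((C y * m) • x) = (C y * (m * n)) • x
    rw [hfg n hn (C y * m), mul_assoc]
  have hone : ∀ y, f 1 y = y := by
    intro y; show (C y * 1) • x = y; rw [mul_one, hC]
  -- the permutation attached to n ∈ N
  let ψ : (Subgroup.normalizer (MulAction.stabilizer G x : Set G)) → Equiv.Perm X := fun n =>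
    { toFun := f (n : G)⁻¹
      invFun := f ((n : G)⁻¹)⁻¹
      left_inv := by
        intro y
        rw [hcomp _ (inv_mem n.2) _ (inv_mem (inv_mem n.2)), inv_inv, inv_mul_cancel, hone]
      right_inv := by
        intro y
        rw [hcomp _ (inv_mem (inv_mem n.2)) _ (inv_mem n.2), inv_inv, mul_inv_cancel, hone] }
  have hψapp : ∀ n y, ψ n y = f (n : G)⁻¹ y := fun _ _ => rfl
  have hψmem : ∀ n, ψ n ∈ Subgroup.centralizer (G : Set (Equiv.Perm X)) := by
    intro n
    rw [Subgroup.mem_centralizer_iff]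
    intro σ hσ
    ext y
    have h1 : σ y = (⟨σ, hσ⟩ * C y : G) • x := by
      rw [mul_smul, hC]; rfl
    show σ (ψ n y) = ψ n (σ y)
    rw [hψapp, hψapp, h1, hfg _ (inv_mem n.2) (⟨σ, hσ⟩ * C y)]
    show σ (((C y) * (n : G)⁻¹) • x) = _
    rw [mul_assoc, mul_smul]
    rfl
  -- the homomorphism
  let φ : (Subgroup.normalizer (MulAction.stabilizer G x : Set G)) →*
      Subgroup.centralizer (G : Set (Equiv.Perm X)) :=
    { toFun := fun n => ⟨ψ n, hψmem n⟩
      map_one' := by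
        ext y
        show ψ 1 y = y
        rw [hψapp]
        simpa using hone y
      map_mul' := by
        intro a b
        ext y
        show ψ (a * b) y = ψ a (ψ b y)
        rw [hψapp, hψapp, hψapp,
          hcomp _ (inv_mem b.2) _ (inv_mem a.2)]
        congr 1 }
  have hsurj : Function.Surjective φ := by
    rintro ⟨σ, hσ⟩
    have hσ' : ∀ g : G, ∀ y, (g : Equiv.Perm X) (σ y) = σ ((g : Equiv.Perm X) y) := by
      intro g y
      have := Subgroup.mem_centralizer_iff.mp hσ (g : Equiv.Perm X) g.2
      have h1 : ((g : Equiv.Perm X) * σ) y = (σ * (g : Equiv.Perm X)) y := by rw [this]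
      simpa using h1
    set n : G := C (σ x) with hn
    have hnx : n • x = σ x := hC (σ x)
    have hfix : ∀ h : G, h ∈ MulAction.stabilizer G x ↔
        (n⁻¹ * h * n) • x = x := by
      intro h
      constructor
      · intro hh
        have hhx : h • x = x := hh
        have : h • (n • x) = n • x := by
          rw [hnx]
          show (h : Equiv.Perm X) (σ x) = σ x
          rw [hσ' h x]
          show σ (h • x) = σ x
          rw [hhx]
        calc (n⁻¹ * h * n) • x = n⁻¹ • (h • (n • x)) := by
              rw [← mul_smul, ← mul_smul, mul_assoc]
          _ = n⁻¹ • (n • x) := by rw [this]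
          _ = x := inv_smul_smul n x
      · intro hh
        have h2 : h • (n • x) = n • x := by
          have := congrArg (fun z => n • z) hh
          simp only [← mul_smul] at this ⊢
          calc (h * n) • x = (n * (n⁻¹ * h * n)) • x := by congr 1; group
            _ = n • ((n⁻¹ * h * n) • x) := by rw [mul_smul]
            _ = n • x := by rw [hh]
        have h3 : h • (σ x) = σ x := by rw [← hnx]; exact h2
        have h4 : σ (h • x) = σ x := by
          show σ ((h : Equiv.Perm X) x) = σ x
          rw [← hσ' h x]
          exact h3
        show h • x = x
        exact σ.injective h4
    have hnN : n ∈ (Subgroup.normalizer (MulAction.stabilizer G x : Set G)) := by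
      rw [Subgroup.mem_normalizer_iff]
      intro h
      rw [hfix (n * h * n⁻¹)]
      have he : n⁻¹ * (n * h * n⁻¹) * n = h := by group
      rw [he]
      exact MulAction.mem_stabilizer_iff
    refine ⟨⟨n⁻¹, inv_mem hnN⟩, ?_⟩
    ext y
    show ψ ⟨n⁻¹, inv_mem hnN⟩ y = σ y
    rw [hψapp]
    show (C y * ((n⁻¹ : G))⁻¹) • x = σ y
    rw [inv_inv, mul_smul, hnx]
    show (C y : Equiv.Perm X) (σ x) = σ y
    rw [hσ' (C y) x]
    show σ (C y • x) = σ y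
    rw [hC]
  have hker : MonoidHom.ker φ =
      (MulAction.stabilizer G x).subgroupOf (Subgroup.normalizer (MulAction.stabilizer G x : Set G)) := by
    ext n
    rw [MonoidHom.mem_ker, Subgroup.mem_subgroupOf]
    constructor
    · intro h
      have h1 : ψ n x = x := by
        have := congrArg (fun u => (u : Subgroup.centralizer (G : Set (Equiv.Perm X)))) h
        have h2 : (φ n : Equiv.Perm X) = 1 := by rw [h]; rfl
        have h3 : ψ n = 1 := h2
        rw [h3]; rfl
      have h4 : ψ n x = (n : G)⁻¹ • x := by
        rw [hψapp]
        have := hfg (n : G)⁻¹ (inv_mem n.2) 1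
        rw [one_smul, one_mul] at this
        exact this
      have h5 : (n : G)⁻¹ • x = x := by rw [← h4, h1]
      have h6 : (n : G)⁻¹ ∈ MulAction.stabilizer G x := h5
      simpa using inv_mem h6
    · intro h
      have hinv : ((n : G))⁻¹ • x = x := by
        have : (n : G)⁻¹ ∈ MulAction.stabilizer G x := inv_mem h
        exact this
      ext y
      show ψ n y = y
      rw [hψapp]
      show (C y * (n : G)⁻¹) • x = y
      rw [mul_smul, hinv, hC]
  exact ⟨(QuotientGroup.quotientMulEquivOfEq hker.symm).trans
    (QuotientGroup.quotientKerEquivOfSurjective φ hsurj)⟩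
end
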